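/- arXiv:2101.10543 — 7 statements merged into one kernel-verified Lean document; each statement's English description precedes it below -/
import Mathlib

section
/- Let n be a positive integer with n ≡ 1 (mod 4) and let d = (3^((n+1)/2) - 1)/2. Then the power function F(x) = x^d on GF(3^n) has (-1)-differential uniformity at most 2; that is, for all a, b ∈ GF(3^n), the number of x ∈ GF(3^n) satisfying (x+a)^d + x^d = b is at most 2. -/
instance : Fact (Nat.Prime 3) := ⟨by norm_num⟩

private lemma gcd_aux (g i j : ℕ) (hij : Nat.gcd i j = 1)
    (hi : g ∣ 3 ^ i - 1) (hj : g ∣ 3 ^ j - 1) : g ∣ 2 := by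
  rcases Nat.eq_zero_or_pos g with rfl | hgpos
  · have h1 : 3 ^ i - 1 = 0 := Nat.eq_zero_of_zero_dvd hi
    have h2 : 3 ^ j - 1 = 0 := Nat.eq_zero_of_zero_dvd hj
    have hi0 : i = 0 := by
      by_contra h
      have : 3 ^ i ≥ 3 ^ 1 := Nat.pow_le_pow_right (by norm_num) (by omega)
      omega
    have hj0 : j = 0 := by
      by_contra h
      have : 3 ^ j ≥ 3 ^ 1 := Nat.pow_le_pow_right (by norm_num) (by omega)
      omega
    simp [hi0, hj0] at hij
  haveI : NeZero g := ⟨hgpos.ne'⟩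
  have cast3 : ∀ k : ℕ, g ∣ 3 ^ k - 1 → (3 : ZMod g) ^ k = 1 := by
    intro k hk
    have h1 : (1 : ℕ) ≤ 3 ^ k := Nat.one_le_pow _ _ (by norm_num)
    have : ((3 ^ k - 1 : ℕ) : ZMod g) = 0 := (ZMod.natCast_eq_zero_iff _ g).mpr hk
    rw [Nat.cast_sub h1] at this
    push_cast at this
    linear_combination this
  have h1 : orderOf (3 : ZMod g) ∣ Nat.gcd i j :=
    Nat.dvd_gcd (orderOf_dvd_of_pow_eq_one (cast3 i hi)) (orderOf_dvd_of_pow_eq_one (cast3 j hj))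
  rw [hij, Nat.dvd_one] at h1
  have h31 : (3 : ZMod g) = 1 := by simpa [h1] using pow_orderOf_eq_one (3 : ZMod g)
  have : ((2 : ℕ) : ZMod g) = 0 := by push_cast; linear_combination h31
  exact (ZMod.natCast_eq_zero_iff 2 g).mp this

private lemma pow_mod4 (m : ℕ) (h : m % 2 = 1) : 3 ^ m % 4 = 3 := by
  obtain ⟨j, rfl⟩ : ∃ j, m = 2 * j + 1 := ⟨m / 2, by omega⟩
  have h9 : 9 ^ j % 4 = 1 := by simpa using Nat.pow_mod 9 j 4
  have h39 : 3 ^ (2 * j + 1) = 3 * 9 ^ j := by rw [pow_succ, pow_mul]; ring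
  rw [h39, Nat.mul_mod, h9]

private theorem main_aux {F : Type*} [Field F] [Fintype F] [CharP F 3]
    (n m d hh : ℕ) (hn : 0 < n)
    (hcard : Fintype.card F = 3 ^ n)
    (hm : 2 * m = n + 1)
    (hd2 : 2 * d + 1 = 3 ^ m)
    (hdodd : d % 2 = 1)
    (hh2 : 2 * hh + 1 = 3 ^ n)
    (hhodd : hh % 2 = 1)
    (a b : F) :
    {x : F | (x + a) ^ d + x ^ d = b}.ncard ≤ 2 := by
  classical
  by_contra hlt
  push_neg at hlt
  obtain ⟨x₁, hs₁, x₂, hs₂, x₃, hs₃, h12, h13, h23⟩ :=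
    (Set.two_lt_ncard (Set.toFinite _)).mp hlt
  simp only [Set.mem_setOf_eq] at hs₁ hs₂ hs₃
  -- numeric basics
  have hm1 : 1 ≤ m := by omega
  have hP3 : 3 ≤ 3 ^ m := by
    calc (3:ℕ) = 3 ^ 1 := (pow_one 3).symm
    _ ≤ 3 ^ m := Nat.pow_le_pow_right (by norm_num) hm1
  have hd1 : 1 ≤ d := by omega
  have hdne : d ≠ 0 := by omega
  -- field basics
  have h3 : (3:F) = 0 := by exact_mod_cast CharP.cast_eq_zero F 3
  have htwo : (2:F) ≠ 0 := by
    intro h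
    have h1 : (1:F) = 0 := by linear_combination h3 - h
    exact one_ne_zero h1
  have hne : (-1:F) ≠ 1 := by
    intro h
    apply htwo
    linear_combination -h
  have hoddF : Odd d := Nat.odd_iff.mpr hdodd
  have hhodF : Odd hh := Nat.odd_iff.mpr hhodd
  have hpow_card : ∀ x : F, x ^ (3:ℕ) ^ n = x := by
    intro x
    rw [← hcard]
    exact FiniteField.pow_card x
  have hunit : ∀ z : F, z ≠ 0 → z ^ (2 * hh) = 1 := by
    intro z hz
    have := FiniteField.pow_card_sub_one_eq_one z hz
    rwa [hcard, show 3 ^ n - 1 = 2 * hh by omega] at this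
  -- injectivity of the d-power map
  have hgnn : Nat.gcd (n+1) n = 1 := by
    have d1 : Nat.gcd (n+1) n ∣ n + 1 := Nat.gcd_dvd_left _ _
    have d2 : Nat.gcd (n+1) n ∣ n := Nat.gcd_dvd_right _ _
    have := Nat.dvd_sub d1 d2
    simpa using this
  have hinj : ∀ x y : F, x ^ d = y ^ d → x = y := by
    have hco : Nat.Coprime (Nat.card Fˣ) d := by
      have hcu : Nat.card Fˣ = 3 ^ n - 1 := by
        rw [Nat.card_units, Nat.card_eq_fintype_card, hcard]
      rw [Nat.Coprime, hcu]
      set g := Nat.gcd (3 ^ n - 1) d with hg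
      have hgd : g ∣ d := Nat.gcd_dvd_right _ _
      have hgq : g ∣ 3 ^ n - 1 := Nat.gcd_dvd_left _ _
      have hgm : g ∣ 3 ^ m - 1 := by
        rw [show 3 ^ m - 1 = 2 * d by omega]
        exact hgd.mul_left 2
      have hmn : Nat.gcd m n = 1 := by
        have d1 : Nat.gcd m n ∣ n + 1 := by
          have : Nat.gcd m n ∣ 2 * m := (Nat.gcd_dvd_left m n).mul_left 2
          rwa [hm] at this
        have d2 : Nat.gcd m n ∣ n := Nat.gcd_dvd_right m n
        have := Nat.dvd_sub d1 d2
        simpa using this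
      have h2 : g ∣ 2 := gcd_aux g m n hmn hgm hgq
      rcases (Nat.dvd_prime Nat.prime_two).mp h2 with h | h
      · exact h
      · exfalso
        have : (2:ℕ) ∣ d := h ▸ hgd
        omega
    intro x y hxy
    rcases eq_or_ne x 0 with rfl | hx
    · have : y ^ d = 0 := by rw [← hxy]; exact zero_pow hdne
      exact ((pow_eq_zero_iff hdne).mp this).symm
    rcases eq_or_ne y 0 with rfl | hy
    · rw [zero_pow hdne] at hxy
      exact absurd ((pow_eq_zero_iff hdne).mp hxy) hx
    have hbij := Nat.Coprime.pow_left_bijective (G := Fˣ) hco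
    have hu : Units.mk0 x hx = Units.mk0 y hy := by
      apply hbij.injective
      ext
      simpa using hxy
    simpa using congrArg Units.val hu
  -- Frobenius-power map S
  set S : F → F := fun z => z ^ (3:ℕ) ^ m with hSdef
  have hSadd : ∀ u w : F, S (u + w) = S u + S w := fun u w => add_pow_char_pow u w 3 m
  have hSmul : ∀ u w : F, S (u * w) = S u * S w := fun u w => mul_pow u w _
  have hoddP : Odd ((3:ℕ) ^ m) := ⟨d, by omega⟩
  have hSneg : ∀ u : F, S (-u) = - S u := fun u => by
    show (-u) ^ (3:ℕ) ^ m = -(u ^ (3:ℕ) ^ m)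
    exact hoddP.neg_pow u
  have hSsub : ∀ u w : F, S (u - w) = S u - S w := by
    intro u w
    rw [sub_eq_add_neg, hSadd, hSneg, ← sub_eq_add_neg]
  have hS0 : S 0 = 0 := by
    show (0:F) ^ (3:ℕ) ^ m = 0
    exact zero_pow (by positivity)
  have hSne : ∀ u : F, u ≠ 0 → S u ≠ 0 := fun u hu => pow_ne_zero _ hu
  have hSS : ∀ x : F, S (S x) = x ^ 3 := by
    intro x
    show (x ^ (3:ℕ) ^ m) ^ (3:ℕ) ^ m = x ^ 3
    rw [← pow_mul,
      show (3:ℕ) ^ m * 3 ^ m = 3 ^ n * 3 by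
        rw [← pow_add, show m + m = n + 1 by omega, pow_succ],
      pow_mul, hpow_card]
  -- the key identity
  have hkey : ∀ x : F, (x ^ d * S (x ^ d)) ^ 2 = x ^ 2 := by
    intro x
    rcases eq_or_ne x 0 with rfl | hx
    · rw [zero_pow hdne, hS0, mul_zero]
    · have e1 : x ^ d * S (x ^ d) = x ^ (d + d * 3 ^ m) := by
        show x ^ d * (x ^ d) ^ (3:ℕ) ^ m = _
        rw [← pow_mul, ← pow_add]
      rw [e1, ← pow_mul]
      have he : (d + d * 3 ^ m) * 2 + 1 = 3 ^ m * 3 ^ m := by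
        rw [← hd2]; ring
      have h2 : x ^ ((d + d * 3 ^ m) * 2) * x = x ^ 2 * x := by
        rw [← pow_succ, he]
        calc x ^ (3 ^ m * 3 ^ m) = (x ^ (3:ℕ) ^ m) ^ (3:ℕ) ^ m := pow_mul x _ _
        _ = x ^ 3 := hSS x
        _ = x ^ 2 * x := by ring
      exact mul_right_cancel₀ hx h2
  -- power-to-hh facts
  have hnorm1 : ∀ w : F, w ≠ 0 → (w ^ (3 ^ m + 1)) ^ hh = 1 := by
    intro w hw
    rw [← pow_mul, show (3 ^ m + 1) * hh = (d + 1) * (2 * hh) by rw [← hd2]; ring,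
      pow_mul]
    exact hunit _ (pow_ne_zero _ hw)
  have hNm1 : ∀ w : F, w ≠ 0 → (w * S w) ^ hh = 1 := by
    intro w hw
    rw [show w * S w = w ^ (3 ^ m + 1) by
      show w * w ^ (3:ℕ) ^ m = _
      rw [← pow_succ']]
    exact hnorm1 w hw
  have hm1F : (-1:F) ^ hh = -1 := by
    rw [hhodF.neg_pow, one_pow]
  -- case a = 0
  rcases eq_or_ne a 0 with rfl | ha
  · apply h12
    apply hinj
    simp only [add_zero] at hs₁ hs₂
    exact mul_left_cancel₀ htwo (by linear_combination hs₁ - hs₂)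
  -- case b = 0
  rcases eq_or_ne b 0 with rfl | hb
  · have hxa : ∀ x : F, (x + a) ^ d + x ^ d = 0 → x = a := by
      intro x hx
      have h1 : (x + a) ^ d = (-x) ^ d := by
        rw [hoddF.neg_pow]
        linear_combination hx
      have h2 := hinj _ _ h1
      linear_combination (-1:F) * h2 + x * h3
    exact h12 ((hxa x₁ hs₁).trans (hxa x₂ hs₂).symm)
  -- main case : a ≠ 0, b ≠ 0
  have hnota : ∀ x : F, (x + a) ^ d + x ^ d = b → x = a → False := by
    intro x hx hxa
    subst hxa
    have h1 : x + x = -x := by linear_combination x * h3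
    rw [h1, hoddF.neg_pow] at hx
    exact hb (by linear_combination -hx)
  have hpm : ∀ x : F, x ^ d * S (x ^ d) = x ∨ x ^ d * S (x ^ d) = -x := by
    intro x
    have h1 : (x ^ d * S (x ^ d) - x) * (x ^ d * S (x ^ d) + x) = 0 := by
      linear_combination hkey x
    rcases mul_eq_zero.mp h1 with h | h
    · exact Or.inl (by linear_combination h)
    · exact Or.inr (by linear_combination h)
  have hclass : ∀ x : F, (x + a) ^ d + x ^ d = b →
      (b * S (x ^ d) + S b * x ^ d = b * S b - a ∨
       b * S (x ^ d) + S b * x ^ d = b * S b + a) ∨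
      (x ^ d * S (x ^ d) = x ∧ (x + a) ^ d * S ((x + a) ^ d) = -(x + a)) ∨
      (x ^ d * S (x ^ d) = -x ∧ (x + a) ^ d * S ((x + a) ^ d) = x + a) := by
    intro x hx
    have hv : (x + a) ^ d = b - x ^ d := by linear_combination hx
    rcases hpm x with h1 | h1 <;> rcases hpm (x + a) with h2 | h2
    · rw [hv, hSsub] at h2
      exact Or.inl (Or.inl (by linear_combination h1 - h2))
    · exact Or.inr (Or.inl ⟨h1, h2⟩)
    · exact Or.inr (Or.inr ⟨h1, h2⟩)
    · rw [hv, hSsub] at h2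
      exact Or.inl (Or.inr (by linear_combination h1 - h2))
  have hKinj : ∀ z : F, b * S z + S b * z = 0 → z = 0 := by
    intro z hz
    by_contra hz0
    have hSb : S b ≠ 0 := hSne b hb
    have hSt : S (z / b) = -(z / b) := by
      show (z / b) ^ (3:ℕ) ^ m = -(z / b)
      rw [div_pow]
      field_simp
      linear_combination hz
    set t : F := z / b with htdef
    have ht0 : t ≠ 0 := div_ne_zero hz0 hb
    have h2d : t ^ (2 * d) = -1 := by
      have e1 : t ^ (2 * d) * t = -1 * t := by
        rw [← pow_succ, show 2 * d + 1 = 3 ^ m from hd2]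
        show S t = -1 * t
        rw [hSt]
        ring
      exact mul_right_cancel₀ ht0 e1
    have e2 : ((t ^ (2 * d)) ^ hh : F) = 1 := by
      rw [← pow_mul, show 2 * d * hh = 2 * hh * d by ring, pow_mul, hunit t ht0, one_pow]
    rw [h2d, hm1F] at e2
    exact hne e2
  have hKzero : ∀ u u' : F, b * S u + S b * u = b * S u' + S b * u' → u = u' := by
    intro u u' h
    have h1 : b * S (u - u') + S b * (u - u') = 0 := by
      rw [hSsub]
      linear_combination h
    have := hKinj _ h1
    linear_combination this
  have hC1 : ∀ x x' : F, (x + a) ^ d + x ^ d = b → (x' + a) ^ d + x' ^ d = b →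
      (b * S (x ^ d) + S b * x ^ d = b * S b - a ∨
       b * S (x ^ d) + S b * x ^ d = b * S b + a) →
      (b * S (x' ^ d) + S b * x' ^ d = b * S b - a ∨
       b * S (x' ^ d) + S b * x' ^ d = b * S b + a) →
      x = x' := by
    have cross : ∀ z z' : F, (z + a) ^ d + z ^ d = b → (z' + a) ^ d + z' ^ d = b →
        b * S (z ^ d) + S b * z ^ d = b * S b - a →
        b * S (z' ^ d) + S b * z' ^ d = b * S b + a → False := by
      intro z z' hz hz' h1 h2
      have hyy : z ^ d + z' ^ d - b = 0 := by
        apply hKinj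
        rw [show z ^ d + z' ^ d - b = (z ^ d) + (z' ^ d - b) by ring, hSadd, hSsub]
        linear_combination h1 + h2 + (b * (S b)) * h3 - b * h3 * S b
      have e1 : z' ^ d = (z + a) ^ d := by
        rw [show (z + a) ^ d = b - z ^ d by linear_combination hz]
        linear_combination hyy
      have e2 : z ^ d = (z' + a) ^ d := by
        rw [show (z' + a) ^ d = b - z' ^ d by linear_combination hz']
        linear_combination hyy
      have q1 := hinj _ _ e1
      have q2 := hinj _ _ e2
      apply ha
      have h2a : (2:F) * a = 0 := by linear_combination -q1 - q2
      linear_combination a * h3 - h2a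
    intro x x' hx hx' hc hc'
    rcases hc with h1 | h1 <;> rcases hc' with h2 | h2
    · exact hinj _ _ (hKzero _ _ (h1.trans h2.symm))
    · exact (cross x x' hx hx' h1 h2).elim
    · exact (cross x' x hx' hx h2 h1).elim
    · exact hinj _ _ (hKzero _ _ (h1.trans h2.symm))
  have hNvalp : ∀ x : F, (x + a) ^ d + x ^ d = b →
      (x ^ d * S (x ^ d) = x ∧ (x + a) ^ d * S ((x + a) ^ d) = -(x + a)) →
      (x ^ d + b) * S (x ^ d + b) = a - b * S b := by
    intro x hx hc
    obtain ⟨h1, h2⟩ := hc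
    have hv : (x + a) ^ d = b - x ^ d := by linear_combination hx
    rw [hv, hSsub] at h2
    rw [hSadd]
    linear_combination -h1 - h2 + (x ^ d * S (x ^ d) + b * S b) * h3
  have hNvalm : ∀ x : F, (x + a) ^ d + x ^ d = b →
      (x ^ d * S (x ^ d) = -x ∧ (x + a) ^ d * S ((x + a) ^ d) = x + a) →
      (x ^ d + b) * S (x ^ d + b) = -a - b * S b := by
    intro x hx hc
    obtain ⟨h1, h2⟩ := hc
    have hv : (x + a) ^ d = b - x ^ d := by linear_combination hx
    rw [hv, hSsub] at h2
    rw [hSadd]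
    linear_combination -h1 - h2 + (x ^ d * S (x ^ d) + b * S b) * h3
  have hdvd21 : Nat.gcd (3 ^ m + 1) (2 * hh) ∣ 2 := by
    apply gcd_aux _ (n + 1) n hgnn
    · refine (Nat.gcd_dvd_left _ _).trans ?_
      have h2m : 3 ^ m * 3 ^ m = 3 ^ (n + 1) := by
        rw [← pow_add, show m + m = n + 1 by omega]
      refine ⟨3 ^ m - 1, ?_⟩
      have hexp : (3 ^ m + 1) * (3 ^ m - 1) + 1 = 3 ^ m * 3 ^ m := by
        obtain ⟨B, hB⟩ : ∃ B, 3 ^ m = B + 1 := ⟨3 ^ m - 1, by omega⟩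
        rw [hB, show B + 1 - 1 = B by omega]
        ring
      omega
    · rw [show (3:ℕ) ^ n - 1 = 2 * hh by omega]
      exact Nat.gcd_dvd_right _ _
  have hNm0 : ∀ u : F, u * S u = 0 → u = 0 := by
    intro u hu
    rcases mul_eq_zero.mp hu with h | h
    · exact h
    · exact (pow_eq_zero_iff (by positivity : (3:ℕ) ^ m ≠ 0)).mp h
  have hC2 : ∀ x x' : F, (x + a) ^ d + x ^ d = b → (x' + a) ^ d + x' ^ d = b →
      (x ^ d + b) * S (x ^ d + b) = (x' ^ d + b) * S (x' ^ d + b) → x = x' := by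
    intro x x' hx hx' hNe
    rcases eq_or_ne (x' ^ d + b) 0 with h0 | h0
    · rw [h0, hS0, mul_zero] at hNe
      have := hNm0 _ hNe
      apply hinj
      linear_combination this - h0
    · have hw0 : x ^ d + b ≠ 0 := by
        intro h
        rw [h, hS0, mul_zero] at hNe
        exact (mul_ne_zero h0 (hSne _ h0)) hNe.symm
      have htP : ((x ^ d + b) / (x' ^ d + b)) ^ (3 ^ m + 1) = 1 := by
        rw [div_pow, pow_succ, pow_succ]
        rw [div_eq_one_iff_eq (mul_ne_zero (pow_ne_zero _ h0) h0)]
        show S (x ^ d + b) * (x ^ d + b) = S (x' ^ d + b) * (x' ^ d + b)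
        linear_combination hNe
      have ht0 : (x ^ d + b) / (x' ^ d + b) ≠ 0 := div_ne_zero hw0 h0
      have hord : orderOf ((x ^ d + b) / (x' ^ d + b)) ∣ 2 :=
        (Nat.dvd_gcd (orderOf_dvd_of_pow_eq_one htP)
          (orderOf_dvd_of_pow_eq_one (hunit _ ht0))).trans hdvd21
      have ht2 : ((x ^ d + b) / (x' ^ d + b)) ^ 2 = 1 := orderOf_dvd_iff_pow_eq_one.mp hord
      have hfac : ((x ^ d + b) / (x' ^ d + b) - 1) * ((x ^ d + b) / (x' ^ d + b) + 1) = 0 := by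
        linear_combination ht2
      rcases mul_eq_zero.mp hfac with hcase | hcase
      · have heq : (x ^ d + b) / (x' ^ d + b) = 1 := by linear_combination hcase
        rw [div_eq_one_iff_eq h0] at heq
        exact hinj _ _ (by linear_combination heq)
      · have hdiv : (x ^ d + b) / (x' ^ d + b) = -1 := by linear_combination hcase
        rw [div_eq_iff h0] at hdiv
        have e1 : x' ^ d = (x + a) ^ d := by
          rw [show (x + a) ^ d = b - x ^ d by linear_combination hx]
          linear_combination hdiv - b * h3
        have e2 : x ^ d = (x' + a) ^ d := by
          rw [show (x' + a) ^ d = b - x' ^ d by linear_combination hx']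
          linear_combination hdiv - b * h3
        have q1 := hinj _ _ e1
        have q2 := hinj _ _ e2
        exfalso
        apply ha
        have h2a : (2:F) * a = 0 := by linear_combination -q1 - q2
        linear_combination a * h3 - h2a
  have hC3 : ∀ x x' : F, (x + a) ^ d + x ^ d = b → (x' + a) ^ d + x' ^ d = b →
      (x ^ d * S (x ^ d) = x ∧ (x + a) ^ d * S ((x + a) ^ d) = -(x + a)) →
      (x' ^ d * S (x' ^ d) = -x' ∧ (x' + a) ^ d * S ((x' + a) ^ d) = x' + a) → False := by
    intro x x' hx hx' hc hc'
    have hs := hNvalp x hx hc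
    have ht := hNvalm x' hx' hc'
    have hSb := hSne b hb
    have hNmb0 : b * S b ≠ 0 := mul_ne_zero hb hSb
    have tail₁ : a = -(b * S b) → False := by
      intro hA
      have ht0 : (x' ^ d + b) * S (x' ^ d + b) = 0 := by rw [ht, hA]; ring
      have hw'0 := hNm0 _ ht0
      have hy' : x' ^ d = -b := by linear_combination hw'0
      have e : x' = -(x' ^ d * S (x' ^ d)) := by linear_combination hc'.1
      rw [hy', hSneg] at e
      have hx'a : x' = a := by rw [hA]; linear_combination e
      exact hnota x' hx' hx'a
    have tail₂ : a = b * S b → False := by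
      intro hA
      have hs0 : (x ^ d + b) * S (x ^ d + b) = 0 := by rw [hs, hA]; ring
      have hw0 := hNm0 _ hs0
      have hy : x ^ d = -b := by linear_combination hw0
      have e : x = x ^ d * S (x ^ d) := hc.1.symm
      rw [hy, hSneg] at e
      have hxa : x = a := by rw [hA]; linear_combination e
      exact hnota x hx hxa
    by_cases hy0 : x ^ d = 0
    · rw [hy0, zero_add] at hs
      exact tail₁ (by linear_combination -hs + (b * S b) * h3)
    by_cases hv0 : (x + a) ^ d = 0
    · have hy2 : x ^ d = b := by linear_combination hx - hv0
      rw [hy2, show b + b = -b by linear_combination b * h3, hSneg] at hs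
      exact tail₁ (by linear_combination -hs + (b * S b) * h3)
    by_cases hy0' : x' ^ d = 0
    · rw [hy0', zero_add] at ht
      exact tail₂ (by linear_combination ht - (b * S b) * h3)
    by_cases hv0' : (x' + a) ^ d = 0
    · have hy2 : x' ^ d = b := by linear_combination hx' - hv0'
      rw [hy2, show b + b = -b by linear_combination b * h3, hSneg] at ht
      exact tail₂ (by linear_combination ht - (b * S b) * h3)
    -- main branch
    set y := x ^ d with hydef
    set v := (x + a) ^ d with hvdef
    set y' := x' ^ d with hy'def
    set v' := (x' + a) ^ d with hv'def
    have hv_eq : v = b - y := by linear_combination hx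
    have hv'_eq : v' = b - y' := by linear_combination hx'
    have hz_ne : y * v ≠ 0 := mul_ne_zero hy0 hv0
    have hz_ne' : y' * v' ≠ 0 := mul_ne_zero hy0' hv0'
    have hchiz : ∀ z0 : F, z0 ≠ 0 → z0 = -(z0 ^ ((3 ^ m + 1) * d)) → z0 ^ hh = -1 := by
      intro z0 hz0 hzeq
      calc z0 ^ hh = (-(z0 ^ ((3 ^ m + 1) * d))) ^ hh := by rw [← hzeq]
      _ = (-1) ^ hh * ((z0 ^ d) ^ (3 ^ m + 1)) ^ hh := by
          rw [neg_pow, show (3 ^ m + 1) * d = d * (3 ^ m + 1) by ring, pow_mul]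
      _ = -1 := by rw [hm1F, hnorm1 _ (pow_ne_zero _ hz0), mul_one]
    have hxx : x * (x + a) = -((y * v) * (S y * S v)) := by
      linear_combination (-(x + a)) * hc.1 + (y * S y) * hc.2
    have hxx' : x' * (x' + a) = -((y' * v') * (S y' * S v')) := by
      linear_combination (x' + a) * hc'.1 + (y' * S y') * hc'.2
    have step2 : ∀ u w : F, ((u * w) * (S u * S w)) ^ d = (u * w) ^ ((3 ^ m + 1) * d) := by
      intro u w
      rw [← hSmul]
      rw [show (u * w) * S (u * w) = (u * w) ^ (3 ^ m + 1) by
        show (u * w) * (u * w) ^ (3:ℕ) ^ m = _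
        rw [← pow_succ']]
      rw [← pow_mul]
    have h1 : y * v = (x * (x + a)) ^ d := (mul_pow x (x + a) d).symm
    rw [hxx, hoddF.neg_pow, step2] at h1
    have hchiy : (y * v) ^ hh = -1 := hchiz _ hz_ne h1
    have h1' : y' * v' = (x' * (x' + a)) ^ d := (mul_pow x' (x' + a) d).symm
    rw [hxx', hoddF.neg_pow, step2] at h1'
    have hchiy' : (y' * v') ^ hh = -1 := hchiz _ hz_ne' h1'
    have hsum : (y + b) * S (y + b) + (y' + b) * S (y' + b) = b * S b := by
      linear_combination hs + ht - (b * S b) * h3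
    have hsig : S (y + b) * (y + b) ^ 3 + S (y' + b) * (y' + b) ^ 3 = S b * b ^ 3 := by
      have e := congrArg S hsum
      rw [hSadd, hSmul, hSmul, hSmul, hSS, hSS, hSS] at e
      exact e
    have E1 : ((y + b) * S (y + b)) * ((y + b) ^ 2 - (y' + b) ^ 2)
        = (b * S b) * (b ^ 2 - (y' + b) ^ 2) := by
      linear_combination hsig - (y' + b) ^ 2 * hsum
    have E2 : ((y' + b) * S (y' + b)) * ((y + b) ^ 2 - (y' + b) ^ 2)
        = -((b * S b) * (b ^ 2 - (y + b) ^ 2)) := by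
      linear_combination (y + b) ^ 2 * hsum - hsig
    have hid' : b ^ 2 - (y' + b) ^ 2 = y' * v' := by
      rw [hv'_eq]
      linear_combination (-(y' * b)) * h3
    have hid : b ^ 2 - (y + b) ^ 2 = y * v := by
      rw [hv_eq]
      linear_combination (-(y * b)) * h3
    rw [hid'] at E1
    rw [hid] at E2
    rcases eq_or_ne ((y + b) ^ 2 - (y' + b) ^ 2) 0 with hD | hD
    · rw [hD, mul_zero] at E1
      exact (mul_ne_zero hNmb0 hz_ne') E1.symm
    · have hw : y + b ≠ 0 := by
        intro h
        rw [h, zero_mul, zero_mul] at E1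
        exact (mul_ne_zero hNmb0 hz_ne') E1.symm
      have hw' : y' + b ≠ 0 := by
        intro h
        rw [h, zero_mul, zero_mul] at E2
        apply mul_ne_zero hNmb0 hz_ne
        linear_combination E2
      have F1 : ((y + b) ^ 2 - (y' + b) ^ 2) ^ hh = -1 := by
        have e : (((y + b) * S (y + b)) * ((y + b) ^ 2 - (y' + b) ^ 2)) ^ hh
            = ((b * S b) * (y' * v')) ^ hh := by rw [E1]
        rw [mul_pow ((y + b) * S (y + b)) _ hh, mul_pow (b * S b) _ hh,
          hNm1 _ hw, hNm1 b hb, one_mul, one_mul, hchiy'] at e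
        exact e
      have e2 : (((y' + b) * S (y' + b)) * ((y + b) ^ 2 - (y' + b) ^ 2)) ^ hh
          = (-((b * S b) * (y * v))) ^ hh := by rw [E2]
      rw [mul_pow ((y' + b) * S (y' + b)) _ hh, hNm1 _ hw', one_mul, F1] at e2
      rw [neg_pow, mul_pow (b * S b) _ hh, hm1F, hNm1 b hb, one_mul, hchiy] at e2
      exact hne (by linear_combination e2)
  rcases hclass x₁ hs₁ with hc1 | hc1 | hc1 <;>
  rcases hclass x₂ hs₂ with hc2 | hc2 | hc2 <;>
  rcases hclass x₃ hs₃ with hc3 | hc3 | hc3 <;>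
    first
      | exact h12 (hC1 x₁ x₂ hs₁ hs₂ hc1 hc2)
      | exact h13 (hC1 x₁ x₃ hs₁ hs₃ hc1 hc3)
      | exact h23 (hC1 x₂ x₃ hs₂ hs₃ hc2 hc3)
      | exact h12 (hC2 x₁ x₂ hs₁ hs₂ ((hNvalp x₁ hs₁ hc1).trans (hNvalp x₂ hs₂ hc2).symm))
      | exact h13 (hC2 x₁ x₃ hs₁ hs₃ ((hNvalp x₁ hs₁ hc1).trans (hNvalp x₃ hs₃ hc3).symm))
      | exact h23 (hC2 x₂ x₃ hs₂ hs₃ ((hNvalp x₂ hs₂ hc2).trans (hNvalp x₃ hs₃ hc3).symm))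
      | exact h12 (hC2 x₁ x₂ hs₁ hs₂ ((hNvalm x₁ hs₁ hc1).trans (hNvalm x₂ hs₂ hc2).symm))
      | exact h13 (hC2 x₁ x₃ hs₁ hs₃ ((hNvalm x₁ hs₁ hc1).trans (hNvalm x₃ hs₃ hc3).symm))
      | exact h23 (hC2 x₂ x₃ hs₂ hs₃ ((hNvalm x₂ hs₂ hc2).trans (hNvalm x₃ hs₃ hc3).symm))
      | exact hC3 x₁ x₂ hs₁ hs₂ hc1 hc2
      | exact hC3 x₂ x₁ hs₂ hs₁ hc2 hc1
      | exact hC3 x₁ x₃ hs₁ hs₃ hc1 hc3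
      | exact hC3 x₃ x₁ hs₃ hs₁ hc3 hc1
      | exact hC3 x₂ x₃ hs₂ hs₃ hc2 hc3
      | exact hC3 x₃ x₂ hs₃ hs₂ hc3 hc2




theorem stmt_0 (n : ℕ) (hn : 0 < n) (hcond : n % 4 = 1)
    (d : ℕ) (hd : d = (3 ^ ((n + 1) / 2) - 1) / 2) :
    ∀ a b : GaloisField 3 n,
      {x : GaloisField 3 n | (x + a) ^ d + x ^ d = b}.ncard ≤ 2 := by
  haveI : Fintype (GaloisField 3 n) := Fintype.ofFinite _
  have hcard : Fintype.card (GaloisField 3 n) = 3 ^ n := by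
    rw [← Nat.card_eq_fintype_card]
    exact GaloisField.card 3 n hn.ne'
  set m : ℕ := (n + 1) / 2 with hmdef
  have hm : 2 * m = n + 1 := by omega
  have hmodd : m % 2 = 1 := by omega
  have h3modd : 3 ^ m % 2 = 1 := by
    have := Nat.pow_mod 3 m 2
    simpa using this
  have h3m4 : 3 ^ m % 4 = 3 := pow_mod4 m hmodd
  have h3nodd : 3 ^ n % 2 = 1 := by
    have := Nat.pow_mod 3 n 2
    simpa using this
  have h3n4 : 3 ^ n % 4 = 3 := pow_mod4 n (by omega)
  have hd2 : 2 * d + 1 = 3 ^ m := by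
    have h1 : (1:ℕ) ≤ 3 ^ m := Nat.one_le_pow _ _ (by norm_num)
    omega
  have hdodd : d % 2 = 1 := by omega
  intro a b
  exact main_aux n m d ((3 ^ n - 1) / 2) hn hcard hm hd2 hdodd (by omega) (by omega) a b
end

section
/- Let n be a positive integer with n ≡ 3 (mod 4) and let d = (3^((n+1)/2) - 1)/2. Then the power function F(x) = x^d on GF(3^n) has (-1)-differential uniformity at most 4; that is, for all a, b ∈ GF(3^n), the number of x ∈ GF(3^n) satisfying (x+a)^d + x^d = b is at most 4. -/
theorem gf_core {F : Type*} [Field F] [Fintype F] [CharP F 3]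
    {m d h : ℕ}
    (e1 : 2 * d + 1 = 3 ^ m)
    (e2 : Even d)
    (e3 : d ≠ 0)
    (e4 : Fintype.card F = 2 * h + 1)
    (e5 : Odd h)
    (e6 : d * (3 ^ m + 1) = 3 * h + 1)
    (e7 : 3 ^ m * 3 ^ m = 3 * (2 * h + 1))
    (a b : F) :
    {x : F | (x + a) ^ d + x ^ d = b}.ncard ≤ 4 := by
  have h3F : (3 : F) = 0 := CharP.cast_eq_zero F 3
  have hone : (1:F) ≠ -1 := by
    intro hc
    have h10 : (1:F) = 0 := by linear_combination h3F - hc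
    exact one_ne_zero h10
  have hneg1ne0 : (-1 : F) ≠ 0 := neg_ne_zero.mpr one_ne_zero
  have hh0 : h ≠ 0 := by rcases e5 with ⟨k, hk⟩; omega
  have hm3 : (3:ℕ)^m ≠ 0 := (Nat.pos_of_ne_zero (by positivity)).ne'
  have hfadd : ∀ y z : F, (y + z)^(3^m) = y^(3^m) + z^(3^m) := fun y z =>
    add_pow_char_pow y z 3 m
  have hfsub : ∀ y z : F, (y - z)^(3^m) = y^(3^m) - z^(3^m) := fun y z =>
    sub_pow_char_pow y z m
  have hodd3m : Odd ((3:ℕ)^m) := Odd.pow ⟨1, by norm_num⟩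
  have hfneg : ∀ y : F, (-y)^(3^m) = -(y^(3^m)) := fun y => hodd3m.neg_pow y
  have hcard1 : ∀ y : F, y^(2*h+1) = y := fun y => by
    rw [← e4]; exact FiniteField.pow_card y
  have hss : ∀ y : F, (y^(3^m))^(3^m) = y^3 := by
    intro y
    rw [← pow_mul, e7, Nat.mul_comm 3 (2*h+1), pow_mul, hcard1]
  have hR1 : ∀ y : F, (y^d)^2 * y = y^(3^m) := by
    intro y
    rw [← pow_mul, ← pow_succ, show d*2+1 = 3^m by omega]
  have hq1 : ∀ y : F, y ≠ 0 → y^(2*h) = 1 := by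
    intro y hy
    have h1 : y^(2*h) * y = y := by rw [← pow_succ]; exact hcard1 y
    exact mul_right_cancel₀ hy (by rw [one_mul]; exact h1)
  have hsq1 : ∀ y : F, y ≠ 0 → y^h * y^h = 1 := by
    intro y hy
    rw [← pow_add, show h + h = 2*h by omega]
    exact hq1 y hy
  have hpm : ∀ y : F, y ≠ 0 → y^h = 1 ∨ y^h = -1 := fun y hy =>
    mul_self_eq_one_iff.mp (hsq1 y hy)
  have hχd : ∀ y : F, y ≠ 0 → (y^d)^h = 1 := by
    intro y hy
    rw [pow_right_comm]
    rcases hpm y hy with h1 | h1 <;> rw [h1]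
    · exact one_pow d
    · exact e2.neg_one_pow
  have hχσ : ∀ y : F, y ≠ 0 → (y^(3^m))^h = y^h := by
    intro y hy
    rw [pow_right_comm]
    rcases hpm y hy with h1 | h1 <;> rw [h1]
    · exact one_pow _
    · exact hodd3m.neg_one_pow
  have hR2 : ∀ y : F, y ≠ 0 → (y^d)^(3^m) * y^d = y^h * y := by
    intro y hy
    rw [← pow_mul, ← pow_add, show d*3^m + d = 3*h+1 by rw [← e6]; ring]
    rw [show 3*h+1 = 2*h + (h+1) by omega, pow_add, hq1 y hy, one_mul, pow_succ]
  have hrecover : ∀ y : F, y ≠ 0 → y^h * ((y^d)^(3^m) * y^d) = y := by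
    intro y hy
    rw [hR2 y hy, ← mul_assoc, hsq1 y hy, one_mul]
  have hLin : ∀ y z : F, y ≠ 0 → y^(3^m) * z + y * z^(3^m) = 0 → z = 0 := by
    intro y z hy heq
    by_contra hz
    set t := z * y⁻¹ with ht
    have hty : z = t * y := by rw [ht, mul_assoc, inv_mul_cancel₀ hy, mul_one]
    have hy3 : y^(3^m) ≠ 0 := pow_ne_zero _ hy
    have heq2 : y^(3^m) * (t*y) + y*(t^(3^m) * y^(3^m)) = 0 := by
      rw [← mul_pow, ← hty]; exact heq
    have h0 : (y^(3^m) * y) * (t + t^(3^m)) = 0 := by linear_combination heq2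
    have htt : t^(3^m) = -t := by
      rcases mul_eq_zero.mp h0 with h5 | h5
      · exact absurd h5 (mul_ne_zero hy3 hy)
      · exact eq_neg_of_add_eq_zero_right h5
    have ht3 : t^3 = t := by
      have h5 := hss t
      rw [htt, hfneg, htt, neg_neg] at h5
      exact h5.symm
    have htne : t ≠ 0 := by
      intro h0'
      exact hz (by rw [hty, h0', zero_mul])
    have ht2 : t*t = 1 := by
      have h5 : t*(t*t - 1) = 0 := by linear_combination ht3
      rcases mul_eq_zero.mp h5 with h6 | h6
      · exact absurd h6 htne
      · linear_combination h6
    rcases mul_self_eq_one_iff.mp ht2 with h5 | h5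
    · rw [h5, one_pow] at htt; exact hone htt
    · rw [h5, hodd3m.neg_one_pow] at htt
      exact hone (by linear_combination -htt)
  -- per-solution facts
  have hfacts : ∀ x : F, (x + a)^d + x^d = b → x ≠ 0 → x + a ≠ 0 →
      x^d ≠ 0 ∧ (x+a)^d ≠ 0 ∧ (x+a)^d = b - x^d ∧
      ((x+a)^d)^(3^m) = b^(3^m) - (x^d)^(3^m) := by
    intro x hx hx0 hxa
    have h1 : x^d ≠ 0 := pow_ne_zero d hx0
    have h2 : (x+a)^d ≠ 0 := pow_ne_zero d hxa
    have h3 : (x+a)^d = b - x^d := by linear_combination hx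
    have h4 : ((x+a)^d)^(3^m) = b^(3^m) - (x^d)^(3^m) := by rw [h3, hfsub]
    exact ⟨h1, h2, h3, h4⟩
  have hpure : ∀ x : F, (x + a)^d + x^d = b → x ≠ 0 → x + a ≠ 0 → x^h = (x+a)^h →
      b^(3^m) * (x^d) + b * (x^d)^(3^m) = b^(3^m)*b - (x+a)^h * a := by
    intro x hx hx0 hxa hed
    obtain ⟨h1, h2, h3, h4⟩ := hfacts x hx hx0 hxa
    have A1 : (x^d)^(3^m) * x^d = (x+a)^h * x := by rw [hR2 x hx0, hed]
    have A2 := hR2 (x+a) hxa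
    rw [h4, h3] at A2
    linear_combination A1 - A2
  have hmix : ∀ x : F, (x + a)^d + x^d = b → x ≠ 0 → x + a ≠ 0 → x^h = -(x+a)^h →
      (x^d + b)^(3^m) * (x^d + b) = -(b^(3^m)*b) - (x+a)^h * a := by
    intro x hx hx0 hxa hed
    obtain ⟨h1, h2, h3, h4⟩ := hfacts x hx hx0 hxa
    have A1 : (x^d)^(3^m) * x^d = -((x+a)^h) * x := by
      rw [hR2 x hx0, hed]
    have A2 := hR2 (x+a) hxa
    rw [h4, h3] at A2
    rw [hfadd]
    linear_combination (-1:F) * A2 - A1 + ((x^d)^(3^m)*(x^d) + b^(3^m)*b) * h3F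
  have hmixC0 : ∀ x : F, (x + a)^d + x^d = b → x ≠ 0 → x + a ≠ 0 → x^h = -(x+a)^h →
      (-(b^(3^m)*b) - (x+a)^h * a = 0) → x = a ∧ a*b^2 = a^(3^m) := by
    intro x hx hx0 hxa hed hC0
    obtain ⟨h1, h2, h3, h4⟩ := hfacts x hx hx0 hxa
    have hCw := hmix x hx hx0 hxa hed
    rw [hC0] at hCw
    have hw0 : x^d + b = 0 := by
      rcases mul_eq_zero.mp hCw with hh | hh
      · exact (pow_eq_zero_iff hm3).mp hh
      · exact hh
    have hub : x^d = -b := by linear_combination hw0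
    have hrec := hrecover x hx0
    rw [hub, hfneg] at hrec
    have hxval : x = x^h * (b^(3^m) * b) := by
      calc x = x^h * (-b^(3^m) * -b) := hrec.symm
      _ = x^h * (b^(3^m) * b) := by ring
    have hδ : (x+a)^h * (x+a)^h = 1 := hsq1 _ hxa
    have hB : b^(3^m)*b = -((x+a)^h * a) := by linear_combination -hC0
    have hxa' : x = a := by
      calc x = x^h * (b^(3^m)*b) := hxval
      _ = (-(x+a)^h) * (-((x+a)^h*a)) := by rw [hed, hB]
      _ = ((x+a)^h * (x+a)^h) * a := by ring
      _ = a := by rw [hδ, one_mul]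
    refine ⟨hxa', ?_⟩
    have hx' : (x+a)^d + x^d = b := hx
    rw [hxa'] at hx'
    have haa : a + a = -a := by linear_combination a * h3F
    rw [haa, e2.neg_pow] at hx'
    have hbval : b = -(a^d) := by linear_combination (-1)*hx' + (a^d) * h3F
    rw [hbval, ← hR1 a]; ring
  have hchain : ∀ x : F, (x + a)^d + x^d = b → x ≠ 0 → x + a ≠ 0 → x^h = -(x+a)^h →
      (-(b^(3^m)*b) - (x+a)^h * a ≠ 0) →
      (x+a)^h * (a*b^2 - a^(3^m))^h = -1 := by
    intro x hx hx0 hxa hed hC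
    obtain ⟨h1, h2, h3, h4⟩ := hfacts x hx hx0 hxa
    have hCw := hmix x hx hx0 hxa hed
    have hwne : x^d + b ≠ 0 := by
      intro h0
      apply hC
      rw [← hCw, h0, zero_pow hm3, zero_mul]
    set w : F := x^d + b with hwdef
    set C : F := -(b^(3^m)*b) - (x+a)^h * a with hCdef
    have hσC : C^(3^m) = w^2 * C := by
      have h5 : (w^(3^m))^(3^m) * w^(3^m) = C^(3^m) := by rw [← mul_pow, hCw]
      rw [hss w] at h5
      calc C^(3^m) = w^3 * w^(3^m) := h5.symm
      _ = w^2 * (w^(3^m) * w) := by ring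
      _ = w^2 * C := by rw [hCw]
    have hχC : C^h = 1 := by
      rw [← hCw, mul_pow, hχσ w hwne]
      exact hsq1 w hwne
    have hfactored : w^2 - b^2 = x^d * (x^d - b) := by
      rw [hwdef]; linear_combination (x^d*b)*h3F
    have hvm : x^d - b = -((x+a)^d) := by linear_combination h3
    have hχw2b2 : (w^2 - b^2)^h = -1 := by
      rw [hfactored, hvm, mul_pow, hχd x hx0, one_mul, e5.neg_pow, hχd (x+a) hxa]
    have hδσ : ((x+a)^h)^(3^m) = (x+a)^h := by
      rcases hpm (x+a) hxa with h5|h5 <;> rw [h5]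
      · exact one_pow _
      · exact hodd3m.neg_one_pow
    have hid : (w^2 - b^2)*C = (x+a)^h * (a*b^2 - a^(3^m)) := by
      have hCσ : C^(3^m) = -((b^(3^m))^(3^m) * b^(3^m)) - ((x+a)^h)^(3^m) * a^(3^m) := by
        have h5 : (-(b^(3^m)*b) - (x+a)^h*a)^(3^m)
            = (-(b^(3^m)*b))^(3^m) - ((x+a)^h*a)^(3^m) := hfsub _ _
        rw [hCdef, h5, hfneg, mul_pow, mul_pow]
      calc (w^2 - b^2)*C = C^(3^m) - b^2*C := by rw [hσC]; ring
      _ = _ := by rw [hCσ, hδσ, hss b, hCdef]; ring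
    have hls : ((w^2-b^2)*C)^h = -1 := by rw [mul_pow, hχw2b2, hχC]; ring
    have hrs : ((x+a)^h * (a*b^2 - a^(3^m)))^h
        = (x+a)^h * (a*b^2 - a^(3^m))^h := by
      rw [mul_pow]
      congr 1
      rcases hpm (x+a) hxa with h5|h5 <;> rw [h5]
      · exact one_pow h
      · exact e5.neg_one_pow
    rw [← hrs, ← hid, hls]
  -- ===================== main case analysis =====================
  by_cases ha : a = 0
  · subst ha
    by_cases hb : b = 0
    · subst hb
      have hsub : {x : F | (x + 0) ^ d + x ^ d = 0} ⊆ {0} := by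
        intro x hx
        simp only [Set.mem_setOf_eq, add_zero] at hx
        have hxd : x^d = 0 := by linear_combination (-1)*hx + (x^d) * h3F
        simpa using (pow_eq_zero_iff e3).mp hxd
      calc Set.ncard {x : F | (x + 0) ^ d + x ^ d = 0} ≤ ({0} : Set F).ncard :=
            Set.ncard_le_ncard hsub (Set.toFinite _)
      _ ≤ 4 := by simp
    · have hsub : {x : F | (x + 0) ^ d + x ^ d = b} ⊆
          {b^(3^m)*b, -(b^(3^m)*b)} := by
        intro x hx
        simp only [Set.mem_setOf_eq, add_zero] at hx
        have hxd : x^d = -b := by linear_combination (-1)*hx + (x^d)*h3F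
        have hx0 : x ≠ 0 := by
          intro h0
          rw [h0, zero_pow e3] at hxd
          exact hb (by linear_combination hxd)
        have hrec := hrecover x hx0
        rw [hxd, hfneg] at hrec
        have hx' : x = x^h * (b^(3^m)*b) := by
          calc x = x^h * (-b^(3^m) * -b) := hrec.symm
          _ = _ := by ring
        simp only [Set.mem_insert_iff, Set.mem_singleton_iff]
        rcases hpm x hx0 with h5 | h5 <;> rw [h5] at hx'
        · left; rw [hx', one_mul]
        · right; rw [hx']; ring
      calc Set.ncard {x : F | (x + 0) ^ d + x ^ d = b}
          ≤ ({b^(3^m)*b, -(b^(3^m)*b)} : Set F).ncard :=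
            Set.ncard_le_ncard hsub (Set.toFinite _)
      _ ≤ ({-(b^(3^m)*b)} : Set F).ncard + 1 := Set.ncard_insert_le _ _
      _ ≤ 4 := by simp
  · by_cases hK : a*b^2 = a^(3^m)
    · -- degenerate case : S ⊆ {0, -a, a}
      have hb0 : b ≠ 0 := by
        intro h0
        rw [h0] at hK
        have h5 : a^(3^m) = 0 := by linear_combination -hK
        exact ha ((pow_eq_zero_iff hm3).mp h5)
      have hB : b^(3^m)*b = a^h*a := by
        have hfac : (b - a^d)*(b + a^d) = 0 := by
          have h5 : a * ((b - a^d)*(b + a^d)) = 0 := by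
            linear_combination hK - hR1 a
          rcases mul_eq_zero.mp h5 with h6|h6
          · exact absurd h6 ha
          · exact h6
        rcases mul_eq_zero.mp hfac with h6|h6
        · have hb' : b = a^d := by linear_combination h6
          rw [hb']; exact hR2 a ha
        · have hb' : b = -(a^d) := by linear_combination h6
          rw [hb', hfneg]
          linear_combination hR2 a ha
      have hsub : {x : F | (x + a)^d + x^d = b} ⊆ {0, -a, a} := by
        intro x hx
        simp only [Set.mem_setOf_eq] at hx
        simp only [Set.mem_insert_iff, Set.mem_singleton_iff]
        by_contra hcon
        push_neg at hcon
        obtain ⟨hx0, hxna, hxa⟩ := hcon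
        have hxa0 : x + a ≠ 0 := by
          intro h5; exact hxna (by linear_combination h5)
        have hcase : x^h = (x+a)^h ∨ x^h = -(x+a)^h := by
          rcases hpm x hx0 with h5|h5 <;> rcases hpm (x+a) hxa0 with h6|h6
          · left; rw [h5, h6]
          · right; rw [h5, h6]; norm_num
          · right; rw [h5, h6]
          · left; rw [h5, h6]
        obtain ⟨h1, h2, h3, h4⟩ := hfacts x hx hx0 hxa0
        rcases hcase with hpp | hmm
        · have hEq := hpure x hx hx0 hxa0 hpp
          by_cases hde : (x+a)^h = a^h
          · have h5 : b^(3^m)*b - (x+a)^h * a = 0 := by rw [hB, hde]; ring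
            have hzero : b^(3^m)*(x^d) + b*((x^d)^(3^m)) = 0 := hEq.trans h5
            exact h1 (hLin b (x^d) hb0 hzero)
          · have hde' : (x+a)^h = -(a^h) := by
              rcases hpm (x+a) hxa0 with h5|h5 <;> rcases hpm a ha with h6|h6 <;>
                rw [h5, h6] at hde ⊢
              · exact absurd rfl hde
              · norm_num
              · exact absurd rfl hde
            have hzero : b^(3^m)*(x^d - b) + b*((x^d - b)^(3^m)) = 0 := by
              rw [hfsub]
              linear_combination hEq - hB - a * hde'
            have h6 := hLin b _ hb0 hzero
            have h7 : x^d = b := by linear_combination h6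
            exact h2 (by rw [h3, h7, sub_self])
        · by_cases hC : -(b^(3^m)*b) - (x+a)^h * a = 0
          · obtain ⟨hxeq, _⟩ := hmixC0 x hx hx0 hxa0 hmm hC
            exact hxa hxeq
          · have h5 := hchain x hx hx0 hxa0 hmm hC
            have h6 : a*b^2 - a^(3^m) = 0 := sub_eq_zero_of_eq hK
            rw [h6, zero_pow hh0, mul_zero] at h5
            exact hneg1ne0 h5.symm
      calc Set.ncard {x : F | (x + a)^d + x^d = b} ≤ ({0, -a, a} : Set F).ncard :=
            Set.ncard_le_ncard hsub (Set.toFinite _)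
      _ ≤ ({-a, a} : Set F).ncard + 1 := Set.ncard_insert_le _ _
      _ ≤ (({a} : Set F).ncard + 1) + 1 := Nat.add_le_add_right (Set.ncard_insert_le _ _) 1
      _ ≤ 4 := by simp
    · -- main case
      have hMCne : ∀ x : F, (x + a)^d + x^d = b → x ≠ 0 → x + a ≠ 0 →
          x^h = -(x+a)^h → -(b^(3^m)*b) - (x+a)^h*a ≠ 0 := by
        intro x hx hx0 hxa hmm hC0
        obtain ⟨_, hab⟩ := hmixC0 x hx hx0 hxa hmm hC0
        exact hK hab
      have hPbound : ∀ s : F,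
          {x : F | (x + a)^d + x^d = b ∧ x ≠ 0 ∧ x + a ≠ 0 ∧ x^h = s ∧ (x+a)^h = s}.ncard ≤ 1 := by
        intro s
        refine (Set.ncard_le_one (Set.toFinite _)).mpr ?_
        intro x hxm y hym
        simp only [Set.mem_setOf_eq] at hxm hym
        obtain ⟨hx, hx0, hxa, hsx, hsxa⟩ := hxm
        obtain ⟨hy, hy0, hya, hsy, hsya⟩ := hym
        have hb0 : b ≠ 0 := by
          intro h0
          have h3x := (hfacts x hx hx0 hxa).2.2.1
          rw [h0, zero_sub] at h3x
          have h6 := hχd (x+a) hxa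
          rw [h3x, e5.neg_pow, hχd x hx0] at h6
          exact hone h6.symm
        have hEx := hpure x hx hx0 hxa (by rw [hsx, hsxa])
        have hEy := hpure y hy hy0 hya (by rw [hsy, hsya])
        rw [hsxa] at hEx
        rw [hsya] at hEy
        have hdiff : b^(3^m) * (x^d - y^d) + b * ((x^d - y^d)^(3^m)) = 0 := by
          rw [hfsub]; linear_combination hEx - hEy
        have hz := hLin b _ hb0 hdiff
        have hu : x^d = y^d := by linear_combination hz
        have hrx := hrecover x hx0
        have hry := hrecover y hy0
        rw [hsx] at hrx
        rw [hsy] at hry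
        rw [← hrx, ← hry, hu]
      have hMbound : ∀ s : F,
          {x : F | (x + a)^d + x^d = b ∧ x ≠ 0 ∧ x + a ≠ 0 ∧ x^h = -s ∧ (x+a)^h = s}.ncard ≤ 2 := by
        intro s
        rcases Set.eq_empty_or_nonempty
          {x : F | (x + a)^d + x^d = b ∧ x ≠ 0 ∧ x + a ≠ 0 ∧ x^h = -s ∧ (x+a)^h = s} with hemp | hne
        · rw [hemp]; simp
        · obtain ⟨x0, hx0mem⟩ := hne
          simp only [Set.mem_setOf_eq] at hx0mem
          obtain ⟨hx, hx0, hxa, hsx, hsxa⟩ := hx0mem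
          have hmm0 : x0^h = -(x0+a)^h := by rw [hsx, hsxa]
          have hC := hMCne x0 hx hx0 hxa hmm0
          rw [hsxa] at hC
          have hw0 := hmix x0 hx hx0 hxa hmm0
          rw [hsxa] at hw0
          have hgen : ∀ w : F, w^(3^m)*w = (-(b^(3^m)*b) - s*a) →
              w^2 * (-(b^(3^m)*b) - s*a) = (-(b^(3^m)*b) - s*a)^(3^m) := by
            intro w hw
            have h5 : (w^(3^m))^(3^m) * w^(3^m) = (-(b^(3^m)*b) - s*a)^(3^m) := by
              rw [← mul_pow, hw]
            rw [hss w] at h5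
            calc w^2 * (-(b^(3^m)*b) - s*a) = w^2 * (w^(3^m)*w) := by rw [hw]
            _ = w^3 * w^(3^m) := by ring
            _ = _ := h5
          have hg0 := hgen _ hw0
          have hsub : {x : F | (x + a)^d + x^d = b ∧ x ≠ 0 ∧ x + a ≠ 0 ∧ x^h = -s ∧ (x+a)^h = s}
              ⊆ {x0, (-s) * ((b - x0^d)^(3^m) * (b - x0^d))} := by
            intro y hy
            simp only [Set.mem_setOf_eq] at hy
            obtain ⟨hy1, hy0, hya, hsy, hsya⟩ := hy
            have hmmy : y^h = -(y+a)^h := by rw [hsy, hsya]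
            have hwy := hmix y hy1 hy0 hya hmmy
            rw [hsya] at hwy
            have hgy := hgen _ hwy
            have hsq : (y^d + b)^2 = (x0^d + b)^2 := by
              have h6 : ((y^d+b)^2 - (x0^d+b)^2) * (-(b^(3^m)*b) - s*a) = 0 := by
                linear_combination hgy - hg0
              rcases mul_eq_zero.mp h6 with h7|h7
              · linear_combination h7
              · exact absurd h7 hC
            have hfac : (y^d - x0^d) * (y^d + x0^d - b) = 0 := by
              linear_combination hsq + (b*(x0^d - y^d))*h3F
            have hry := hrecover y hy0
            rw [hsy] at hry
            simp only [Set.mem_insert_iff, Set.mem_singleton_iff]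
            rcases mul_eq_zero.mp hfac with h7|h7
            · have hud : y^d = x0^d := by linear_combination h7
              have hrx := hrecover x0 hx0
              rw [hsx] at hrx
              left
              rw [← hry, hud]
              exact hrx
            · have hud : y^d = b - x0^d := by linear_combination h7
              right
              rw [← hry, hud]
          calc Set.ncard {x : F | (x + a)^d + x^d = b ∧ x ≠ 0 ∧ x + a ≠ 0 ∧ x^h = -s ∧ (x+a)^h = s}
              ≤ ({x0, (-s) * ((b - x0^d)^(3^m) * (b - x0^d))} : Set F).ncard :=
                Set.ncard_le_ncard hsub (Set.toFinite _)
          _ ≤ ({(-s) * ((b - x0^d)^(3^m) * (b - x0^d))} : Set F).ncard + 1 := Set.ncard_insert_le _ _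
          _ ≤ 2 := by simp
      have hMexcl : ∀ x y : F,
          x ∈ {x : F | (x + a)^d + x^d = b ∧ x ≠ 0 ∧ x + a ≠ 0 ∧ x^h = -1 ∧ (x+a)^h = 1} →
          y ∈ {x : F | (x + a)^d + x^d = b ∧ x ≠ 0 ∧ x + a ≠ 0 ∧ x^h = -(-1) ∧ (x+a)^h = -1} →
          False := by
        intro x y hxm hym
        simp only [Set.mem_setOf_eq] at hxm hym
        obtain ⟨hx, hx0, hxa, hsx, hsxa⟩ := hxm
        obtain ⟨hy, hy0, hya, hsy, hsya⟩ := hym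
        have hcx := hchain x hx hx0 hxa (by rw [hsx, hsxa])
          (hMCne x hx hx0 hxa (by rw [hsx, hsxa]))
        have hcy := hchain y hy hy0 hya (by rw [hsy, hsya])
          (hMCne y hy hy0 hya (by rw [hsy, hsya]))
        rw [hsxa] at hcx
        rw [hsya] at hcy
        exact hone (by linear_combination hcx + hcy)
      have hcover : {x : F | (x + a)^d + x^d = b} ⊆
          (({x : F | (x + a)^d + x^d = b ∧ x ≠ 0 ∧ x + a ≠ 0 ∧ x^h = 1 ∧ (x+a)^h = 1} ∪
            {x : F | (x + a)^d + x^d = b ∧ x ≠ 0 ∧ x + a ≠ 0 ∧ x^h = -1 ∧ (x+a)^h = -1}) ∪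
           ({x : F | (x + a)^d + x^d = b ∧ x ≠ 0 ∧ x + a ≠ 0 ∧ x^h = -1 ∧ (x+a)^h = 1} ∪
            {x : F | (x + a)^d + x^d = b ∧ x ≠ 0 ∧ x + a ≠ 0 ∧ x^h = -(-1) ∧ (x+a)^h = -1})) := by
        intro x hx
        simp only [Set.mem_setOf_eq] at hx
        have hx0 : x ≠ 0 := by
          intro h5
          rw [h5, zero_add, zero_pow e3, add_zero] at hx
          apply hK
          rw [← hx, ← hR1 a]; ring
        have hxa0 : x + a ≠ 0 := by
          intro h5
          have hxe : x = -a := by linear_combination h5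
          rw [hxe, neg_add_cancel, zero_pow e3, zero_add, e2.neg_pow] at hx
          apply hK
          rw [← hx, ← hR1 a]; ring
        simp only [Set.mem_union, Set.mem_setOf_eq]
        rcases hpm x hx0 with h5|h5 <;> rcases hpm (x+a) hxa0 with h6|h6
        · exact Or.inl (Or.inl ⟨hx, hx0, hxa0, h5, h6⟩)
        · exact Or.inr (Or.inr ⟨hx, hx0, hxa0, by rw [h5]; norm_num, h6⟩)
        · exact Or.inr (Or.inl ⟨hx, hx0, hxa0, h5, h6⟩)
        · exact Or.inl (Or.inr ⟨hx, hx0, hxa0, h5, h6⟩)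
      have hM12 : ({x : F | (x + a)^d + x^d = b ∧ x ≠ 0 ∧ x + a ≠ 0 ∧ x^h = -1 ∧ (x+a)^h = 1} ∪
            {x : F | (x + a)^d + x^d = b ∧ x ≠ 0 ∧ x + a ≠ 0 ∧ x^h = -(-1) ∧ (x+a)^h = -1}).ncard ≤ 2 := by
        rcases Set.eq_empty_or_nonempty
          {x : F | (x + a)^d + x^d = b ∧ x ≠ 0 ∧ x + a ≠ 0 ∧ x^h = -1 ∧ (x+a)^h = 1} with h5|h5
        · rw [h5, Set.empty_union]
          exact hMbound (-1)
        · have h6 : {x : F | (x + a)^d + x^d = b ∧ x ≠ 0 ∧ x + a ≠ 0 ∧ x^h = -(-1) ∧ (x+a)^h = -1} = ∅ := by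
            rw [Set.eq_empty_iff_forall_notMem]
            intro y hy
            obtain ⟨x, hxm⟩ := h5
            exact hMexcl x y hxm hy
          rw [h6, Set.union_empty]
          exact hMbound 1
      calc Set.ncard {x : F | (x + a)^d + x^d = b} ≤ _ :=
            Set.ncard_le_ncard hcover (Set.toFinite _)
      _ ≤ ({x : F | (x + a)^d + x^d = b ∧ x ≠ 0 ∧ x + a ≠ 0 ∧ x^h = 1 ∧ (x+a)^h = 1} ∪
            {x : F | (x + a)^d + x^d = b ∧ x ≠ 0 ∧ x + a ≠ 0 ∧ x^h = -1 ∧ (x+a)^h = -1}).ncard +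
          ({x : F | (x + a)^d + x^d = b ∧ x ≠ 0 ∧ x + a ≠ 0 ∧ x^h = -1 ∧ (x+a)^h = 1} ∪
            {x : F | (x + a)^d + x^d = b ∧ x ≠ 0 ∧ x + a ≠ 0 ∧ x^h = -(-1) ∧ (x+a)^h = -1}).ncard :=
            Set.ncard_union_le _ _
      _ ≤ ({x : F | (x + a)^d + x^d = b ∧ x ≠ 0 ∧ x + a ≠ 0 ∧ x^h = 1 ∧ (x+a)^h = 1}.ncard +
            {x : F | (x + a)^d + x^d = b ∧ x ≠ 0 ∧ x + a ≠ 0 ∧ x^h = -1 ∧ (x+a)^h = -1}.ncard) + 2 :=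
            add_le_add (Set.ncard_union_le _ _) hM12
      _ ≤ (1 + 1) + 2 := add_le_add (add_le_add (hPbound 1) (hPbound (-1))) le_rfl
      _ ≤ 4 := by norm_num

theorem stmt_1 (n : ℕ) (hn : 0 < n) (hcond : n % 4 = 3)
    (d : ℕ) (hd : d = (3 ^ ((n + 1) / 2) - 1) / 2) :
    ∀ a b : GaloisField 3 n,
      {x : GaloisField 3 n | (x + a) ^ d + x ^ d = b}.ncard ≤ 4 := by
  intro a b
  set m := (n + 1) / 2 with hm
  set h := (3 ^ n - 1) / 2 with hh
  obtain ⟨K, hK⟩ : ∃ K, n = 4 * K + 3 := ⟨n / 4, by omega⟩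
  have hmK : m = 2 * (K + 1) := by omega
  have h9 : ∀ j : ℕ, ∃ t, (9:ℕ)^j = 8*t + 1 := by
    intro j
    induction j with
    | zero => exact ⟨0, by norm_num⟩
    | succ i ih =>
        obtain ⟨t, ht⟩ := ih
        exact ⟨9*t + 1, by rw [pow_succ, ht]; ring⟩
  have h3m : (3:ℕ)^m = (9:ℕ)^(K+1) := by rw [hmK, pow_mul]; norm_num
  obtain ⟨t, ht⟩ := h9 (K+1)
  have ht1 : 1 ≤ t := by
    have h5 : (9:ℕ)^1 ≤ 9^(K+1) := Nat.pow_le_pow_right (by norm_num) (by omega)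
    simp only [pow_one] at h5
    omega
  have h3meq : (3:ℕ)^m = 8*t+1 := by rw [h3m, ht]
  have e1 : 2*d + 1 = 3^m := by omega
  have hd4 : d = 4*t := by omega
  have e2 : Even d := ⟨2*t, by omega⟩
  have e3 : d ≠ 0 := by omega
  have hmm2 : m + m = n + 1 := by omega
  have h77 : (3:ℕ)^m * 3^m = 3^(n+1) := by rw [← pow_add, hmm2]
  have h3n9 : (3:ℕ)^n = 9^(2*K+1) * 3 := by
    rw [hK, show 4*K+3 = 2*(2*K+1)+1 by omega, pow_succ, pow_mul]
    norm_num
  obtain ⟨s, hs⟩ := h9 (2*K+1)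
  have h3ns : (3:ℕ)^n = 24*s + 3 := by rw [h3n9, hs]; ring
  have hh12 : h = 12*s + 1 := by omega
  have e5 : Odd h := ⟨6*s, by omega⟩
  have e7 : (3:ℕ)^m * 3^m = 3*(2*h+1) := by
    rw [h77, pow_succ]
    omega
  have hsq : (8*t+1)*(8*t+1) = 72*s + 9 := by
    calc (8*t+1)*(8*t+1) = 3^m * 3^m := by rw [h3meq]
    _ = (3:ℕ)^(n+1) := h77
    _ = 3^n*3 := pow_succ 3 n
    _ = 72*s+9 := by omega
  have e6 : d * (3^m + 1) = 3*h + 1 := by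
    rw [hd4, h3meq, hh12]
    ring_nf
    ring_nf at hsq
    linarith [hsq]
  letI : Fintype (GaloisField 3 n) := Fintype.ofFinite _
  have hcard : Fintype.card (GaloisField 3 n) = 3^n := by
    rw [← Nat.card_eq_fintype_card]
    exact GaloisField.card 3 n hn.ne'
  have e4 : Fintype.card (GaloisField 3 n) = 2*h+1 := by rw [hcard]; omega
  exact gf_core e1 e2 e3 e4 e5 e6 e7 a b
end

section
/- Let n be a positive integer with n ≡ 3 (mod 4) and let d' = (3^((n+1)/2) - 1)/2 + (3^n - 1)/2. Then the power function F'(x) = x^{d'} on GF(3^n) has (-1)-differential uniformity at most 2; that is, for all a, b ∈ GF(3^n), the number of x ∈ GF(3^n) satisfying (x+a)^{d'} + x^{d'} = b is at most 2. -/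
lemma red_core {K : Type*} [Field K] [Finite K] [CharP K 3] (e m : ℕ) (he : e % 2 = 1)
    (hcard : Nat.card K = 2 * e + 1)
    (hMM : 3 ^ m * 3 ^ m = 3 * (2 * e + 1)) :
    ∀ w : K, w ≠ 0 →
      {t : K | (1 - t) ^ (e + 3 ^ m + 1) - t ^ (e + 3 ^ m + 1) = w}.ncard ≤ 2 := by
  intro w hw
  cases nonempty_fintype K
  have hcard' : Fintype.card K = 2 * e + 1 := by rw [← Nat.card_eq_fintype_card, hcard]
  have hq1 : ∀ x : K, x ^ (2 * e + 1) = x := by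
    intro x; have := FiniteField.pow_card x; rwa [hcard'] at this
  have hu1 : ∀ x : K, x ≠ 0 → x ^ (2 * e) = 1 := by
    intro x hx
    have := FiniteField.pow_card_sub_one_eq_one x hx
    rwa [hcard', Nat.add_sub_cancel] at this
  have h3 : (3 : K) = 0 := by exact_mod_cast CharP.cast_eq_zero K 3
  have h2 : (2 : K) ≠ 0 := by
    intro h
    have h1 : (1 : K) = 0 := by linear_combination h3 - h
    exact one_ne_zero h1
  have h1m1 : (1 : K) ≠ -1 := by
    intro h
    apply h2; linear_combination h
  have hmodd : 3 ^ m % 2 = 1 := by rw [Nat.pow_mod]; simp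
  obtain ⟨h, hMh⟩ : ∃ h, 3 ^ m = 2 * h + 1 := ⟨3 ^ m / 2, by omega⟩
  have hOdd3m : Odd (3 ^ m) := Nat.odd_iff.mpr hmodd
  have hOdde : Odd e := Nat.odd_iff.mpr he
  have hsadd : ∀ x y : K, (x + y) ^ 3 ^ m = x ^ 3 ^ m + y ^ 3 ^ m := fun x y =>
    add_pow_char_pow (x := x) (y := y) 3 m
  have hsneg : ∀ x : K, (-x) ^ 3 ^ m = -(x ^ 3 ^ m) := fun x => hOdd3m.neg_pow x
  have hssub : ∀ x y : K, (x - y) ^ 3 ^ m = x ^ 3 ^ m - y ^ 3 ^ m := by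
    intro x y
    rw [sub_eq_add_neg, hsadd, hsneg, sub_eq_add_neg]
  have hs1 : (1 : K) ^ 3 ^ m = 1 := one_pow _
  have hcube : ∀ x : K, (x ^ 3 ^ m) ^ 3 ^ m = x ^ 3 := by
    intro x
    rw [← pow_mul, hMM, show 3 * (2 * e + 1) = (2 * e + 1) * 3 from mul_comm _ _,
      pow_mul, hq1]
  have L1 : ∀ t : K, t ^ 3 ^ m = -t → t = 0 := by
    intro t ht
    have h1 : t ^ 3 = t := by
      have hc := hcube t
      rw [ht, hsneg, ht, neg_neg] at hc
      exact hc.symm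
    have h2' : t * (t - 1) * (t + 1) = 0 := by linear_combination h1
    rcases mul_eq_zero.mp h2' with h' | hp1
    · rcases mul_eq_zero.mp h' with h0 | hm1
      · exact h0
      · exfalso
        have ht1 : t = 1 := by linear_combination hm1
        rw [ht1, hs1] at ht
        exact h1m1 ht
    · exfalso
      have ht1 : t = -1 := by linear_combination hp1
      rw [ht1, hsneg, hs1] at ht
      exact h1m1 (by linear_combination -ht)
  have L2 : ∀ t t' : K, t ^ 3 ^ m + t = t' ^ 3 ^ m + t' → t = t' := by
    intro t t' hE
    have hsub : (t - t') ^ 3 ^ m = -(t - t') := by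
      rw [hssub]; linear_combination hE
    have := L1 _ hsub
    linear_combination this
  have hkey : ∀ z : K, (z ^ (3 ^ m + 1)) ^ 3 ^ m = z ^ (3 ^ m + 1) * z ^ 2 := by
    intro z
    rw [← pow_mul]
    have hexp : (3 ^ m + 1) * 3 ^ m = (2 * e + 1) * 3 + 3 ^ m := by
      have h' : (3 ^ m + 1) * 3 ^ m = 3 ^ m * 3 ^ m + 3 ^ m := by ring
      rw [h', hMM]; ring
    rw [hexp, pow_add, pow_mul, hq1, ← pow_add, ← pow_add]
    congr 1
    omega
  have L3 : ∀ z z' : K, z ≠ 0 → z ^ (3 ^ m + 1) = z' ^ (3 ^ m + 1) → z' = z ∨ z' = -z := by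
    intro z z' hz hzz
    have h1 := hkey z
    have h2' := hkey z'
    rw [← hzz] at h2'
    have hc : z ^ (3 ^ m + 1) ≠ 0 := pow_ne_zero _ hz
    have hsq : z ^ 2 = z' ^ 2 := mul_left_cancel₀ hc (h1.symm.trans h2')
    have h4 : (z' - z) * (z' + z) = 0 := by linear_combination -hsq
    rcases mul_eq_zero.mp h4 with h' | h'
    · left; linear_combination h'
    · right; linear_combination h'
  have chiM1 : ∀ z : K, z ≠ 0 → (z ^ (3 ^ m + 1)) ^ e = 1 := by
    intro z hz
    rw [← pow_mul, show (3 ^ m + 1) * e = 2 * e * (h + 1) from by rw [hMh]; ring,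
      pow_mul, hu1 z hz, one_pow]
  have chipm : ∀ t : K, t ≠ 0 → t ^ e = 1 ∨ t ^ e = -1 := by
    intro t ht
    apply mul_self_eq_one_iff.mp
    rw [← pow_add, show e + e = 2 * e from by ring, hu1 t ht]
  have chineg : ∀ t : K, (-t) ^ e = -t ^ e := fun t => hOdde.neg_pow t
  have hG : ∀ x : K, x ^ (e + 3 ^ m + 1) = x ^ e * (x * x ^ 3 ^ m) := by
    intro x; rw [pow_add, pow_add, pow_one]; ring
  have hGz : (0 : K) ^ (e + 3 ^ m + 1) = 0 := zero_pow (by positivity)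
  have hzz : ∀ x : K, (1 + x) * (1 + x ^ 3 ^ m) = (1 + x) ^ (3 ^ m + 1) := by
    intro x
    rw [pow_add, pow_one, show (1 + x) ^ 3 ^ m = 1 + x ^ 3 ^ m from by rw [hsadd, hs1]]
    ring
  -- helper: an element can't equal its own negation (for e-th powers which are ±1)
  have hPM : ∀ x : K, x ≠ 0 → x ^ e ≠ -x ^ e := by
    intro x hx hcontra
    rcases chipm x hx with h1 | h1 <;> rw [h1] at hcontra
    · exact h1m1 hcontra
    · exact h1m1 (by linear_combination -hcontra)
  -- mixed solutions have 1 + t ≠ 0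
  have hz_ne : ∀ t : K, t ^ e = -(1 - t) ^ e → (1 : K) + t ≠ 0 := by
    intro t hp h0
    have ht : t = -1 := by linear_combination h0
    have e1 : t ^ e = -1 := by rw [ht, chineg, one_pow]
    have e2 : ((1 : K) - t) ^ e = -1 := by
      have hh : (1 : K) - t = -1 := by rw [ht]; linear_combination h3
      rw [hh, chineg, one_pow]
    rw [e1, e2] at hp
    exact h1m1 (by linear_combination -hp)
  -- shape of generic solutions
  have hsolve : ∀ t : K, (1 - t) ^ (e + 3 ^ m + 1) - t ^ (e + 3 ^ m + 1) = w → t ≠ 0 → t ≠ 1 →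
      (t ^ e = (1 - t) ^ e ∧ t ^ 3 ^ m + t = 1 - (1 - t) ^ e * w) ∨
      (t ^ e = -(1 - t) ^ e ∧ (1 + t) * (1 + t ^ 3 ^ m) = -1 - (1 - t) ^ e * w) := by
    intro t heq ht0 ht1
    have h1t : (1 : K) - t ≠ 0 := sub_ne_zero.mpr (Ne.symm ht1)
    rw [hG, hG, hssub, hs1] at heq
    rcases chipm t ht0 with hε | hε <;> rcases chipm (1 - t) h1t with hδ | hδ
    · left
      refine ⟨by rw [hε, hδ], ?_⟩
      rw [hε, hδ] at heq
      rw [hδ]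
      linear_combination -heq
    · right
      refine ⟨by rw [hε, hδ]; try ring, ?_⟩
      rw [hε, hδ] at heq
      rw [hδ]
      linear_combination heq + (1 + t * t ^ 3 ^ m) * h3
    · right
      refine ⟨by rw [hε, hδ]; try ring, ?_⟩
      rw [hε, hδ] at heq
      rw [hδ]
      linear_combination -heq + (1 + t * t ^ 3 ^ m) * h3
    · left
      refine ⟨by rw [hε, hδ], ?_⟩
      rw [hε, hδ] at heq
      rw [hδ]
      linear_combination heq
  -- uniqueness of pure solutions
  have hpure : ∀ t t' : K, t ≠ 1 → t' ≠ 1 →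
      t ^ e = (1 - t) ^ e → t' ^ e = (1 - t') ^ e →
      t ^ 3 ^ m + t = 1 - (1 - t) ^ e * w → t' ^ 3 ^ m + t' = 1 - (1 - t') ^ e * w →
      t = t' := by
    intro t t' ht1 ht1' hp hp' hE hE'
    have h1t : (1 : K) - t ≠ 0 := sub_ne_zero.mpr (Ne.symm ht1)
    have h1t' : (1 : K) - t' ≠ 0 := sub_ne_zero.mpr (Ne.symm ht1')
    have hdiff : ∀ v : K, (1 - t) ^ e = v → (1 - t') ^ e = -v → False := by
      intro v hδ hδ'
      have hsum : (t + t') ^ 3 ^ m + (t + t') = 1 ^ 3 ^ m + 1 := by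
        rw [hsadd, hs1]
        rw [hδ] at hE
        rw [hδ'] at hE'
        linear_combination hE + hE'
      have h1eq : t + t' = 1 := L2 _ _ hsum
      have ht'e : t' = 1 - t := by linear_combination h1eq
      rw [ht'e, show (1 : K) - (1 - t) = t from by ring] at hδ'
      -- hδ' : t ^ e = -v ; hp : t ^ e = (1-t)^e ; hδ : (1-t)^e = v
      rw [hp, hδ] at hδ'
      have hv0 : v ≠ 0 := by rw [← hδ]; exact pow_ne_zero e h1t
      have h2v : (2 : K) * v = 0 := by linear_combination hδ'
      rcases mul_eq_zero.mp h2v with hx | hx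
      · exact h2 hx
      · exact hv0 hx
    rcases chipm _ h1t with hδ | hδ <;> rcases chipm _ h1t' with hδ' | hδ'
    · apply L2; rw [hE, hE', hδ, hδ']
    · exact (hdiff 1 hδ hδ').elim
    · exact (hdiff (-1) hδ (by rw [hδ']; ring)).elim
    · apply L2; rw [hE, hE', hδ, hδ']
  -- uniqueness of mixed solutions
  have hmixed : ∀ t t' : K, t ≠ 1 → t' ≠ 1 →
      t ^ e = -(1 - t) ^ e → t' ^ e = -(1 - t') ^ e →
      (1 + t) * (1 + t ^ 3 ^ m) = -1 - (1 - t) ^ e * w →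
      (1 + t') * (1 + t' ^ 3 ^ m) = -1 - (1 - t') ^ e * w →
      t = t' := by
    intro t t' ht1 ht1' hp hp' hE hE'
    have h1t : (1 : K) - t ≠ 0 := sub_ne_zero.mpr (Ne.symm ht1)
    have h1t' : (1 : K) - t' ≠ 0 := sub_ne_zero.mpr (Ne.symm ht1')
    have hz0 : (1 : K) + t ≠ 0 := hz_ne t hp
    have hz0' : (1 : K) + t' ≠ 0 := hz_ne t' hp'
    rw [hzz] at hE hE'
    have hsame : (1 - t) ^ e = (1 - t') ^ e → t = t' := by
      intro hvv
      have hcc : (1 + t) ^ (3 ^ m + 1) = (1 + t') ^ (3 ^ m + 1) := by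
        rw [hE, hE', hvv]
      rcases L3 _ _ hz0 hcc with h' | h'
      · linear_combination -h'
      · exfalso
        have htp : t' = 1 - t := by linear_combination h' - h3
        rw [htp, show (1 : K) - (1 - t) = t from by ring] at hp'
        -- hp' : t^e = -(1-(1-t))^e, with hvv
        rw [htp] at hvv
        rw [show (1 : K) - (1 - t) = t from by ring] at hvv
        -- hvv : (1-t)^e = t^e, hp : t^e = -(1-t)^e
        rw [hp] at hvv
        exact hPM _ h1t hvv
    have hdiffcase : ∀ v : K, (1 - t) ^ e = v → (1 - t') ^ e = -v → False := by
      intro v hδ hδ'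
      have hcc : (1 + t) ^ (3 ^ m + 1) + (1 + t') ^ (3 ^ m + 1) = 1 := by
        rw [hE, hE', hδ, hδ']
        linear_combination -h3
      have h1' := congrArg (fun x : K => x ^ 3 ^ m) hcc
      simp only [hsadd, hkey, hs1] at h1'
      -- h1' : (1+t)^(3^m+1) * (1+t)^2 + (1+t')^(3^m+1) * (1+t')^2 = 1
      have hBA : (1 + t') ^ (3 ^ m + 1) * ((1 + t') ^ 2 - 1)
          = -((1 + t) ^ (3 ^ m + 1) * ((1 + t) ^ 2 - 1)) := by
        linear_combination h1' - hcc
      have hd2 : (1 - t) ^ e * (1 - t) ^ e = 1 := by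
        rw [← pow_add, show e + e = 2 * e from by ring, hu1 _ h1t]
      have hd2' : (1 - t') ^ e * (1 - t') ^ e = 1 := by
        rw [← pow_add, show e + e = 2 * e from by ring, hu1 _ h1t']
      have hA : ((1 + t) ^ (3 ^ m + 1) * ((1 + t) ^ 2 - 1)) ^ e = 1 := by
        rw [show ((1 + t) ^ 2 - 1 : K) = t * (-(1 - t)) from by linear_combination t * h3, mul_pow, mul_pow,
          chiM1 _ hz0, one_mul, chineg, hp]
        linear_combination hd2
      have hB : ((1 + t') ^ (3 ^ m + 1) * ((1 + t') ^ 2 - 1)) ^ e = 1 := by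
        rw [show ((1 + t') ^ 2 - 1 : K) = t' * (-(1 - t')) from by linear_combination t' * h3, mul_pow, mul_pow,
          chiM1 _ hz0', one_mul, chineg, hp']
        linear_combination hd2'
      rw [hBA, chineg, hA] at hB
      exact h1m1 (by linear_combination -hB)
    rcases chipm _ h1t with hδ | hδ <;> rcases chipm _ h1t' with hδ' | hδ'
    · exact hsame (by rw [hδ, hδ'])
    · exact (hdiffcase 1 hδ hδ').elim
    · exact (hdiffcase (-1) hδ (by rw [hδ']; ring)).elim
    · exact hsame (by rw [hδ, hδ'])
  -- boundary membership values
  have hval0 : ((1 : K) - 0) ^ (e + 3 ^ m + 1) - (0 : K) ^ (e + 3 ^ m + 1) = 1 := by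
    rw [sub_zero, one_pow, hGz, sub_zero]
  have hval1 : ((1 : K) - 1) ^ (e + 3 ^ m + 1) - (1 : K) ^ (e + 3 ^ m + 1) = -1 := by
    rw [sub_self, hGz, one_pow]; ring
  -- no pure or mixed solutions when w = ±1
  have hnogen : ∀ t : K, w = 1 ∨ w = -1 →
      (1 - t) ^ (e + 3 ^ m + 1) - t ^ (e + 3 ^ m + 1) = w → t ≠ 0 → t ≠ 1 → False := by
    intro t hw1 heq ht0 ht1
    have h1t : (1 : K) - t ≠ 0 := sub_ne_zero.mpr (Ne.symm ht1)
    rcases hsolve t heq ht0 ht1 with ⟨hp, hE⟩ | ⟨hp, hE⟩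
    · -- pure
      rcases chipm _ h1t with hδ | hδ <;> rw [hδ] at hE <;> rcases hw1 with hw1 | hw1 <;>
          rw [hw1] at hE
      · -- σt + t = 1 - 1 = 0 = σ0 + 0
        apply ht0
        apply L2 t 0
        rw [show ((0 : K)) ^ 3 ^ m = 0 from zero_pow (by positivity)]
        rw [hE]; ring
      · apply ht1
        apply L2 t 1
        rw [hs1, hE]; ring
      · apply ht1
        apply L2 t 1
        rw [hs1, hE]; ring
      · apply ht0
        apply L2 t 0
        rw [show ((0 : K)) ^ 3 ^ m = 0 from zero_pow (by positivity)]
        rw [hE]; ring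
    · -- mixed
      have hz0 : (1 : K) + t ≠ 0 := hz_ne t hp
      rw [hzz] at hE
      rcases chipm _ h1t with hδ | hδ <;> rw [hδ] at hE <;> rcases hw1 with hw1 | hw1 <;>
          rw [hw1] at hE
      · -- (1+t)^(3^m+1) = -1 - 1 = 1 = 1^(3^m+1)
        have h1c : (1 + t) ^ (3 ^ m + 1) = (1 : K) ^ (3 ^ m + 1) := by
          rw [one_pow, hE]; linear_combination -h3
        rcases L3 _ _ (one_ne_zero) h1c.symm with h' | h'
        · exact ht0 (by linear_combination h')
        · exact ht1 (by linear_combination h' - h3)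
      · -- (1+t)^(3^m+1) = -1 + 1 = 0
        have h1c : (1 + t) = 0 := by
          apply pow_eq_zero_iff (n := 3 ^ m + 1) (by positivity) |>.mp
          rw [hE]; ring
        exact hz0 h1c
      · have h1c : (1 + t) = 0 := by
          apply pow_eq_zero_iff (n := 3 ^ m + 1) (by positivity) |>.mp
          rw [hE]; ring
        exact hz0 h1c
      · have h1c : (1 + t) ^ (3 ^ m + 1) = (1 : K) ^ (3 ^ m + 1) := by
          rw [one_pow, hE]; linear_combination -h3
        rcases L3 _ _ (one_ne_zero) h1c.symm with h' | h'
        · exact ht0 (by linear_combination h')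
        · exact ht1 (by linear_combination h' - h3)
  by_cases hw1 : w = 1
  · have hsub : {t : K | (1 - t) ^ (e + 3 ^ m + 1) - t ^ (e + 3 ^ m + 1) = w} ⊆ {0} := by
      intro t ht
      simp only [Set.mem_setOf_eq] at ht
      simp only [Set.mem_singleton_iff]
      by_contra ht0
      by_cases ht1 : t = 1
      · rw [ht1, hval1, hw1] at ht
        exact h1m1 (by linear_combination -ht)
      · exact hnogen t (Or.inl hw1) ht ht0 ht1
    calc {t : K | (1 - t) ^ (e + 3 ^ m + 1) - t ^ (e + 3 ^ m + 1) = w}.ncard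
        ≤ ({0} : Set K).ncard := Set.ncard_le_ncard hsub (Set.finite_singleton 0)
      _ ≤ 2 := by rw [Set.ncard_singleton]; omega
  by_cases hwm1 : w = -1
  · have hsub : {t : K | (1 - t) ^ (e + 3 ^ m + 1) - t ^ (e + 3 ^ m + 1) = w} ⊆ {1} := by
      intro t ht
      simp only [Set.mem_setOf_eq] at ht
      simp only [Set.mem_singleton_iff]
      by_contra ht1
      by_cases ht0 : t = 0
      · rw [ht0, hval0, hwm1] at ht
        exact h1m1 ht
      · exact hnogen t (Or.inr hwm1) ht ht0 ht1
    calc {t : K | (1 - t) ^ (e + 3 ^ m + 1) - t ^ (e + 3 ^ m + 1) = w}.ncard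
        ≤ ({1} : Set K).ncard := Set.ncard_le_ncard hsub (Set.finite_singleton 1)
      _ ≤ 2 := by rw [Set.ncard_singleton]; omega
  -- generic case : inject into Prop
  have hbd : ∀ t : K, t ∈ {t : K | (1 - t) ^ (e + 3 ^ m + 1) - t ^ (e + 3 ^ m + 1) = w} →
      t ≠ 0 ∧ t ≠ 1 := by
    intro t ht
    simp only [Set.mem_setOf_eq] at ht
    constructor
    · intro h0; rw [h0, hval0] at ht; exact hw1 ht.symm
    · intro h1'; rw [h1', hval1] at ht; exact hwm1 ht.symm
  have hinj : {t : K | (1 - t) ^ (e + 3 ^ m + 1) - t ^ (e + 3 ^ m + 1) = w}.ncard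
      ≤ (Set.univ : Set Prop).ncard := by
    apply Set.ncard_le_ncard_of_injOn (fun t => (t ^ e = (1 - t) ^ e))
    · intro x _; exact Set.mem_univ _
    · intro t ht t' ht' hff
      obtain ⟨ht0, ht1⟩ := hbd t ht
      obtain ⟨ht0', ht1'⟩ := hbd t' ht'
      simp only [Set.mem_setOf_eq] at ht ht'
      have hiff : (t ^ e = (1 - t) ^ e) ↔ (t' ^ e = (1 - t') ^ e) := by
        simp only at hff; rw [hff]
      have h1t' : (1 : K) - t' ≠ 0 := sub_ne_zero.mpr (Ne.symm ht1')
      have h1t : (1 : K) - t ≠ 0 := sub_ne_zero.mpr (Ne.symm ht1)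
      rcases hsolve t ht ht0 ht1 with ⟨hp, hE⟩ | ⟨hp, hE⟩ <;>
        rcases hsolve t' ht' ht0' ht1' with ⟨hp', hE'⟩ | ⟨hp', hE'⟩
      · exact hpure t t' ht1 ht1' hp hp' hE hE'
      · exfalso
        have := hiff.mp hp
        rw [hp'] at this
        exact hPM _ h1t' this.symm
      · exfalso
        have := hiff.mpr hp'
        rw [hp] at this
        exact hPM _ h1t this.symm
      · exact hmixed t t' ht1 ht1' hp hp' hE hE'
  refine hinj.trans ?_
  rw [Set.ncard_univ, Nat.card_eq_fintype_card, Fintype.card_prop]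

theorem stmt_2 (n : ℕ) (hn : 0 < n) (hcond : n % 4 = 3)
    (d : ℕ) (hd : d = (3 ^ ((n + 1) / 2) - 1) / 2 + (3 ^ n - 1) / 2) :
    ∀ a b : GaloisField 3 n,
      {x : GaloisField 3 n | (x + a) ^ d + x ^ d = b}.ncard ≤ 2 := by
  intro a b
  -- numeric setup
  obtain ⟨m, hm⟩ : ∃ m, n + 1 = 2 * m := ⟨(n + 1) / 2, by omega⟩
  have hq4 : 3 ^ n % 4 = 3 := by
    obtain ⟨s, hs⟩ : ∃ s, n = 2 * s + 1 := ⟨n / 2, by omega⟩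
    have h9 : 9 ^ s % 4 = 1 := by rw [Nat.pow_mod]; norm_num
    have h3n : 3 ^ n = 9 ^ s * 3 := by
      rw [hs, pow_succ, pow_mul]; norm_num
    omega
  obtain ⟨e, hqe⟩ : ∃ e, 3 ^ n = 2 * e + 1 :=
    ⟨(3 ^ n - 1) / 2, by generalize (3:ℕ) ^ n = q at hq4 ⊢; omega⟩
  have he : e % 2 = 1 := by generalize (3:ℕ) ^ n = q at hq4 hqe; omega
  have hM4 : 3 ^ m % 4 = 1 := by
    obtain ⟨s, hs⟩ : ∃ s, m = 2 * s := ⟨m / 2, by omega⟩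
    have h9 : 9 ^ s % 4 = 1 := by rw [Nat.pow_mod]; norm_num
    have h3m : 3 ^ m = 9 ^ s := by rw [hs, pow_mul]; norm_num
    omega
  obtain ⟨h, hMh⟩ : ∃ h, 3 ^ m = 2 * h + 1 :=
    ⟨(3 ^ m - 1) / 2, by generalize (3:ℕ) ^ m = M at hM4 ⊢; omega⟩
  have hheven : h % 2 = 0 := by generalize (3:ℕ) ^ m = M at hM4 hMh; omega
  have hMM : 3 ^ m * 3 ^ m = 3 * (2 * e + 1) := by
    rw [← hqe, ← pow_add, show m + m = n + 1 from by omega, pow_succ]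
    ring
  have hmdef : (n + 1) / 2 = m := by omega
  have hde : d = h + e := by
    rw [hd, hmdef]
    generalize (3:ℕ) ^ m = M at hMh ⊢
    generalize (3:ℕ) ^ n = q at hqe ⊢
    omega
  have hdodd : d % 2 = 1 := by omega
  have hdnz : d ≠ 0 := by omega
  obtain ⟨u, hu⟩ : ∃ u, h = 2 * u := ⟨h / 2, by omega⟩
  obtain ⟨j, hj⟩ : ∃ j, e = 2 * j + 1 := ⟨(e - 1) / 2, by omega⟩
  have hrel : 4 * (u * u) + 2 * u = 3 * j + 2 := by
    have h2' := hMM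
    rw [hMh, hu, hj] at h2'
    have h1' : (2 * (2 * u) + 1) * (2 * (2 * u) + 1) = 16 * (u * u) + 8 * u + 1 := by ring
    rw [h1'] at h2'
    generalize u * u = uu at h2' ⊢
    omega
  have hkeyexp : d * (e + 3 ^ m + 1) = 1 + 2 * e * (3 * u + j + 3) := by
    have h1' : d * (e + 3 ^ m + 1) = (2 * u + (2 * j + 1)) * ((2 * j + 1) + (2 * (2 * u) + 1) + 1) := by
      rw [hde, hMh, hu, hj]
    have h2' : (2 * u + (2 * j + 1)) * ((2 * j + 1) + (2 * (2 * u) + 1) + 1)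
        = 8 * (u * u) + 12 * (u * j) + 4 * (j * j) + 10 * u + 8 * j + 3 := by ring
    have h3' : 1 + 2 * e * (3 * u + j + 3) = 12 * (u * j) + 4 * (j * j) + 6 * u + 14 * j + 7 := by
      rw [hj]; ring
    rw [h1', h2', h3']
    generalize u * u = uu at hrel ⊢
    generalize u * j = uj
    generalize j * j = jj
    omega
  -- field setup
  letI : Fintype (GaloisField 3 n) := Fintype.ofFinite _
  have hq : Nat.card (GaloisField 3 n) = 3 ^ n := GaloisField.card 3 n (by omega)
  have hcard : Nat.card (GaloisField 3 n) = 2 * e + 1 := by rw [hq, hqe]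
  have hcard' : Fintype.card (GaloisField 3 n) = 2 * e + 1 := by
    rw [← Nat.card_eq_fintype_card, hcard]
  have hu1 : ∀ x : GaloisField 3 n, x ≠ 0 → x ^ (2 * e) = 1 := by
    intro x hx
    have := FiniteField.pow_card_sub_one_eq_one x hx
    rwa [hcard', Nat.add_sub_cancel] at this
  have hGF : ∀ x : GaloisField 3 n, (x ^ d) ^ (e + 3 ^ m + 1) = x := by
    intro x
    by_cases hx : x = 0
    · rw [hx, zero_pow hdnz, zero_pow (by positivity)]
    · rw [← pow_mul, hkeyexp, pow_add, pow_one, pow_mul, hu1 x hx, one_pow, mul_one]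
  have h3K : (3 : GaloisField 3 n) = 0 := by
    exact_mod_cast CharP.cast_eq_zero (GaloisField 3 n) 3
  have hFinj : ∀ x y : GaloisField 3 n, x ^ d = y ^ d → x = y := by
    intro x y hxy
    have := congrArg (fun z : GaloisField 3 n => z ^ (e + 3 ^ m + 1)) hxy
    simpa only [hGF] using this
  by_cases ha : a = 0
  · -- subsingleton case : x^d = -b
    subst ha
    have hsub : {x : GaloisField 3 n | (x + 0) ^ d + x ^ d = b} ⊆ {((-b) ^ (e + 3 ^ m + 1))} := by
      intro x hx
      simp only [Set.mem_setOf_eq, add_zero] at hx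
      simp only [Set.mem_singleton_iff]
      have hxd : x ^ d = -b := by linear_combination -hx + x ^ d * h3K
      rw [← hxd, hGF]
    calc {x : GaloisField 3 n | (x + 0) ^ d + x ^ d = b}.ncard
        ≤ ({((-b) ^ (e + 3 ^ m + 1))} : Set (GaloisField 3 n)).ncard :=
          Set.ncard_le_ncard hsub (Set.finite_singleton _)
      _ ≤ 2 := by rw [Set.ncard_singleton]; omega
  by_cases hb : b = 0
  · subst hb
    have hsub : {x : GaloisField 3 n | (x + a) ^ d + x ^ d = 0} ⊆ {a} := by
      intro x hx
      simp only [Set.mem_setOf_eq] at hx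
      simp only [Set.mem_singleton_iff]
      have hxa : (x + a) ^ d = (-x) ^ d := by
        rw [(Nat.odd_iff.mpr hdodd).neg_pow]
        linear_combination hx
      have := hFinj _ _ hxa
      linear_combination -this + x * h3K
    calc {x : GaloisField 3 n | (x + a) ^ d + x ^ d = 0}.ncard
        ≤ ({a} : Set (GaloisField 3 n)).ncard := Set.ncard_le_ncard hsub (Set.finite_singleton _)
      _ ≤ 2 := by rw [Set.ncard_singleton]; omega
  -- main case
  have hGb : b ^ (e + 3 ^ m + 1) ≠ 0 := pow_ne_zero _ hb
  have hw : a * (b ^ (e + 3 ^ m + 1))⁻¹ ≠ 0 := mul_ne_zero ha (inv_ne_zero hGb)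
  have hred := red_core (K := GaloisField 3 n) e m he hcard hMM (a * (b ^ (e + 3 ^ m + 1))⁻¹) hw
  refine le_trans ?_ hred
  apply Set.ncard_le_ncard_of_injOn (fun x => x ^ d * b⁻¹)
  · intro x hx
    simp only [Set.mem_setOf_eq] at hx ⊢
    have hxa : (x + a) ^ d = b - x ^ d := by linear_combination hx
    have h1t : (1 : GaloisField 3 n) - x ^ d * b⁻¹ = (x + a) ^ d * b⁻¹ := by
      rw [hxa]; field_simp
    rw [h1t, mul_pow, mul_pow, hGF, hGF, inv_pow]
    ring
  · intro x hx y hy hxy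
    simp only at hxy
    have hbinv : (b : GaloisField 3 n)⁻¹ ≠ 0 := inv_ne_zero hb
    have : x ^ d = y ^ d := mul_right_cancel₀ hbinv hxy
    exact hFinj _ _ this
end

section
/- Let n be a positive integer with n ≡ 1 (mod 4) and let d' = (3^((n+1)/2) - 1)/2 + (3^n - 1)/2. Then the power function F'(x) = x^{d'} on GF(3^n) has (-1)-differential uniformity at most 4; that is, for all a, b ∈ GF(3^n), the number of x ∈ GF(3^n) satisfying (x+a)^{d'} + x^{d'} = b is at most 4. -/
section Aux

variable {K : Type*} [Field K] [Fintype K]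

private lemma pow_card' (B : ℕ) (hcard : Fintype.card K = 2*B+1) (x : K) :
    x ^ (2*B+1) = x := by rw [← hcard]; exact FiniteField.pow_card x

private lemma pow_2B (B : ℕ) (hcard : Fintype.card K = 2*B+1) {x : K} (hx : x ≠ 0) :
    x ^ (2*B) = 1 := by
  have h := FiniteField.pow_card_sub_one_eq_one x hx
  rw [hcard] at h
  simpa using h

private lemma eta_pm (B : ℕ) (hcard : Fintype.card K = 2*B+1) {x : K} (hx : x ≠ 0) :
    x ^ B = 1 ∨ x ^ B = -1 := by
  have h : (x ^ B) * (x ^ B) = 1 := by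
    rw [← pow_add]
    have h2 : B + B = 2*B := by ring
    rw [h2]; exact pow_2B B hcard hx
  exact mul_self_eq_one_iff.mp h

end Aux

section Main

variable {K : Type*} [Field K] [Fintype K] [CharP K 3]

private lemma frob3 (k : ℕ) (x y : K) : (x + y) ^ 3 ^ k = x ^ 3 ^ k + y ^ 3 ^ k :=
  add_pow_char_pow x y 3 k

set_option maxHeartbeats 2000000 in
theorem main_bound (P A B d k : ℕ)
    (hP : P = 3 ^ k)
    (hA : 3*P = 2*A+1)
    (hq : 3*P*P = 2*B+1)
    (hA2 : A % 2 = 1) (hB2 : B % 2 = 1)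
    (hcard : Fintype.card K = 2*B+1)
    (hd : d = A + B) :
    ∀ a b : K, {x : K | (x + a) ^ d + x ^ d = b}.ncard ≤ 4 := by
  -- basic char-3 facts
  have h30 : (3:K) = 0 := by exact_mod_cast CharP.cast_eq_zero K 3
  have h2ne : (2:K) ≠ 0 := by
    intro h
    have h1 : (1:K) = 0 := by linear_combination h30 - h
    exact one_ne_zero h1
  have hm1ne1 : (-1:K) ≠ 1 := by
    intro h
    exact h2ne (by linear_combination -h)
  have hOddM : Odd (3*P) := ⟨A, by omega⟩
  have hOddB : Odd B := Nat.odd_iff.mpr hB2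
  have hBpos : 1 ≤ B := by omega
  have hdne : d ≠ 0 := by omega
  have hfa : ∀ x y : K, (x+y)^(3*P) = x^(3*P) + y^(3*P) := by
    intro x y
    have h1 : 3*P = 3^(k+1) := by rw [hP, pow_succ]; ring
    rw [h1]; exact frob3 (k+1) x y
  have hfneg : ∀ x : K, (-x)^(3*P) = -(x^(3*P)) := fun x => hOddM.neg_pow x
  have hfsub : ∀ x y : K, (x-y)^(3*P) = x^(3*P) - y^(3*P) := by
    intro x y
    rw [sub_eq_add_neg, hfa, hfneg, ← sub_eq_add_neg]
  have hcube : ∀ x : K, (x^(3*P))^(3*P) = x^3 := by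
    intro x
    rw [← pow_mul]
    have h1 : 3*P*(3*P) = (2*B+1)*3 := by
      have h2 : 3*P*(3*P) = 3*(3*P*P) := by ring
      rw [h2, hq]; ring
    rw [h1, pow_mul, pow_card' B hcard]
  -- unit square lemmas
  have hsq1 : ∀ u : K, u ≠ 0 → u^(3*P+1) = 1 → u^2 = 1 := by
    intro u hu h1
    have h2B : u^(2*B) = 1 := pow_2B B hcard hu
    have e1 : u^(P+1) = 1 := by
      have hh : u^((3*P+1)*P) = 1 := by rw [pow_mul, h1, one_pow]
      have hexp : (3*P+1)*P = 2*B + (P+1) := by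
        have h2 : (3*P+1)*P = 3*P*P + P := by ring
        omega
      rw [hexp, pow_add, h2B, one_mul] at hh
      exact hh
    have e2 : u^((P+1)*3) = 1 := by rw [pow_mul, e1, one_pow]
    have hexp2 : (P+1)*3 = (3*P+1) + 2 := by ring
    rw [hexp2, pow_add, h1, one_mul] at e2
    exact e2
  have hsq0 : ∀ u : K, u ≠ 0 → u^(2*A) = 1 → u^2 = 1 := by
    intro u hu h1
    have hP1 : u^P = u := by
      have hexp : 2*B+1 = (2*A)*P + P := by
        have h2 : (2*A)*P + P = (2*A+1)*P := by ring
        have h3 : (2*A+1)*P = 3*P*P := by rw [← hA]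
        omega
      have hh := pow_card' B hcard u
      rw [hexp, pow_add, pow_mul, h1, one_pow, one_mul] at hh
      exact hh
    have hu3 : u^3 = u := by
      have ha1 : u^(3*P) = (u^P)^3 := by rw [← pow_mul]; congr 1; ring
      have ha2 : u^(3*P) = u := by
        rw [hA, pow_succ, h1, one_mul]
      rw [hP1] at ha1
      rw [← ha1, ha2]
    have h4 : u * u^2 = u * 1 := by
      rw [mul_one, ← pow_succ']
      exact hu3
    exact mul_left_cancel₀ hu h4
  -- key identity : (x^d)^(3P+1) = x^B * x
  have e1 : d*(3*P+1) = B*(3*P+4)+1 := by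
    have h1 : 4*(A*A)+4*A+1 = 6*B+3 := by
      have h2 : 4*(A*A)+4*A+1 = (2*A+1)*(2*A+1) := by ring
      have h3 : (2*A+1)*(2*A+1) = 3*(3*P*P) := by rw [← hA]; ring
      rw [h2, h3, hq]; ring
    have h4 : d*(3*P+1) = (A+B)*(2*A+2) := by rw [hd, hA]
    have h5 : B*(3*P+4)+1 = B*(2*A+5)+1 := by rw [hA]
    rw [h4, h5]
    have h6 : (A+B)*(2*A+2) = 2*(A*A) + 2*A + 2*(A*B) + 2*B := by ring
    have h7 : B*(2*A+5)+1 = 2*(A*B) + 5*B + 1 := by ring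
    rw [h6, h7]
    omega
  have keyid : ∀ x : K, x ≠ 0 → (x^d)^(3*P+1) = x^B * x := by
    intro x hx
    have h1 : (x^d)^(3*P+1) = x^(B*(3*P+4)+1) := by
      rw [← pow_mul, e1]
    rw [h1, pow_succ, pow_mul]
    congr 1
    rcases eta_pm B hcard hx with h|h
    · rw [h, one_pow]
    · rw [h]
      exact Odd.neg_one_pow ⟨A+2, by omega⟩
  have etaF : ∀ x : K, x ≠ 0 → (x^d)^B = 1 := by
    intro x hx
    obtain ⟨C, hC⟩ : ∃ C, A + B = 2*C := ⟨(A+B)/2, by omega⟩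
    have h1 : d*B = (2*B)*C := by rw [hd, hC]; ring
    have h2 : (x^d)^B = (x^(2*B))^C := by rw [← pow_mul, ← pow_mul, h1]
    rw [h2, pow_2B B hcard hx, one_pow]
  have neg1B : (-1:K)^B = -1 := hOddB.neg_one_pow
  have hdeven : ∀ x : K, (-x)^d = x^d := by
    intro x
    obtain ⟨C, hC⟩ : ∃ C, d = 2*C := ⟨(A+B)/2, by omega⟩
    rw [hC]
    rw [pow_mul, pow_mul, neg_pow_two]
  -- main counting
  intro a b
  classical
  -- the five pieces
  set T0 : Set K := {x | ((x + a)^d + x^d = b) ∧ (x = 0 ∨ x = -a)} with hT0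
  set C11 : Set K := {x | ((x + a)^d + x^d = b) ∧ x ≠ 0 ∧ x + a ≠ 0 ∧ x^B = 1 ∧ (x+a)^B = 1} with hC11
  set C22 : Set K := {x | ((x + a)^d + x^d = b) ∧ x ≠ 0 ∧ x + a ≠ 0 ∧ x^B = -1 ∧ (x+a)^B = -1} with hC22
  set C12 : Set K := {x | ((x + a)^d + x^d = b) ∧ x ≠ 0 ∧ x + a ≠ 0 ∧ x^B = 1 ∧ (x+a)^B = -1} with hC12
  set C21 : Set K := {x | ((x + a)^d + x^d = b) ∧ x ≠ 0 ∧ x + a ≠ 0 ∧ x^B = -1 ∧ (x+a)^B = 1} with hC21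
  have cover : {x : K | (x + a)^d + x^d = b} ⊆ T0 ∪ C11 ∪ C22 ∪ C12 ∪ C21 := by
    intro x hx
    simp only [Set.mem_setOf_eq] at hx
    by_cases hx0 : x = 0
    · left; left; left; left; exact ⟨hx, Or.inl hx0⟩
    by_cases hxa : x + a = 0
    · left; left; left; left; exact ⟨hx, Or.inr (by linear_combination hxa)⟩
    rcases eta_pm B hcard hx0 with h1|h1 <;> rcases eta_pm B hcard hxa with h2|h2
    · left; left; left; right; exact ⟨hx, hx0, hxa, h1, h2⟩
    · left; right; exact ⟨hx, hx0, hxa, h1, h2⟩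
    · right; exact ⟨hx, hx0, hxa, h1, h2⟩
    · left; left; right; exact ⟨hx, hx0, hxa, h1, h2⟩
  have hcount : {x : K | (x + a)^d + x^d = b}.ncard ≤
      T0.ncard + C11.ncard + C22.ncard + C12.ncard + C21.ncard := by
    calc {x : K | (x + a)^d + x^d = b}.ncard
        ≤ (T0 ∪ C11 ∪ C22 ∪ C12 ∪ C21).ncard := Set.ncard_le_ncard cover (Set.toFinite _)
      _ ≤ (T0 ∪ C11 ∪ C22 ∪ C12).ncard + C21.ncard := Set.ncard_union_le _ _
      _ ≤ (T0 ∪ C11 ∪ C22).ncard + C12.ncard + C21.ncard := by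
          have := Set.ncard_union_le (T0 ∪ C11 ∪ C22) C12
          omega
      _ ≤ (T0 ∪ C11).ncard + C22.ncard + C12.ncard + C21.ncard := by
          have := Set.ncard_union_le (T0 ∪ C11) C22
          omega
      _ ≤ T0.ncard + C11.ncard + C22.ncard + C12.ncard + C21.ncard := by
          have := Set.ncard_union_le T0 C11
          omega
  have hT0sub : T0 ⊆ {(0:K), -a} := by
    intro x hx
    rcases hx.2 with h|h
    · exact Or.inl h
    · exact Or.inr h
  have hT0le : T0.ncard ≤ 2 := by
    calc T0.ncard ≤ ({(0:K), -a} : Set K).ncard := Set.ncard_le_ncard hT0sub (Set.toFinite _)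
      _ ≤ 2 := by
          have h1 := Set.ncard_insert_le (0:K) ({-a} : Set K)
          simpa [Set.ncard_singleton] using h1
  have hm1ne0 : (-1:K) ≠ 0 := by
    intro h
    exact one_ne_zero (by linear_combination -h)
  -- pack of basic facts for nontrivial solutions
  have pack : ∀ x : K, ((x + a)^d + x^d = b) → x ≠ 0 → x + a ≠ 0 →
      ((x+a)^d = b - x^d) ∧ (x^d ≠ 0) ∧ ((x+a)^d ≠ 0) ∧
      ((x^d)^(3*P)*(x^d) = x^B * x) ∧ (((x+a)^d)^(3*P)*((x+a)^d) = (x+a)^B * (x+a)) ∧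
      ((x^d)^B = 1) ∧ (((x+a)^d)^B = 1) := by
    intro x hsol hx0 hxa
    refine ⟨by linear_combination hsol, pow_ne_zero_iff hdne |>.mpr hx0,
      pow_ne_zero_iff hdne |>.mpr hxa, ?_, ?_, etaF x hx0, etaF _ hxa⟩
    · have h := keyid x hx0; rwa [pow_succ] at h
    · have h := keyid _ hxa; rwa [pow_succ] at h
  -- psi relation
  have psiRel : ∀ x : K, ((x + a)^d + x^d = b) → x ≠ 0 → x + a ≠ 0 →
      b^(3*P)*(x^d) + b*((x^d)^(3*P)) = b^(3*P)*b + (x^B)*x - ((x+a)^B)*(x+a) := by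
    intro x hsol hx0 hxa
    obtain ⟨hz, hy0, hz0, hy1, hz1, hey, hez⟩ := pack x hsol hx0 hxa
    rw [hz, hfsub] at hz1
    linear_combination hy1 - hz1
  -- t relation
  have tRel : ∀ x : K, ((x + a)^d + x^d = b) → x ≠ 0 → x + a ≠ 0 →
      (x^d + b)^(3*P)*(x^d + b) + (x^B)*x + ((x+a)^B)*(x+a) + b^(3*P)*b = 0 := by
    intro x hsol hx0 hxa
    obtain ⟨hz, hy0, hz0, hy1, hz1, hey, hez⟩ := pack x hsol hx0 hxa
    rw [hz, hfsub] at hz1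
    rw [hfa]
    linear_combination 2*hy1 - hz1 + (b^(3*P)*b + x^B*x)*h30
  by_cases hb : b = 0
  · -- b = 0 : all classes empty
    have hkill : ∀ x : K, ((x + a)^d + x^d = b) → x ≠ 0 → x + a ≠ 0 → False := by
      intro x hsol hx0 hxa
      obtain ⟨hz, hy0, hz0, hy1, hz1, hey, hez⟩ := pack x hsol hx0 hxa
      have h1 : ((x+a)^d)^B = (-(x^d))^B := by rw [hz, hb, zero_sub]
      have h2 : (-(x^d))^B = -1 := by
        rw [← neg_one_mul, mul_pow, neg1B, hey, mul_one]
      rw [hez, h2] at h1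
      exact hm1ne1 h1.symm
    have e11 : C11 = ∅ := Set.eq_empty_iff_forall_notMem.mpr
      (fun x hx => hkill x hx.1 hx.2.1 hx.2.2.1)
    have e22 : C22 = ∅ := Set.eq_empty_iff_forall_notMem.mpr
      (fun x hx => hkill x hx.1 hx.2.1 hx.2.2.1)
    have e12 : C12 = ∅ := Set.eq_empty_iff_forall_notMem.mpr
      (fun x hx => hkill x hx.1 hx.2.1 hx.2.2.1)
    have e21 : C21 = ∅ := Set.eq_empty_iff_forall_notMem.mpr
      (fun x hx => hkill x hx.1 hx.2.1 hx.2.2.1)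
    rw [e11, e22, e12, e21, Set.ncard_empty] at hcount
    omega
  -- b ≠ 0 from now on
  · have hNb0 : b^(3*P)*b ≠ 0 := mul_ne_zero (pow_ne_zero _ hb) hb
    have psi_inj : ∀ w : K, b^(3*P)*w + b*(w^(3*P)) = 0 → w = 0 := by
      intro w hw
      by_contra hwne
      set v := w * b⁻¹ with hv
      have hvne : v ≠ 0 := mul_ne_zero hwne (inv_ne_zero hb)
      have hvM : v^(3*P) = -v := by
        rw [hv, mul_pow, inv_pow]
        field_simp
        linear_combination hw
      have hv3 : v^3 = v := by
        have h1 := hcube v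
        rw [hvM, hfneg, hvM, neg_neg] at h1
        exact h1.symm
      have hv2 : v*v = 1 := by
        have h1 : v * (v*v) = v * 1 := by rw [mul_one]; linear_combination hv3
        exact mul_left_cancel₀ hvne h1
      have hvMv : v^(3*P) = v := by
        rcases mul_self_eq_one_iff.mp hv2 with h|h
        · rw [h, one_pow]
        · rw [h]; exact hOddM.neg_one_pow
      rw [hvMv] at hvM
      apply hvne
      linear_combination (-(1:K))*hvM + v*h30
    by_cases hT : a^d = b
    · -- trivial case : F(a) = b, classes are all empty
      have ha0 : a ≠ 0 := by
        intro h
        rw [h, zero_pow hdne] at hT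
        exact hb hT.symm
      have hNb : b^(3*P)*b = a^B * a := by
        have h1 := keyid a ha0
        rw [hT, pow_succ] at h1
        exact h1
      have hbB : b^B = 1 := by
        have h1 := etaF a ha0
        rwa [hT] at h1
      have hkill : ∀ x : K, ((x + a)^d + x^d = b) → x ≠ 0 → x + a ≠ 0 → False := by
        intro x hsol hx0 hxa
        obtain ⟨hz, hy0, hz0, hy1, hz1, hey, hez⟩ := pack x hsol hx0 hxa
        have hpsi := psiRel x hsol hx0 hxa
        have htr := tRel x hsol hx0 hxa
        rcases eta_pm B hcard hx0 with hs1|hs1 <;>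
          rcases eta_pm B hcard hxa with hs2|hs2 <;>
            rcases eta_pm B hcard ha0 with hsa|hsa
        -- (1,1,a^B=1)
        · rw [hs1, hs2] at hpsi
          rw [hsa] at hNb
          have h1 : b^(3*P)*(x^d) + b*((x^d)^(3*P)) = 0 := by
            linear_combination hpsi + hNb
          exact hy0 (psi_inj _ h1)        -- (1,1,a^B=-1)
        · rw [hs1, hs2] at hpsi
          rw [hsa] at hNb
          have h1 : b^(3*P)*((x^d) - b) + b*(((x^d) - b)^(3*P)) = 0 := by
            rw [hfsub]
            linear_combination hpsi - hNb
          have h2 := psi_inj _ h1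
          have h3 : x^d = b := by linear_combination h2
          apply hz0
          rw [hz, h3, sub_self]        -- (1,-1,a^B=1): t = 0
        · rw [hs1, hs2] at htr
          rw [hsa] at hNb
          have h1 : (x^d + b)^(3*P)*(x^d + b) = 0 := by
            linear_combination htr - hNb
          have h2 : x^d + b = 0 := by
            rcases mul_eq_zero.mp h1 with h|h
            · exact pow_eq_zero_iff (by omega : 3*P ≠ 0) |>.mp h
            · exact h
          have h3 : x^d = -b := by linear_combination h2
          rw [h3, ← neg_one_mul, mul_pow, neg1B, hbB, mul_one] at hey
          exact hm1ne1 hey        -- (1,-1,a^B=-1): t = ±b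
        · rw [hs1, hs2] at htr
          rw [hsa] at hNb
          have h1 : (x^d+b)^(3*P)*(x^d+b) = b^(3*P)*b := by
            linear_combination htr - 2*hNb + a*h30
          have htne : x^d + b ≠ 0 := by
            intro h
            apply hNb0
            rw [← h1, h]
            ring
          have hu2 : ((x^d+b)*b⁻¹)^2 = 1 := by
            apply hsq1 _ (mul_ne_zero htne (inv_ne_zero hb))
            rw [mul_pow, inv_pow, pow_succ, pow_succ, h1]
            exact mul_inv_cancel₀ hNb0
          have h3 : (x^d+b)^2 = b^2 := by
            have h4 : ((x^d+b)*b⁻¹)^2 * b^2 = 1 * b^2 := by rw [hu2]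
            field_simp at h4
            linear_combination h4
          have h2 : ((x^d+b) - b)*((x^d+b) + b) = 0 := by linear_combination h3
          rcases mul_eq_zero.mp h2 with h|h
          · apply hy0
            linear_combination h
          · apply hz0
            have h5 : x^d = b := by linear_combination h - b*h30
            rw [hz, h5, sub_self]        -- (-1,1,a^B=1): t = ±b
        · rw [hs1, hs2] at htr
          rw [hsa] at hNb
          have h1 : (x^d+b)^(3*P)*(x^d+b) = b^(3*P)*b := by
            linear_combination htr - 2*hNb - a*h30
          have htne : x^d + b ≠ 0 := by
            intro h
            apply hNb0
            rw [← h1, h]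
            ring
          have hu2 : ((x^d+b)*b⁻¹)^2 = 1 := by
            apply hsq1 _ (mul_ne_zero htne (inv_ne_zero hb))
            rw [mul_pow, inv_pow, pow_succ, pow_succ, h1]
            exact mul_inv_cancel₀ hNb0
          have h3 : (x^d+b)^2 = b^2 := by
            have h4 : ((x^d+b)*b⁻¹)^2 * b^2 = 1 * b^2 := by rw [hu2]
            field_simp at h4
            linear_combination h4
          have h2 : ((x^d+b) - b)*((x^d+b) + b) = 0 := by linear_combination h3
          rcases mul_eq_zero.mp h2 with h|h
          · apply hy0
            linear_combination h
          · apply hz0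
            have h5 : x^d = b := by linear_combination h - b*h30
            rw [hz, h5, sub_self]        -- (-1,1,a^B=-1): t = 0
        · rw [hs1, hs2] at htr
          rw [hsa] at hNb
          have h1 : (x^d + b)^(3*P)*(x^d + b) = 0 := by
            linear_combination htr - hNb
          have h2 : x^d + b = 0 := by
            rcases mul_eq_zero.mp h1 with h|h
            · exact pow_eq_zero_iff (by omega : 3*P ≠ 0) |>.mp h
            · exact h
          have h3 : x^d = -b := by linear_combination h2
          rw [h3, ← neg_one_mul, mul_pow, neg1B, hbB, mul_one] at hey
          exact hm1ne1 hey
        -- (-1,-1,a^B=1)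
        · rw [hs1, hs2] at hpsi
          rw [hsa] at hNb
          have h1 : b^(3*P)*((x^d) - b) + b*(((x^d) - b)^(3*P)) = 0 := by
            rw [hfsub]
            linear_combination hpsi - hNb
          have h2 := psi_inj _ h1
          have h3 : x^d = b := by linear_combination h2
          apply hz0
          rw [hz, h3, sub_self]
        -- (-1,-1,a^B=-1)
        · rw [hs1, hs2] at hpsi
          rw [hsa] at hNb
          have h1 : b^(3*P)*(x^d) + b*((x^d)^(3*P)) = 0 := by
            linear_combination hpsi + hNb
          exact hy0 (psi_inj _ h1)
      have e11 : C11 = ∅ := Set.eq_empty_iff_forall_notMem.mpr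
        (fun x hx => hkill x hx.1 hx.2.1 hx.2.2.1)
      have e22 : C22 = ∅ := Set.eq_empty_iff_forall_notMem.mpr
        (fun x hx => hkill x hx.1 hx.2.1 hx.2.2.1)
      have e12 : C12 = ∅ := Set.eq_empty_iff_forall_notMem.mpr
        (fun x hx => hkill x hx.1 hx.2.1 hx.2.2.1)
      have e21 : C21 = ∅ := Set.eq_empty_iff_forall_notMem.mpr
        (fun x hx => hkill x hx.1 hx.2.1 hx.2.2.1)
      rw [e11, e22, e12, e21, Set.ncard_empty] at hcount
      omega
    -- now b ≠ 0, a^d ≠ b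
    · have hT0e : T0 = ∅ := by
        apply Set.eq_empty_iff_forall_notMem.mpr
        rintro x ⟨hsol, h0|h0⟩
        · apply hT
          rw [h0, zero_add, zero_pow hdne, add_zero] at hsol
          exact hsol
        · apply hT
          rw [h0] at hsol
          have h1 : -a + a = 0 := by ring
          rw [h1, zero_pow hdne, zero_add, hdeven] at hsol
          exact hsol
      -- same-sign classes have at most one element
      have hC11le : C11.ncard ≤ 1 := by
        rcases C11.eq_empty_or_nonempty with he|⟨x0, hx0⟩
        · rw [he, Set.ncard_empty]; omega
        · obtain ⟨hsol0, hx00, hxa0, hs10, hs20⟩ := hx0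
          have hsub : C11 ⊆ {x0} := by
            intro x hx
            obtain ⟨hsol, hx0', hxa, hs1, hs2⟩ := hx
            obtain ⟨hz, hy0, hz0, hy1, hz1, hey, hez⟩ := pack x hsol hx0' hxa
            obtain ⟨hz', hy0', hz0', hy1', hz1', hey', hez'⟩ := pack x0 hsol0 hx00 hxa0
            have hp := psiRel x hsol hx0' hxa
            have hp0 := psiRel x0 hsol0 hx00 hxa0
            rw [hs1, hs2] at hp
            rw [hs10, hs20] at hp0
            have h1 : b^(3*P)*((x^d) - (x0^d)) + b*(((x^d) - (x0^d))^(3*P)) = 0 := by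
              rw [hfsub]
              linear_combination hp - hp0
            have h2 := psi_inj _ h1
            have h3 : x^d = x0^d := by linear_combination h2
            have h4 : x = (x^d)^(3*P)*(x^d) := by rw [hy1, hs1, one_mul]
            have h5 : x0 = (x0^d)^(3*P)*(x0^d) := by rw [hy1', hs10, one_mul]
            simp only [Set.mem_singleton_iff]
            rw [h4, h5, h3]
          calc C11.ncard ≤ ({x0} : Set K).ncard := Set.ncard_le_ncard hsub (Set.toFinite _)
            _ = 1 := Set.ncard_singleton x0
      have hC22le : C22.ncard ≤ 1 := by
        rcases C22.eq_empty_or_nonempty with he|⟨x0, hx0⟩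
        · rw [he, Set.ncard_empty]; omega
        · obtain ⟨hsol0, hx00, hxa0, hs10, hs20⟩ := hx0
          have hsub : C22 ⊆ {x0} := by
            intro x hx
            obtain ⟨hsol, hx0', hxa, hs1, hs2⟩ := hx
            obtain ⟨hz, hy0, hz0, hy1, hz1, hey, hez⟩ := pack x hsol hx0' hxa
            obtain ⟨hz', hy0', hz0', hy1', hz1', hey', hez'⟩ := pack x0 hsol0 hx00 hxa0
            have hp := psiRel x hsol hx0' hxa
            have hp0 := psiRel x0 hsol0 hx00 hxa0
            rw [hs1, hs2] at hp
            rw [hs10, hs20] at hp0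
            have h1 : b^(3*P)*((x^d) - (x0^d)) + b*(((x^d) - (x0^d))^(3*P)) = 0 := by
              rw [hfsub]
              linear_combination hp - hp0
            have h2 := psi_inj _ h1
            have h3 : x^d = x0^d := by linear_combination h2
            have h4 : x = -((x^d)^(3*P)*(x^d)) := by rw [hy1, hs1]; ring
            have h5 : x0 = -((x0^d)^(3*P)*(x0^d)) := by rw [hy1', hs10]; ring
            simp only [Set.mem_singleton_iff]
            rw [h4, h5, h3]
          calc C22.ncard ≤ ({x0} : Set K).ncard := Set.ncard_le_ncard hsub (Set.toFinite _)
            _ = 1 := Set.ncard_singleton x0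
      -- mixed classes: at most two elements each
      have hpairle : ∀ y1 y2 : K, ({y1, y2} : Set K).ncard ≤ 2 := by
        intro y1 y2
        have h1 := Set.ncard_insert_le y1 ({y2} : Set K)
        simpa [Set.ncard_singleton] using h1
      have hC12le : C12.ncard ≤ 2 := by
        rcases C12.eq_empty_or_nonempty with he|⟨x0, hx0⟩
        · rw [he, Set.ncard_empty]; omega
        · obtain ⟨hsol0, hx00, hxa0, hs10, hs20⟩ := hx0
          have htr0 := tRel x0 hsol0 hx00 hxa0
          rw [hs10, hs20] at htr0
          have hsub : C12 ⊆ {((x0^d+b)-b)^(3*P)*((x0^d+b)-b), (-(x0^d+b)-b)^(3*P)*(-(x0^d+b)-b)} := by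
            intro x hx
            obtain ⟨hsol, hx0', hxa, hs1, hs2⟩ := hx
            obtain ⟨hz, hy0, hz0, hy1, hz1, hey, hez⟩ := pack x hsol hx0' hxa
            have htr := tRel x hsol hx0' hxa
            rw [hs1, hs2] at htr
            have hNN : (x^d+b)^(3*P)*(x^d+b) = (x0^d+b)^(3*P)*(x0^d+b) := by
              linear_combination htr - htr0
            have hxy : ∀ t : K, x^d + b = t → x = (t-b)^(3*P)*(t-b) := by
              intro t ht
              have h5 : t - b = x^d := by rw [← ht]; ring
              rw [h5, hy1, hs1, one_mul]
            have hmem : x^d + b = (x0^d+b) ∨ x^d + b = -(x0^d+b) := by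
              by_cases ht0z : (x0^d+b) = 0
              · left
                rw [ht0z] at hNN ⊢
                rcases mul_eq_zero.mp (by rw [hNN]; ring : (x^d+b)^(3*P)*(x^d+b) = 0) with h|h
                · exact pow_eq_zero_iff (by omega : 3*P ≠ 0) |>.mp h
                · exact h
              · have htne : x^d + b ≠ 0 := by
                  intro h
                  apply ht0z
                  rcases mul_eq_zero.mp (by rw [← hNN, h]; ring : (x0^d+b)^(3*P)*(x0^d+b) = 0) with h'|h'
                  · exact pow_eq_zero_iff (by omega : 3*P ≠ 0) |>.mp h'
                  · exact h'
                have hu2 : ((x^d+b)*(x0^d+b)⁻¹)^2 = 1 := by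
                  apply hsq1 _ (mul_ne_zero htne (inv_ne_zero ht0z))
                  rw [mul_pow, inv_pow, pow_succ, pow_succ, hNN]
                  exact mul_inv_cancel₀ (mul_ne_zero (pow_ne_zero _ ht0z) ht0z)
                have h3 : (x^d+b)^2 = (x0^d+b)^2 := by
                  have h4 : ((x^d+b)*(x0^d+b)⁻¹)^2 * (x0^d+b)^2 = 1 * (x0^d+b)^2 := by rw [hu2]
                  field_simp at h4
                  linear_combination h4
                have h7 : ((x^d+b) - (x0^d+b))*((x^d+b) + (x0^d+b)) = 0 := by linear_combination h3
                rcases mul_eq_zero.mp h7 with h|h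
                · left; linear_combination h
                · right; linear_combination h
            rcases hmem with h|h
            · exact Or.inl (hxy _ h)
            · exact Or.inr (hxy _ h)
          calc C12.ncard ≤ _ := Set.ncard_le_ncard hsub (Set.toFinite _)
            _ ≤ 2 := hpairle _ _
      have hC21le : C21.ncard ≤ 2 := by
        rcases C21.eq_empty_or_nonempty with he|⟨x0, hx0⟩
        · rw [he, Set.ncard_empty]; omega
        · obtain ⟨hsol0, hx00, hxa0, hs10, hs20⟩ := hx0
          have htr0 := tRel x0 hsol0 hx00 hxa0
          rw [hs10, hs20] at htr0
          have hsub : C21 ⊆ {-(((x0^d+b)-b)^(3*P)*((x0^d+b)-b)), -((-(x0^d+b)-b)^(3*P)*(-(x0^d+b)-b))} := by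
            intro x hx
            obtain ⟨hsol, hx0', hxa, hs1, hs2⟩ := hx
            obtain ⟨hz, hy0, hz0, hy1, hz1, hey, hez⟩ := pack x hsol hx0' hxa
            have htr := tRel x hsol hx0' hxa
            rw [hs1, hs2] at htr
            have hNN : (x^d+b)^(3*P)*(x^d+b) = (x0^d+b)^(3*P)*(x0^d+b) := by
              linear_combination htr - htr0
            have hxy : ∀ t : K, x^d + b = t → x = -((t-b)^(3*P)*(t-b)) := by
              intro t ht
              have h5 : t - b = x^d := by rw [← ht]; ring
              rw [h5, hy1, hs1]
              ring
            have hmem : x^d + b = (x0^d+b) ∨ x^d + b = -(x0^d+b) := by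
              by_cases ht0z : (x0^d+b) = 0
              · left
                rw [ht0z] at hNN ⊢
                rcases mul_eq_zero.mp (by rw [hNN]; ring : (x^d+b)^(3*P)*(x^d+b) = 0) with h|h
                · exact pow_eq_zero_iff (by omega : 3*P ≠ 0) |>.mp h
                · exact h
              · have htne : x^d + b ≠ 0 := by
                  intro h
                  apply ht0z
                  rcases mul_eq_zero.mp (by rw [← hNN, h]; ring : (x0^d+b)^(3*P)*(x0^d+b) = 0) with h'|h'
                  · exact pow_eq_zero_iff (by omega : 3*P ≠ 0) |>.mp h'
                  · exact h'
                have hu2 : ((x^d+b)*(x0^d+b)⁻¹)^2 = 1 := by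
                  apply hsq1 _ (mul_ne_zero htne (inv_ne_zero ht0z))
                  rw [mul_pow, inv_pow, pow_succ, pow_succ, hNN]
                  exact mul_inv_cancel₀ (mul_ne_zero (pow_ne_zero _ ht0z) ht0z)
                have h3 : (x^d+b)^2 = (x0^d+b)^2 := by
                  have h4 : ((x^d+b)*(x0^d+b)⁻¹)^2 * (x0^d+b)^2 = 1 * (x0^d+b)^2 := by rw [hu2]
                  field_simp at h4
                  linear_combination h4
                have h7 : ((x^d+b) - (x0^d+b))*((x^d+b) + (x0^d+b)) = 0 := by linear_combination h3
                rcases mul_eq_zero.mp h7 with h|h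
                · left; linear_combination h
                · right; linear_combination h
            rcases hmem with h|h
            · exact Or.inl (hxy _ h)
            · exact Or.inr (hxy _ h)
          calc C21.ncard ≤ _ := Set.ncard_le_ncard hsub (Set.toFinite _)
            _ ≤ 2 := hpairle _ _
      -- exclusivity of the two mixed classes
      have hexcl : C12 = ∅ ∨ C21 = ∅ := by
        by_contra hcon
        push_neg at hcon
        obtain ⟨h12, h21⟩ := hcon
        obtain ⟨x1, hx1⟩ := h12
        obtain ⟨x2, hx2⟩ := h21
        obtain ⟨hsol1, hx10, hxa1, hs11, hs21⟩ := hx1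
        obtain ⟨hsol2, hx20, hxa2, hs12, hs22⟩ := hx2
        obtain ⟨hzz1, hy01, hz01, hy11, hz11, hey1, hez1⟩ := pack x1 hsol1 hx10 hxa1
        obtain ⟨hzz2, hy02, hz02, hy12, hz12, hey2, hez2⟩ := pack x2 hsol2 hx20 hxa2
        have htr1 := tRel x1 hsol1 hx10 hxa1
        have htr2 := tRel x2 hsol2 hx20 hxa2
        rw [hs11, hs21] at htr1
        rw [hs12, hs22] at htr2
        have hA1 : (x1^d+b)^(3*P)*(x1^d+b) = a - b^(3*P)*b := by linear_combination htr1
        have hA2 : (x2^d+b)^(3*P)*(x2^d+b) = -a - b^(3*P)*b := by linear_combination htr2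
        have he1a : ((x1^d+b) - b)^B = 1 := by
          have h5 : (x1^d+b) - b = x1^d := by ring
          rw [h5]; exact hey1
        have he1b : ((x1^d+b) + b)^B = -1 := by
          have h5 : (x1^d+b) + b = -(b - x1^d) := by linear_combination b*h30
          rw [h5, ← neg_one_mul, mul_pow, neg1B, ← hzz1, hez1, mul_one]
        have he2a : ((x2^d+b) - b)^B = 1 := by
          have h5 : (x2^d+b) - b = x2^d := by ring
          rw [h5]; exact hey2
        have he2b : ((x2^d+b) + b)^B = -1 := by
          have h5 : (x2^d+b) + b = -(b - x2^d) := by linear_combination b*h30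
          rw [h5, ← neg_one_mul, mul_pow, neg1B, ← hzz2, hez2, mul_one]
        set c1 : K := (x1^d+b) * b⁻¹ with hc1
        set c2 : K := (x2^d+b) * b⁻¹ with hc2
        have hexpand : ∀ t : K, (t*b⁻¹)^(3*P)*(t*b⁻¹) = (t^(3*P)*t)*(b^(3*P)*b)⁻¹ := by
          intro t
          rw [mul_pow, inv_pow, mul_inv]
          ring
        have hsum : c1^(3*P)*c1 + c2^(3*P)*c2 = 1 := by
          rw [hc1, hc2, hexpand, hexpand, hA1, hA2, ← add_mul]
          have h6 : (a - b^(3*P)*b) + (-a - b^(3*P)*b) = b^(3*P)*b := by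
            linear_combination (-(b^(3*P)*b))*h30
          rw [h6]
          exact mul_inv_cancel₀ hNb0
        have hceta : ∀ t c : K, c = t*b⁻¹ → (t-b)^B = 1 → (t+b)^B = -1 → (c^2-1)^B = -1 := by
          intro t c hc hta htb
          have hfact : c^2 - 1 = ((t-b)*(t+b))*(b⁻¹*b⁻¹) := by
            rw [hc]
            field_simp
            ring
          rw [hfact, mul_pow, mul_pow, hta, htb, one_mul]
          have hbb : (b⁻¹*b⁻¹)^B = 1 := by
            rcases eta_pm B hcard (inv_ne_zero hb) with h|h
            · rw [mul_pow, h, mul_one]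
            · rw [mul_pow, h]; ring
          rw [hbb, mul_one]
        have hce1 : (c1^2-1)^B = -1 := hceta _ _ hc1 he1a he1b
        have hce2 : (c2^2-1)^B = -1 := hceta _ _ hc2 he2a he2b
        by_cases hcz1 : c1 = 0
        · rw [hcz1, zero_pow (by omega : 3*P ≠ 0), zero_mul, zero_add] at hsum
          have hc20 : c2 ≠ 0 := by
            intro h
            rw [h, zero_pow (by omega : 3*P ≠ 0), zero_mul] at hsum
            exact zero_ne_one hsum
          have h1 : c2^(3*P+1) = 1 := by rw [pow_succ]; exact hsum
          have h2 := hsq1 c2 hc20 h1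
          have h3 : c2^2 - 1 = 0 := by rw [h2, sub_self]
          rw [h3, zero_pow (by omega : B ≠ 0)] at hce2
          exact hm1ne0 hce2.symm
        by_cases hcz2 : c2 = 0
        · rw [hcz2, zero_pow (by omega : 3*P ≠ 0), zero_mul, add_zero] at hsum
          have h1 : c1^(3*P+1) = 1 := by rw [pow_succ]; exact hsum
          have h2 := hsq1 c1 hcz1 h1
          have h3 : c1^2 - 1 = 0 := by rw [h2, sub_self]
          rw [h3, zero_pow (by omega : B ≠ 0)] at hce1
          exact hm1ne0 hce1.symm
        -- both nonzero : the core character contradiction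
        set u : K := c1^(3*P)*c1 with hu
        have hu' : c2^(3*P)*c2 = 1 - u := by linear_combination hsum
        have hune : u ≠ 0 := mul_ne_zero (pow_ne_zero _ hcz1) hcz1
        have hu'ne : (1:K) - u ≠ 0 := by
          rw [← hu']
          exact mul_ne_zero (pow_ne_zero _ hcz2) hcz2
        have hupow : u = c1^(3*P+1) := by rw [hu, pow_succ]
        have hu'pow : (1:K) - u = c2^(3*P+1) := by rw [← hu', pow_succ]
        have huM : u^(3*P) = c1^2 * u := by
          rw [hupow, ← pow_mul]
          have h2 : (3*P+1)*(3*P) = 3*P*(3*P) + 3*P := by ring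
          rw [h2, pow_add, pow_mul, hcube, pow_succ]
          ring
        have hu'M : ((1:K)-u)^(3*P) = c2^2 * (1-u) := by
          rw [hu'pow, ← pow_mul]
          have h2 : (3*P+1)*(3*P) = 3*P*(3*P) + 3*P := by ring
          rw [h2, pow_add, pow_mul, hcube, pow_succ]
          ring
        have hfu : ((1:K)-u)^(3*P) = 1 - u^(3*P) := by rw [hfsub, one_pow]
        set w : K := u^(3*P) - u with hw
        have hw1 : (c1^2 - 1)*u = w := by rw [hw, huM]; ring
        have hw2 : (c2^2 - 1)*(1-u) = -w := by
          have h1 : c2^2*(1-u) = 1 - u^(3*P) := by rw [← hu'M, hfu]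
          rw [hw]
          linear_combination h1
        by_cases hwz : w = 0
        · have h1 : c1^2 - 1 = 0 := by
            rcases mul_eq_zero.mp (hw1.trans hwz) with h|h
            · exact h
            · exact absurd h hune
          rw [h1, zero_pow (by omega : B ≠ 0)] at hce1
          exact hm1ne0 hce1.symm
        · have hc2f : c1^2 - 1 = w * u⁻¹ := by
            field_simp
            linear_combination hw1
          have hc2f' : c2^2 - 1 = (-w) * ((1:K)-u)⁻¹ := by
            field_simp
            linear_combination hw2
          have huB : u^B = 1 := by
            have h1 : u^B = (c1^B)^(3*P+1) := by
              rw [hupow, ← pow_mul, ← pow_mul, mul_comm]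
            rcases eta_pm B hcard hcz1 with h|h
            · rw [h1, h, one_pow]
            · rw [h1, h]
              exact Even.neg_one_pow ⟨A+1, by omega⟩
          have hu'B : ((1:K)-u)^B = 1 := by
            have h1 : ((1:K)-u)^B = (c2^B)^(3*P+1) := by
              rw [hu'pow, ← pow_mul, ← pow_mul, mul_comm]
            rcases eta_pm B hcard hcz2 with h|h
            · rw [h1, h, one_pow]
            · rw [h1, h]
              exact Even.neg_one_pow ⟨A+1, by omega⟩
          have hprod : ((c1^2-1)^B) * ((c2^2-1)^B) = -1 := by
            rw [hc2f, hc2f', mul_pow, mul_pow]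
            rw [(hOddB.neg_pow w : (-w)^B = -(w^B))]
            have hwB : (w^B)*(w^B) = 1 := by
              rw [← pow_add]
              have h2 : B + B = 2*B := by ring
              rw [h2]
              exact pow_2B B hcard hwz
            have hiu : (u⁻¹)^B = 1 := by rw [inv_pow, huB, inv_one]
            have hiu' : (((1:K)-u)⁻¹)^B = 1 := by rw [inv_pow, hu'B, inv_one]
            rw [hiu, hiu', mul_one, mul_one]
            linear_combination (-(1:K))*hwB
          rw [hce1, hce2] at hprod
          exact hm1ne1 (by linear_combination -hprod)
      -- final count
      have hfin : C12.ncard + C21.ncard ≤ 2 := by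
        rcases hexcl with h|h
        · rw [h, Set.ncard_empty]
          omega
        · rw [h, Set.ncard_empty]
          omega
      rw [hT0e, Set.ncard_empty] at hcount
      omega

end Main

theorem stmt_3 (n : ℕ) (hn : 0 < n) (hcond : n % 4 = 1)
    (d : ℕ) (hd : d = (3 ^ ((n + 1) / 2) - 1) / 2 + (3 ^ n - 1) / 2) :
    ∀ a b : GaloisField 3 n,
      {x : GaloisField 3 n | (x + a) ^ d + x ^ d = b}.ncard ≤ 4 := by
  haveI : Fintype (GaloisField 3 n) := Fintype.ofFinite _
  set m := (n+1)/2 with hm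
  have hm2 : 2*m = n+1 := by omega
  have hm1 : 1 ≤ m := by omega
  set k := m - 1 with hkdef
  have hk : m = k + 1 := by omega
  set P := 3^k with hPdef
  set A := (3^m - 1)/2 with hA0
  set B := (3^n - 1)/2 with hB0
  have h3modd : ∀ j : ℕ, (3:ℕ)^j % 2 = 1 := by
    intro j; rw [Nat.pow_mod]; simp
  have h3P : 3*P = 3^m := by rw [hPdef, hk, pow_succ]; ring
  have hA : 3*P = 2*A+1 := by
    have h1 := h3modd m
    have h2 : 1 ≤ 3^m := Nat.one_le_pow _ _ (by norm_num)
    omega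
  have hqn : 3*P*P = 3^n := by
    rw [hPdef, ← pow_succ', ← pow_add]
    congr 1
    omega
  have hq : 3*P*P = 2*B+1 := by
    have h1 := h3modd n
    have h2 : 1 ≤ 3^n := Nat.one_le_pow _ _ (by norm_num)
    omega
  have hmod4 : ∀ j : ℕ, j % 2 = 1 → (3:ℕ)^j % 4 = 3 := by
    intro j hj
    obtain ⟨i, hi⟩ : ∃ i, j = 2*i+1 := ⟨j/2, by omega⟩
    subst hi
    have h9 : (9:ℕ)^i % 4 = 1 := by rw [Nat.pow_mod]; simp
    have h1 : (3:ℕ)^(2*i+1) = 3 * 9^i := by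
      rw [pow_succ']
      congr 1
      rw [pow_mul]
      norm_num
    rw [h1, Nat.mul_mod, h9]
  have hA2 : A % 2 = 1 := by
    have h4 : (3:ℕ)^m % 4 = 3 := hmod4 m (by omega)
    have h1 : 1 ≤ 3^m := Nat.one_le_pow _ _ (by norm_num)
    omega
  have hB2 : B % 2 = 1 := by
    have h4 : (3:ℕ)^n % 4 = 3 := hmod4 n (by omega)
    have h1 : 1 ≤ 3^n := Nat.one_le_pow _ _ (by norm_num)
    omega
  have hcard : Fintype.card (GaloisField 3 n) = 2*B+1 := by
    rw [← Nat.card_eq_fintype_card, GaloisField.card 3 n (by omega)]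
    have h1 := h3modd n
    have h2 : 1 ≤ 3^n := Nat.one_le_pow _ _ (by norm_num)
    omega
  exact main_bound P A B d k hPdef hA hq hA2 hB2 hcard hd
end

section
/- Let n be a positive integer with n ≡ 1 (mod 4) and let d = (3^(n+1) - 1)/8. Then the power function F(x) = x^d on GF(3^n) has (-1)-differential uniformity at most 2; that is, for all a, b ∈ GF(3^n), the number of x ∈ GF(3^n) satisfying (x+a)^d + x^d = b is at most 2. -/
section Core

variable {F : Type*} [Field F] {m : ℕ}

private lemma one_ne_negone' (h3 : (3 : F) = 0) : (1 : F) ≠ -1 := by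
  intro h
  have : (1 : F) = 0 := by linear_combination h3 - h
  exact one_ne_zero this

private lemma sq_ne_negone' (h3 : (3 : F) = 0) (hodd : Odd m)
    (hpow : ∀ x : F, x ≠ 0 → x ^ (2 * m) = 1) (c : F) : c ^ 2 ≠ -1 := by
  intro hc
  have hc0 : c ≠ 0 := by
    intro h
    rw [h] at hc
    have h0 : (0 : F) = -1 := by simpa using hc
    have h1 : (1 : F) = 0 := by linear_combination h0
    exact one_ne_zero h1
  have h1 : (c ^ 2) ^ m = 1 := by
    rw [← pow_mul]; exact hpow c hc0
  rw [hc, hodd.neg_one_pow] at h1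
  exact one_ne_negone' h3 h1.symm

private lemma dich' (hpow : ∀ x : F, x ≠ 0 → x ^ (2 * m) = 1) (x : F) (hx : x ≠ 0) :
    x ^ m = 1 ∨ x ^ m = -1 := by
  have h : x ^ (m * 2) = 1 := by rw [mul_comm]; exact hpow x hx
  have h2 : (x ^ m - 1) * (x ^ m + 1) = 0 := by
    have h' : (x ^ m) ^ 2 = 1 := by rw [← pow_mul]; exact h
    linear_combination h'
  rcases mul_eq_zero.mp h2 with h' | h'
  · left; linear_combination h'
  · right; linear_combination h'

private lemma Lzero' (h3 : (3 : F) = 0) (hodd : Odd m)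
    (hpow : ∀ x : F, x ≠ 0 → x ^ (2 * m) = 1) (s : F) (hs : s ^ 3 + s = 0) : s = 0 := by
  rcases eq_or_ne s 0 with h | h
  · exact h
  · exfalso
    have h2 : s * (s ^ 2 + 1) = 0 := by linear_combination hs
    rcases mul_eq_zero.mp h2 with h' | h'
    · exact h h'
    · exact sq_ne_negone' h3 hodd hpow s (by linear_combination h') 

private lemma fourth' (h3 : (3 : F) = 0) (hodd : Odd m)
    (hpow : ∀ x : F, x ≠ 0 → x ^ (2 * m) = 1) (x y : F) (h : x ^ 4 = y ^ 4) :
    x = y ∨ x = -y := by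
  have h2 : (x ^ 2 - y ^ 2) * (x ^ 2 + y ^ 2) = 0 := by linear_combination h
  rcases mul_eq_zero.mp h2 with h' | h'
  · have h3' : (x - y) * (x + y) = 0 := by linear_combination h'
    rcases mul_eq_zero.mp h3' with h'' | h''
    · left; linear_combination h''
    · right; linear_combination h''
  · rcases eq_or_ne y 0 with hy | hy
    · subst hy
      left
      have hx2 : x ^ 2 = 0 := by linear_combination h'
      simpa using pow_eq_zero_iff (two_ne_zero) |>.mp hx2
    · exfalso
      apply sq_ne_negone' h3 hodd hpow (x * y⁻¹)
      have hyy : y * y⁻¹ = 1 := mul_inv_cancel₀ hy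
      field_simp
      linear_combination h'

/-- cubic injectivity : u³+u = u'³+u' → u = u' -/
private lemma cubic_inj' (h3 : (3 : F) = 0) (hodd : Odd m)
    (hpow : ∀ x : F, x ≠ 0 → x ^ (2 * m) = 1) {u u' : F}
    (h : u ^ 3 + u = u' ^ 3 + u') : u = u' := by
  have hS : (u - u') ^ 3 + (u - u') = 0 := by
    linear_combination h + (u * u' ^ 2 - u ^ 2 * u') * h3
  have := Lzero' h3 hodd hpow _ hS
  linear_combination this

/-- conversion lemmas from the sign-split equation to canonical forms -/
private lemma toCubicP' (h3 : (3 : F) = 0) {a u : F} (h : (1 - u) ^ 4 - u ^ 4 = a) :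
    u ^ 3 + u = 1 - a := by
  linear_combination -h + (-u ^ 3 + 2 * u ^ 2 - u) * h3

private lemma toCubicM' (h3 : (3 : F) = 0) {a u : F} (h : -(1 - u) ^ 4 + u ^ 4 = a) :
    u ^ 3 + u = 1 + a := by
  linear_combination h + (-u ^ 3 + 2 * u ^ 2 - u) * h3

private lemma toQuarticQ' (h3 : (3 : F) = 0) {a u : F} (h : (1 - u) ^ 4 + u ^ 4 = a) :
    (u + 1) ^ 4 = -1 - a := by
  linear_combination -h + (u ^ 4 + 4 * u ^ 2 + 1) * h3

private lemma toQuarticR' (h3 : (3 : F) = 0) {a u : F} (h : -(1 - u) ^ 4 - u ^ 4 = a) :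
    (u + 1) ^ 4 = a - 1 := by
  linear_combination h + (u ^ 4 + 4 * u ^ 2 + 1) * h3

/-- P-M exclusion -/
private lemma casePM' (h3 : (3 : F) = 0) (hodd : Odd m)
    (hpow : ∀ x : F, x ≠ 0 → x ^ (2 * m) = 1) {a u u' : F}
    (hP : u ^ 3 + u = 1 - a) (hM : u' ^ 3 + u' = 1 + a)
    (he : (1 - u) ^ m = 1) (hd' : u' ^ m = -1) : False := by
  have hS : (u + u' - 1) ^ 3 + (u + u' - 1) = 0 := by
    linear_combination hP + hM + (u ^ 2 * u' + u * u' ^ 2 - (u + u') ^ 2 + (u + u')) * h3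
  have h0 := Lzero' h3 hodd hpow _ hS
  have hu' : u' = 1 - u := by linear_combination h0
  rw [hu', he] at hd'
  exact one_ne_negone' h3 hd'

/-- Q-Q uniqueness contradiction (needs u ≠ u') -/
private lemma caseQQ' (h3 : (3 : F) = 0) (hodd : Odd m)
    (hpow : ∀ x : F, x ≠ 0 → x ^ (2 * m) = 1) {a u u' : F} (hne : u ≠ u')
    (hQ : (u + 1) ^ 4 = -1 - a) (hQ' : (u' + 1) ^ 4 = -1 - a)
    (he : (1 - u) ^ m = 1) (hd' : u' ^ m = -1) : False := by
  rcases fourth' h3 hodd hpow (u + 1) (u' + 1) (hQ.trans hQ'.symm) with h | h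
  · exact hne (by linear_combination h)
  · have hu' : u' = 1 - u := by linear_combination h - h3
    rw [hu', he] at hd'
    exact one_ne_negone' h3 hd'

/-- R-R uniqueness contradiction -/
private lemma caseRR' (h3 : (3 : F) = 0) (hodd : Odd m)
    (hpow : ∀ x : F, x ≠ 0 → x ^ (2 * m) = 1) {a u u' : F} (hne : u ≠ u')
    (hR : (u + 1) ^ 4 = a - 1) (hR' : (u' + 1) ^ 4 = a - 1)
    (hd : u ^ m = 1) (he' : (1 - u') ^ m = -1) : False := by
  rcases fourth' h3 hodd hpow (u + 1) (u' + 1) (hR.trans hR'.symm) with h | h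
  · exact hne (by linear_combination h)
  · have hu' : (1 : F) - u' = u := by linear_combination -h + h3
    rw [hu', hd] at he'
    exact one_ne_negone' h3 he'

/-- Q-R exclusion : the key quartic case -/
private lemma caseQR' (h3 : (3 : F) = 0) (hodd : Odd m)
    (hpow : ∀ x : F, x ≠ 0 → x ^ (2 * m) = 1) {a u u' : F}
    (hu0 : u ≠ 0) (hu1 : u ≠ 1) (hu'0 : u' ≠ 0) (hu'1 : u' ≠ 1)
    (hQ : (u + 1) ^ 4 = -1 - a) (hR : (u' + 1) ^ 4 = a - 1)
    (heu : (1 - u) ^ m = 1) (hdu : u ^ m = -1)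
    (heu' : (1 - u') ^ m = -1) (hdu' : u' ^ m = 1) : False := by
  have hts : (u + 1) ^ 4 + (u' + 1) ^ 4 = 1 := by linear_combination hQ + hR - h3
  -- factorizations
  have hf1 : (u + 1) ^ 2 - 1 = -(u * (1 - u)) := by linear_combination u * h3
  have hf2 : (u' + 1) ^ 2 - 1 = -(u' * (1 - u')) := by linear_combination u' * h3
  have h1u : (1 : F) - u ≠ 0 := sub_ne_zero.mpr (Ne.symm hu1)
  have h1u' : (1 : F) - u' ≠ 0 := sub_ne_zero.mpr (Ne.symm hu'1)
  have hA : ((u + 1) ^ 2 - 1) ^ m = 1 := by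
    rw [hf1, neg_pow, mul_pow, hodd.neg_one_pow, hdu, heu]; ring
  have hB : ((u' + 1) ^ 2 - 1) ^ m = 1 := by
    rw [hf2, neg_pow, mul_pow, hodd.neg_one_pow, hdu', heu']; ring
  have hAnz : (u + 1) ^ 2 - 1 ≠ 0 := by
    rw [hf1]; exact neg_ne_zero.mpr (mul_ne_zero hu0 h1u)
  have hBnz : (u' + 1) ^ 2 - 1 ≠ 0 := by
    rw [hf2]; exact neg_ne_zero.mpr (mul_ne_zero hu'0 h1u')
  -- the circle identity
  have hid : ((u + 1) ^ 2 - 1) * ((u' + 1) ^ 2 - 1)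
      = -(((u + 1) ^ 2 + (u' + 1) ^ 2 - 1) ^ 2) := by
    linear_combination hts +
      ((u + 1) ^ 2 * (u' + 1) ^ 2 - (u + 1) ^ 2 - (u' + 1) ^ 2 + 1) * h3
  have hhnz : (u + 1) ^ 2 + (u' + 1) ^ 2 - 1 ≠ 0 := by
    intro h
    apply mul_ne_zero hAnz hBnz
    rw [hid, h]; ring
  have e1 : (((u + 1) ^ 2 - 1) * ((u' + 1) ^ 2 - 1)) ^ m = 1 := by
    rw [mul_pow, hA, hB]; ring
  have e2 : (((u + 1) ^ 2 - 1) * ((u' + 1) ^ 2 - 1)) ^ m = -1 := by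
    rw [hid, neg_pow, hodd.neg_one_pow, ← pow_mul, mul_comm 2 m, mul_comm m 2,
      hpow _ hhnz]
    ring
  exact one_ne_negone' h3 (e1.symm.trans e2)

/-- the pair lemma : two distinct non-boundary solutions have opposite sign-products -/
private lemma pairlem' (h3 : (3 : F) = 0) (hodd : Odd m)
    (hpow : ∀ x : F, x ≠ 0 → x ^ (2 * m) = 1) {a u u' : F} (hne : u ≠ u')
    (hu0 : u ≠ 0) (hu1 : u ≠ 1) (hu'0 : u' ≠ 0) (hu'1 : u' ≠ 1)
    (hu : (1 - u) ^ (m + 4) - u ^ (m + 4) = a)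
    (hu' : (1 - u') ^ (m + 4) - u' ^ (m + 4) = a) :
    (1 - u) ^ m * u ^ m = -((1 - u') ^ m * u' ^ m) := by
  have h1u : (1 : F) - u ≠ 0 := sub_ne_zero.mpr (Ne.symm hu1)
  have h1u' : (1 : F) - u' ≠ 0 := sub_ne_zero.mpr (Ne.symm hu'1)
  rw [pow_add, pow_add] at hu hu'
  rcases dich' hpow (1 - u) h1u with he | he <;>
    rcases dich' hpow u hu0 with hd | hd <;>
      rcases dich' hpow (1 - u') h1u' with he' | he' <;>
        rcases dich' hpow u' hu'0 with hd' | hd' <;>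
          rw [he, hd] at hu <;> rw [he', hd'] at hu' <;> rw [he, hd, he', hd']
  -- 16 cases; hu/hu' now have signs substituted
  · -- P P
    have c1 : (1 - u) ^ 4 - u ^ 4 = a := by linear_combination hu
    have c2 : (1 - u') ^ 4 - u' ^ 4 = a := by linear_combination hu'
    exact absurd (cubic_inj' h3 hodd hpow
      ((toCubicP' h3 c1).trans (toCubicP' h3 c2).symm)) hne
  · -- P Q
    norm_num
  · -- P R
    norm_num
  · -- P M
    have c1 : (1 - u) ^ 4 - u ^ 4 = a := by linear_combination hu
    have c2 : -(1 - u') ^ 4 + u' ^ 4 = a := by linear_combination hu'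
    exact (casePM' h3 hodd hpow (toCubicP' h3 c1) (toCubicM' h3 c2) he hd').elim
  · -- Q P
    norm_num
  · -- Q Q
    have c1 : (1 - u) ^ 4 + u ^ 4 = a := by linear_combination hu
    have c2 : (1 - u') ^ 4 + u' ^ 4 = a := by linear_combination hu'
    exact (caseQQ' h3 hodd hpow hne (toQuarticQ' h3 c1) (toQuarticQ' h3 c2) he hd').elim
  · -- Q R
    have c1 : (1 - u) ^ 4 + u ^ 4 = a := by linear_combination hu
    have c2 : -(1 - u') ^ 4 - u' ^ 4 = a := by linear_combination hu'
    exact (caseQR' h3 hodd hpow hu0 hu1 hu'0 hu'1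
      (toQuarticQ' h3 c1) (toQuarticR' h3 c2) he hd he' hd').elim
  · -- Q M
    norm_num
  · -- R P
    norm_num
  · -- R Q
    have c1 : -(1 - u) ^ 4 - u ^ 4 = a := by linear_combination hu
    have c2 : (1 - u') ^ 4 + u' ^ 4 = a := by linear_combination hu'
    exact (caseQR' h3 hodd hpow hu'0 hu'1 hu0 hu1
      (toQuarticQ' h3 c2) (toQuarticR' h3 c1) he' hd' he hd).elim
  · -- R R
    have c1 : -(1 - u) ^ 4 - u ^ 4 = a := by linear_combination hu
    have c2 : -(1 - u') ^ 4 - u' ^ 4 = a := by linear_combination hu'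
    exact (caseRR' h3 hodd hpow hne (toQuarticR' h3 c1) (toQuarticR' h3 c2) hd he').elim
  · -- R M
    norm_num
  · -- M P
    have c1 : -(1 - u) ^ 4 + u ^ 4 = a := by linear_combination hu
    have c2 : (1 - u') ^ 4 - u' ^ 4 = a := by linear_combination hu'
    exact (casePM' h3 hodd hpow (toCubicP' h3 c2) (toCubicM' h3 c1) he' hd).elim
  · -- M Q
    norm_num
  · -- M R
    norm_num
  · -- M M
    have c1 : -(1 - u) ^ 4 + u ^ 4 = a := by linear_combination hu
    have c2 : -(1 - u') ^ 4 + u' ^ 4 = a := by linear_combination hu'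
    exact absurd (cubic_inj' h3 hodd hpow
      ((toCubicM' h3 c1).trans (toCubicM' h3 c2).symm)) hne

/-- boundary : if 0 is a solution then every solution is 0 -/
private lemma bnd0' (h3 : (3 : F) = 0) (hodd : Odd m)
    (hpow : ∀ x : F, x ≠ 0 → x ^ (2 * m) = 1) {a u : F}
    (h0 : (1 - (0 : F)) ^ (m + 4) - (0 : F) ^ (m + 4) = a)
    (hu : (1 - u) ^ (m + 4) - u ^ (m + 4) = a) : u = 0 := by
  have ha : a = 1 := by
    rw [sub_zero, one_pow, zero_pow (by omega : m + 4 ≠ 0), sub_zero] at h0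
    exact h0.symm
  subst ha
  rcases eq_or_ne u 0 with h | hu0
  · exact h
  exfalso
  rcases eq_or_ne u 1 with h | hu1
  · subst h
    rw [sub_self, zero_pow (by omega : m + 4 ≠ 0), one_pow, zero_sub] at hu
    exact one_ne_negone' h3 hu.symm
  have h1u : (1 : F) - u ≠ 0 := sub_ne_zero.mpr (Ne.symm hu1)
  rw [pow_add, pow_add] at hu
  rcases dich' hpow (1 - u) h1u with he | he <;>
    rcases dich' hpow u hu0 with hd | hd <;> rw [he, hd] at hu
  · -- P : u³+u = 0
    have c1 : (1 - u) ^ 4 - u ^ 4 = (1 : F) := by linear_combination hu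
    have hc := toCubicP' h3 c1
    have : u ^ 3 + u = 0 := by linear_combination hc
    exact hu0 (Lzero' h3 hodd hpow u this)
  · -- Q : (u+1)^4 = 1
    have c1 : (1 - u) ^ 4 + u ^ 4 = (1 : F) := by linear_combination hu
    have hc := toQuarticQ' h3 c1
    have h4 : (u + 1) ^ 4 = (1 : F) ^ 4 := by rw [hc]; linear_combination -h3
    rcases fourth' h3 hodd hpow (u + 1) 1 h4 with h | h
    · exact hu0 (by linear_combination h)
    · exact hu1 (by linear_combination h - h3)
  · -- R : (u+1)^4 = 0
    have c1 : -(1 - u) ^ 4 - u ^ 4 = (1 : F) := by linear_combination hu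
    have hc := toQuarticR' h3 c1
    have h4 : (u + 1) ^ 4 = 0 := by rw [hc]; norm_num
    have hum : u = -1 := by
      have := pow_eq_zero_iff (n := 4) (by norm_num) |>.mp h4
      linear_combination this
    rw [hum, hodd.neg_one_pow] at hd
    exact one_ne_negone' h3 hd.symm
  · -- M : u³+u = 2 = -1, so u = 1
    have c1 : -(1 - u) ^ 4 + u ^ 4 = (1 : F) := by linear_combination hu
    have hc := toCubicM' h3 c1
    have hS : (u - 1) ^ 3 + (u - 1) = 0 := by
      linear_combination hc + (-u ^ 2 + u) * h3
    exact hu1 (by linear_combination Lzero' h3 hodd hpow _ hS)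

/-- boundary : if 1 is a solution then every solution is 1 -/
private lemma bnd1' (h3 : (3 : F) = 0) (hodd : Odd m)
    (hpow : ∀ x : F, x ≠ 0 → x ^ (2 * m) = 1) {a u : F}
    (h1 : (1 - (1 : F)) ^ (m + 4) - (1 : F) ^ (m + 4) = a)
    (hu : (1 - u) ^ (m + 4) - u ^ (m + 4) = a) : u = 1 := by
  have ha : a = -1 := by
    rw [sub_self, zero_pow (by omega : m + 4 ≠ 0), one_pow, zero_sub] at h1
    exact h1.symm
  subst ha
  rcases eq_or_ne u 1 with h | hu1
  · exact h
  exfalso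
  rcases eq_or_ne u 0 with h | hu0
  · subst h
    rw [sub_zero, one_pow, zero_pow (by omega : m + 4 ≠ 0), sub_zero] at hu
    exact one_ne_negone' h3 hu
  have h1u : (1 : F) - u ≠ 0 := sub_ne_zero.mpr (Ne.symm hu1)
  rw [pow_add, pow_add] at hu
  rcases dich' hpow (1 - u) h1u with he | he <;>
    rcases dich' hpow u hu0 with hd | hd <;> rw [he, hd] at hu
  · -- P : u³+u = 1-(-1) = 2 = -1, so u = 1
    have c1 : (1 - u) ^ 4 - u ^ 4 = (-1 : F) := by linear_combination hu
    have hc := toCubicP' h3 c1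
    have hS : (u - 1) ^ 3 + (u - 1) = 0 := by
      linear_combination hc + (-u ^ 2 + u) * h3
    exact hu1 (by linear_combination Lzero' h3 hodd hpow _ hS)
  · -- Q : (u+1)^4 = -1-(-1) = 0, so u = -1, but then (1-u)^m = (-1)^m = -1 ≠ 1
    have c1 : (1 - u) ^ 4 + u ^ 4 = (-1 : F) := by linear_combination hu
    have hc := toQuarticQ' h3 c1
    have h4 : (u + 1) ^ 4 = 0 := by rw [hc]; norm_num
    have hum : u = -1 := by
      have := pow_eq_zero_iff (n := 4) (by norm_num) |>.mp h4
      linear_combination this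
    have h2 : (1 : F) - u = -1 := by rw [hum]; linear_combination h3
    rw [h2, hodd.neg_one_pow] at he
    exact one_ne_negone' h3 he.symm
  · -- R : (u+1)^4 = -1-1 = -2 = 1, so u ∈ {0,1}
    have c1 : -(1 - u) ^ 4 - u ^ 4 = (-1 : F) := by linear_combination hu
    have hc := toQuarticR' h3 c1
    have h4 : (u + 1) ^ 4 = (1 : F) ^ 4 := by rw [hc]; linear_combination -h3
    rcases fourth' h3 hodd hpow (u + 1) 1 h4 with h | h
    · exact hu0 (by linear_combination h)
    · exact hu1 (by linear_combination h - h3)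
  · -- M : u³+u = 1+(-1) = 0, so u = 0
    have c1 : -(1 - u) ^ 4 + u ^ 4 = (-1 : F) := by linear_combination hu
    have hc := toCubicM' h3 c1
    have : u ^ 3 + u = 0 := by linear_combination hc
    exact hu0 (Lzero' h3 hodd hpow u this)

/-- the core lemma : no three distinct solutions of (1-u)^(m+4) - u^(m+4) = a -/
private lemma core' (h3 : (3 : F) = 0) (hodd : Odd m)
    (hpow : ∀ x : F, x ≠ 0 → x ^ (2 * m) = 1) {a u1 u2 u3 : F}
    (h12 : u1 ≠ u2) (h13 : u1 ≠ u3) (h23 : u2 ≠ u3)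
    (e1 : (1 - u1) ^ (m + 4) - u1 ^ (m + 4) = a)
    (e2 : (1 - u2) ^ (m + 4) - u2 ^ (m + 4) = a)
    (e3 : (1 - u3) ^ (m + 4) - u3 ^ (m + 4) = a) : False := by
  -- boundary cases
  rcases eq_or_ne u1 0 with h | hu10
  · subst h
    exact h23 ((bnd0' h3 hodd hpow e1 e2).trans (bnd0' h3 hodd hpow e1 e3).symm)
  rcases eq_or_ne u2 0 with h | hu20
  · subst h
    exact h13 ((bnd0' h3 hodd hpow e2 e1).trans (bnd0' h3 hodd hpow e2 e3).symm)
  rcases eq_or_ne u3 0 with h | hu30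
  · subst h
    exact h12 ((bnd0' h3 hodd hpow e3 e1).trans (bnd0' h3 hodd hpow e3 e2).symm)
  rcases eq_or_ne u1 1 with h | hu11
  · subst h
    exact h23 ((bnd1' h3 hodd hpow e1 e2).trans (bnd1' h3 hodd hpow e1 e3).symm)
  rcases eq_or_ne u2 1 with h | hu21
  · subst h
    exact h13 ((bnd1' h3 hodd hpow e2 e1).trans (bnd1' h3 hodd hpow e2 e3).symm)
  rcases eq_or_ne u3 1 with h | hu31
  · subst h
    exact h12 ((bnd1' h3 hodd hpow e3 e1).trans (bnd1' h3 hodd hpow e3 e2).symm)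
  -- generic case : use the pair lemma
  have p12 := pairlem' h3 hodd hpow h12 hu10 hu11 hu20 hu21 e1 e2
  have p13 := pairlem' h3 hodd hpow h13 hu10 hu11 hu30 hu31 e1 e3
  have p23 := pairlem' h3 hodd hpow h23 hu20 hu21 hu30 hu31 e2 e3
  have hz : (1 - u2) ^ m * u2 ^ m = 0 := by
    linear_combination ((1 - u2) ^ m * u2 ^ m) * h3 - p23 + p13 - p12
  have h1u2 : (1 : F) - u2 ≠ 0 := sub_ne_zero.mpr (Ne.symm hu21)
  rcases mul_eq_zero.mp hz with h | h
  · exact pow_ne_zero m h1u2 h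
  · exact pow_ne_zero m hu20 h

end Core

theorem stmt_4 (n : ℕ) (hn : 0 < n) (hcond : n % 4 = 1)
    (d : ℕ) (hd : d = (3 ^ (n + 1) - 1) / 8) :
    ∀ a b : GaloisField 3 n,
      {x : GaloisField 3 n | (x + a) ^ d + x ^ d = b}.ncard ≤ 2 := by
  set F := GaloisField 3 n with hF
  haveI : Fintype F := Fintype.ofFinite F
  -- arithmetic setup
  have hk : n = 4 * (n / 4) + 1 := by omega
  have hmod : 3 ^ n % 16 = 3 := by
    rw [hk, pow_succ, pow_mul]
    rw [Nat.mul_mod, Nat.pow_mod]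
    norm_num
  have hge : 3 ≤ 3 ^ n := by
    calc 3 = 3 ^ 1 := (pow_one 3).symm
    _ ≤ 3 ^ n := Nat.pow_le_pow_right (by norm_num) hn
  set t : ℕ := (3 ^ n - 3) / 16 with ht
  have hNt : 3 ^ n = 16 * t + 3 := by omega
  have hp1 : 3 ^ (n + 1) = 3 * 3 ^ n := by rw [pow_succ]; ring
  have hd6 : d = 6 * t + 1 := by omega
  set m : ℕ := 8 * t + 1 with hm
  have hodd : Odd m := ⟨4 * t, by omega⟩
  have hcard : Fintype.card F = 16 * t + 3 := by
    rw [← Nat.card_eq_fintype_card, GaloisField.card 3 n hn.ne', hNt]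
  have h3 : (3 : F) = 0 := by
    have := CharP.cast_eq_zero F 3
    exact_mod_cast this
  have hpow : ∀ x : F, x ≠ 0 → x ^ (2 * m) = 1 := by
    intro x hx
    have := FiniteField.pow_card_sub_one_eq_one x hx
    rw [hcard] at this
    convert this using 2
    omega
  -- the key inversion : x ^ (d * (m + 4)) = x
  have hde : ∀ x : F, x ^ (d * (m + 4)) = x := by
    intro x
    rcases eq_or_ne x 0 with h | hx
    · subst h
      rw [zero_pow]
      rw [hd6]
      positivity
    · have hexp : d * (m + 4) = 2 * m * (3 * t + 2) + 1 := by
        rw [hd6, hm]; ring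
      rw [hexp, pow_succ, pow_mul, hpow x hx, one_pow, one_mul]
  have hed : ∀ x : F, (x ^ d) ^ (m + 4) = x := by
    intro x; rw [← pow_mul]; exact hde x
  have hedc : ∀ x : F, (x ^ (m + 4)) ^ d = x := by
    intro x; rw [← pow_mul, mul_comm]; exact hde x
  -- main argument
  intro a b
  by_contra hcon
  push_neg at hcon
  rw [Set.two_lt_ncard (Set.toFinite _)] at hcon
  obtain ⟨x1, hx1, x2, hx2, x3, hx3, h12, h13, h23⟩ := hcon
  simp only [Set.mem_setOf_eq] at hx1 hx2 hx3
  -- transform the equation : with v = x^d, (b - v)^(m+4) - v^(m+4) = a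
  have key : ∀ x : F, (x + a) ^ d + x ^ d = b →
      (b - x ^ d) ^ (m + 4) - (x ^ d) ^ (m + 4) = a := by
    intro x hx
    have h1 : (x + a) ^ d = b - x ^ d := by linear_combination hx
    have h2 : ((x + a) ^ d) ^ (m + 4) = (b - x ^ d) ^ (m + 4) := by rw [h1]
    rw [hed] at h2
    rw [← h2, hed]
    ring
  have E1 := key x1 hx1
  have E2 := key x2 hx2
  have E3 := key x3 hx3
  have hv12 : x1 ^ d ≠ x2 ^ d := fun h => h12 (by rw [← hed x1, h, hed])
  have hv13 : x1 ^ d ≠ x3 ^ d := fun h => h13 (by rw [← hed x1, h, hed])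
  have hv23 : x2 ^ d ≠ x3 ^ d := fun h => h23 (by rw [← hed x2, h, hed])
  set v1 := x1 ^ d
  set v2 := x2 ^ d
  set v3 := x3 ^ d
  rcases eq_or_ne b 0 with hb | hb
  · -- b = 0 : -2 v^(m+4) = a, injectivity of v ↦ v^(m+4)
    subst hb
    have hoddm4 : Odd (m + 4) := ⟨4 * t + 2, by omega⟩
    have mk : ∀ v : F, (0 - v) ^ (m + 4) - v ^ (m + 4) = a →
        v ^ (m + 4) = a := by
      intro v hv
      rw [zero_sub, hoddm4.neg_pow] at hv
      linear_combination hv + (v ^ (m + 4)) * h3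
    have q1 := mk v1 E1
    have q2 := mk v2 E2
    exact hv12 (by rw [← hedc v1, q1, ← q2, hedc])
  · -- b ≠ 0 : rescale u = v / b
    have hbp : b ^ (m + 4) ≠ 0 := pow_ne_zero _ hb
    have mk : ∀ v : F, (b - v) ^ (m + 4) - v ^ (m + 4) = a →
        (1 - v * b⁻¹) ^ (m + 4) - (v * b⁻¹) ^ (m + 4) = a * (b ^ (m + 4))⁻¹ := by
      intro v hv
      have hfac : b - v = b * (1 - v * b⁻¹) := by field_simp
      rw [hfac, mul_pow] at hv
      have : (v * b⁻¹) ^ (m + 4) = v ^ (m + 4) * (b ^ (m + 4))⁻¹ := by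
        rw [mul_pow, inv_pow]
      rw [this]
      have hinv : b ^ (m + 4) * (b ^ (m + 4))⁻¹ = 1 := mul_inv_cancel₀ hbp
      linear_combination (b ^ (m + 4))⁻¹ * hv - (1 - v * b⁻¹) ^ (m + 4) * hinv
    have hu12 : v1 * b⁻¹ ≠ v2 * b⁻¹ := fun h => hv12 (by
      have := congrArg (· * b) h
      simpa [mul_assoc, inv_mul_cancel₀ hb] using this)
    have hu13 : v1 * b⁻¹ ≠ v3 * b⁻¹ := fun h => hv13 (by
      have := congrArg (· * b) h
      simpa [mul_assoc, inv_mul_cancel₀ hb] using this)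
    have hu23 : v2 * b⁻¹ ≠ v3 * b⁻¹ := fun h => hv23 (by
      have := congrArg (· * b) h
      simpa [mul_assoc, inv_mul_cancel₀ hb] using this)
    exact core' h3 hodd hpow hu12 hu13 hu23 (mk v1 E1) (mk v2 E2) (mk v3 E3)
end

section
/- Let n be a positive integer with n ≡ 3 (mod 4) and let d = (3^(n+1) - 1)/8. Then the power function F(x) = x^d on GF(3^n) has (-1)-differential uniformity at most 4; that is, for all a, b ∈ GF(3^n), the number of x ∈ GF(3^n) satisfying (x+a)^d + x^d = b is at most 4. -/
section Aux

variable {F : Type*} [Field F]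

lemma key_id (h3 : (3 : F) = 0) (w x y z : F)
    (h1 : w + x + y + z = 0) (h4 : w ^ 4 + x ^ 4 + y ^ 4 + z ^ 4 = 0) :
    w * x * y * z = -(w * x + w * y + w * z + x * y + x * z + y * z) ^ 2 := by
  have hw : w = -x - y - z := by linear_combination h1
  subst hw
  linear_combination (-1 : F) * h4 +
    (5 * (x ^ 2 * y * z + x * y ^ 2 * z + x * y * z ^ 2) + x ^ 4 + y ^ 4 + z ^ 4 +
      2 * (x ^ 3 * y + x ^ 3 * z + x * y ^ 3 + x * z ^ 3 + y ^ 3 * z + y * z ^ 3) +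
      3 * (x ^ 2 * y ^ 2 + x ^ 2 * z ^ 2 + y ^ 2 * z ^ 2)) * h3

lemma sq_ratio (hns : ¬ IsSquare (-1 : F)) {u v : F}
    (hu : IsSquare u) (hv : IsSquare v) (hv0 : v ≠ 0) (h : u = -v) : False := by
  obtain ⟨r, hr⟩ := hu
  obtain ⟨s, hs⟩ := hv
  have hs0 : s ≠ 0 := by rintro rfl; rw [mul_zero] at hs; exact hv0 hs
  have key : r * r = -(s * s) := by rw [← hr, h, hs]
  apply hns
  refine ⟨r * s⁻¹, ?_⟩
  field_simp
  linear_combination -key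

lemma helperH (hns : ¬ IsSquare (-1 : F)) (h3 : (3 : F) = 0) {b u v : F}
    (hb : b ≠ 0) (hbsq : IsSquare b) (hu : IsSquare u)
    (hsum : u + v = b) (hprod : u * v = b ^ 2) : False := by
  have h1 : (u - v) ^ 2 = 0 := by
    linear_combination (u + v + b) * hsum - 4 * hprod - b ^ 2 * h3
  have huv : u = v := by
    have h2 := (pow_eq_zero_iff (two_ne_zero)).mp h1
    linear_combination h2
  rw [← huv] at hsum
  have hub : u = -b := by linear_combination (-1 : F) * hsum + u * h3
  exact sq_ratio hns hu hbsq hb hub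

lemma crux (hns : ¬ IsSquare (-1 : F)) (h3 : (3 : F) = 0) {a b u3 v3 u4 v4 : F}
    (ha : a ≠ 0)
    (s3u : IsSquare u3) (s3v : IsSquare v3) (s4u : IsSquare u4) (s4v : IsSquare v4)
    (hs3 : u3 + v3 = b) (hs4 : u4 + v4 = b)
    (e3 : u3 ^ 4 + v3 ^ 4 = a) (e4 : u4 ^ 4 + v4 ^ 4 = -a) : False := by
  have h1 : u3 + v3 + -u4 + -v4 = 0 := by linear_combination hs3 - hs4
  have h4 : u3 ^ 4 + v3 ^ 4 + (-u4) ^ 4 + (-v4) ^ 4 = 0 := by linear_combination e3 + e4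
  have hid := key_id h3 u3 v3 (-u4) (-v4) h1 h4
  have hid' : u3 * v3 * u4 * v4 =
      -(u3 * v3 - u3 * u4 - u3 * v4 - v3 * u4 - v3 * v4 + u4 * v4) ^ 2 := by
    linear_combination hid
  by_cases hE0 : u3 * v3 - u3 * u4 - u3 * v4 - v3 * u4 - v3 * v4 + u4 * v4 = 0
  · -- degenerate : the product is zero
    have hz : u3 * v3 * u4 * v4 = 0 := by rw [hid', hE0]; ring
    rcases mul_eq_zero.mp hz with h | hv4z
    · rcases mul_eq_zero.mp h with h' | hu4z
      · rcases mul_eq_zero.mp h' with hu3z | hv3z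
        · -- u3 = 0
          subst hu3z
          have hv3 : v3 = b := by linear_combination hs3
          have hb : b ≠ 0 := by
            rintro rfl
            exact ha (by linear_combination -e3 + (v3 ^ 3) * hv3)
          have hprod : u4 * v4 = b ^ 2 := by
            linear_combination hE0 + v3 * hs4 + b * hv3
          exact helperH hns h3 hb (hv3 ▸ s3v) s4u hs4 hprod
        · -- v3 = 0
          subst hv3z
          have hu3 : u3 = b := by linear_combination hs3
          have hb : b ≠ 0 := by
            rintro rfl
            exact ha (by linear_combination -e3 + (u3 ^ 3) * hu3)
          have hprod : u4 * v4 = b ^ 2 := by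
            linear_combination hE0 + u3 * hs4 + b * hu3
          exact helperH hns h3 hb (hu3 ▸ s3u) s4u hs4 hprod
      · -- u4 = 0
        subst hu4z
        have hv4 : v4 = b := by linear_combination hs4
        have hb : b ≠ 0 := by
          rintro rfl
          exact ha (by linear_combination e4 - (v4 ^ 3) * hv4)
        have hprod : u3 * v3 = b ^ 2 := by
          linear_combination hE0 + v4 * hs3 + b * hv4
        exact helperH hns h3 hb (hv4 ▸ s4v) s3u hs3 hprod
    · -- v4 = 0
      subst hv4z
      have hu4 : u4 = b := by linear_combination hs4
      have hb : b ≠ 0 := by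
        rintro rfl
        exact ha (by linear_combination e4 - (u4 ^ 3) * hu4)
      have hprod : u3 * v3 = b ^ 2 := by
        linear_combination hE0 + u4 * hs3 + b * hu4
      exact helperH hns h3 hb (hu4 ▸ s4u) s3u hs3 hprod
  · -- nondegenerate
    have hsq : IsSquare (u3 * v3 * u4 * v4) := (((s3u.mul s3v).mul s4u).mul s4v)
    have hEsq : IsSquare ((u3 * v3 - u3 * u4 - u3 * v4 - v3 * u4 - v3 * v4 + u4 * v4) ^ 2) :=
      ⟨_, sq _⟩
    exact sq_ratio hns hsq hEsq (pow_ne_zero 2 hE0) hid'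

end Aux

theorem stmt_5 (n : ℕ) (hn : 0 < n) (hcond : n % 4 = 3)
    (d : ℕ) (hd : d = (3 ^ (n + 1) - 1) / 8) :
    ∀ a b : GaloisField 3 n,
      {x : GaloisField 3 n | (x + a) ^ d + x ^ d = b}.ncard ≤ 4 := by
  intro a b
  -- arithmetic facts
  obtain ⟨k, hk⟩ : ∃ k, n + 1 = 4 * k := ⟨(n + 1) / 4, by omega⟩
  have h81 : (3 : ℕ) ^ (n + 1) = 81 ^ k := by rw [hk, pow_mul]; norm_num
  have h16 : (16 : ℕ) ∣ 3 ^ (n + 1) - 1 := by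
    rw [h81]
    have h : (81 : ℕ) ^ k ≡ 1 ^ k [MOD 16] := Nat.ModEq.pow k (by decide)
    rw [one_pow] at h
    exact (Nat.modEq_iff_dvd' (Nat.one_le_pow _ _ (by norm_num))).mp h.symm
  have h8d : 8 * d = 3 ^ (n + 1) - 1 := by
    rw [hd]; exact Nat.mul_div_cancel' (dvd_trans (by norm_num) h16)
  have hd2 : 2 ∣ d := by obtain ⟨c, hc⟩ := h16; omega
  have hpow81 : (81 : ℕ) ≤ 3 ^ (n + 1) := by
    rw [h81]; exact Nat.le_self_pow (by omega) 81
  have hdpos : d ≠ 0 := by omega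
  haveI : Fintype (GaloisField 3 n) := Fintype.ofFinite _
  have hcard : Fintype.card (GaloisField 3 n) = 3 ^ n := by
    rw [← Nat.card_eq_fintype_card]; exact GaloisField.card 3 n (by omega)
  have h3F : (3 : GaloisField 3 n) = 0 := by
    exact_mod_cast CharP.cast_eq_zero (GaloisField 3 n) 3
  have hns : ¬ IsSquare (-1 : GaloisField 3 n) := by
    rw [FiniteField.isSquare_neg_one_iff, hcard]
    simp only [ne_eq, not_not]
    obtain ⟨m, hm⟩ : ∃ m, n = 2 * m + 1 := ⟨n / 2, by omega⟩
    have h9 : (3 : ℕ) ^ n = 9 ^ m * 3 := by rw [hm, pow_succ, pow_mul]; norm_num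
    have h9m : (9 : ℕ) ^ m ≡ 1 ^ m [MOD 4] := Nat.ModEq.pow m (by decide)
    rw [one_pow] at h9m
    have := h9m.mul_right 3
    rw [h9]
    omega
  have K1 : ∀ x : GaloisField 3 n, (x ^ d) ^ 8 = x ^ 2 := by
    intro x
    rcases eq_or_ne x 0 with rfl | hx
    · rw [zero_pow hdpos, zero_pow (by norm_num), zero_pow (by norm_num)]
    · have hq : x ^ (3 ^ n : ℕ) = x := by rw [← hcard]; exact FiniteField.pow_card x
      have key : (x ^ d) ^ 8 * x = x ^ 2 * x := by
        rw [← pow_mul, ← pow_succ]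
        have he : d * 8 + 1 = 3 ^ n * 3 := by
          have h1 : (3 : ℕ) ^ (n + 1) = 3 ^ n * 3 := pow_succ 3 n
          omega
        rw [he, pow_mul, hq]; ring
      exact mul_right_cancel₀ hx key
  have Ksq : ∀ x : GaloisField 3 n, IsSquare (x ^ d) := by
    intro x
    obtain ⟨c, hc⟩ := hd2
    exact ⟨x ^ c, by rw [hc, two_mul, pow_add]⟩
  rcases eq_or_ne a 0 with rfl | ha
  · -- a = 0 case
    rcases Set.eq_empty_or_nonempty
        {x : GaloisField 3 n | (x + 0) ^ d + x ^ d = b} with hS | ⟨x0, hx0⟩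
    · rw [hS]; simp
    · have hsub : {x : GaloisField 3 n | (x + 0) ^ d + x ^ d = b} ⊆ {x0, -x0} := by
        intro x hx
        simp only [Set.mem_setOf_eq, add_zero] at hx hx0
        have hxd : x ^ d = x0 ^ d := by
          linear_combination -hx + hx0 + (x ^ d - x0 ^ d) * h3F
        have hx2 : x ^ 2 = x0 ^ 2 := by rw [← K1 x, ← K1 x0, hxd]
        rcases mul_eq_zero.mp (show (x - x0) * (x + x0) = 0 by linear_combination hx2)
            with h | h
        · exact Or.inl (by linear_combination h)
        · exact Or.inr (by simp only [Set.mem_singleton_iff]; linear_combination h)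
      calc {x : GaloisField 3 n | (x + 0) ^ d + x ^ d = b}.ncard
            ≤ ({x0, -x0} : Set (GaloisField 3 n)).ncard :=
              Set.ncard_le_ncard hsub (Set.toFinite _)
        _ ≤ 2 := (Set.ncard_insert_le _ _).trans (by simp)
        _ ≤ 4 := by norm_num
  · -- a ≠ 0 case
    set S := {x : GaloisField 3 n | (x + a) ^ d + x ^ d = b} with hSdef
    set φ : GaloisField 3 n → GaloisField 3 n := fun x => (x + a) ^ d - x ^ d with hφ
    have hinj : Set.InjOn φ S := by
      intro x hx y hy hxy
      have hx' : (x + a) ^ d + x ^ d = b := hx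
      have hy' : (y + a) ^ d + y ^ d = b := hy
      have hxy' : (x + a) ^ d - x ^ d = (y + a) ^ d - y ^ d := hxy
      have hu : (x + a) ^ d = (y + a) ^ d := by
        linear_combination -hx' + hy' - hxy' + ((x + a) ^ d - (y + a) ^ d) * h3F
      have hv : x ^ d = y ^ d := by
        linear_combination -hx' + hy' + hxy' + (x ^ d - y ^ d) * h3F
      have h1 : x ^ 2 = y ^ 2 := by rw [← K1 x, ← K1 y, hv]
      have h2 : (x + a) ^ 2 = (y + a) ^ 2 := by rw [← K1 (x + a), ← K1 (y + a), hu]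
      have h0 : a * (x - y) = 0 := by
        linear_combination -h2 + h1 + (a * x - a * y) * h3F
      have := (mul_eq_zero.mp h0).resolve_left ha
      linear_combination this
    rw [← Set.ncard_image_of_injOn hinj]
    set T := φ '' S with hTdef
    set A := {t ∈ T | 2 * (b ^ 3 * t + b * t ^ 3) = a} with hAdef
    set B := {t ∈ T | 2 * (b ^ 3 * t + b * t ^ 3) = -a} with hBdef
    set C := {t ∈ T | 2 * (b ^ 4 + t ^ 4) = a} with hCdef
    set D := {t ∈ T | 2 * (b ^ 4 + t ^ 4) = -a} with hDdef
    have master : ∀ x, x ∈ S → ∀ t : GaloisField 3 n, (x + a) ^ d - x ^ d = t →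
        (x + a) ^ d = -(b + t) ∧ x ^ d = -(b - t) := by
      intro x hx t ht
      have hx' : (x + a) ^ d + x ^ d = b := hx
      constructor
      · linear_combination -hx' - ht + ((x + a) ^ d) * h3F
      · linear_combination -hx' + ht + (x ^ d) * h3F
    have cover : T ⊆ A ∪ B ∪ C ∪ D := by
      rintro t ⟨x, hx, ht⟩
      have ht' : (x + a) ^ d - x ^ d = t := ht
      have hmemT : t ∈ T := ⟨x, hx, ht⟩
      obtain ⟨hu, hv⟩ := master x hx t ht'
      have hu4 : (b + t) ^ 4 = x + a ∨ (b + t) ^ 4 = -(x + a) := by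
        have h8 := K1 (x + a)
        rcases mul_eq_zero.mp (show (((x + a) ^ d) ^ 4 - (x + a)) * (((x + a) ^ d) ^ 4 + (x + a)) = 0
            by linear_combination h8) with h | h
        · rw [hu] at h; exact Or.inl (by linear_combination h)
        · rw [hu] at h; exact Or.inr (by linear_combination h)
      have hv4 : (b - t) ^ 4 = x ∨ (b - t) ^ 4 = -x := by
        have h8 := K1 x
        rcases mul_eq_zero.mp (show ((x ^ d) ^ 4 - x) * ((x ^ d) ^ 4 + x) = 0
            by linear_combination h8) with h | h
        · rw [hv] at h; exact Or.inl (by linear_combination h)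
        · rw [hv] at h; exact Or.inr (by linear_combination h)
      simp only [Set.mem_union]
      rcases hu4 with h1 | h1 <;> rcases hv4 with h2 | h2
      · exact Or.inl (Or.inl (Or.inl ⟨hmemT, by
          linear_combination h1 - h2 - 2 * (b ^ 3 * t + b * t ^ 3) * h3F⟩))
      · exact Or.inl (Or.inr ⟨hmemT, by
          linear_combination h1 + h2 - 4 * b ^ 2 * t ^ 2 * h3F⟩)
      · exact Or.inr ⟨hmemT, by
          linear_combination h1 + h2 - 4 * b ^ 2 * t ^ 2 * h3F⟩
      · exact Or.inl (Or.inl (Or.inr ⟨hmemT, by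
          linear_combination h1 - h2 - 2 * (b ^ 3 * t + b * t ^ 3) * h3F⟩))
    have hAcard : A.ncard ≤ 1 := by
      rw [Set.ncard_le_one (Set.toFinite _)]
      rintro t1 ⟨-, c1⟩ t2 ⟨-, c2⟩
      rcases eq_or_ne b 0 with rfl | hb
      · exact absurd (show a = 0 by linear_combination -c1) ha
      · have hfac : b * (t1 - t2) * ((t1 - t2) ^ 2 + b ^ 2) = 0 := by
          linear_combination 2 * c1 - 2 * c2 +
            (-(b ^ 3 * (t1 - t2) + b * (t1 ^ 3 - t2 ^ 3)) - b * (t1 ^ 2 * t2 - t1 * t2 ^ 2)) * h3F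
        rcases mul_eq_zero.mp hfac with h | h
        · rcases mul_eq_zero.mp h with h' | h'
          · exact absurd h' hb
          · linear_combination h'
        · exfalso
          apply hns
          refine ⟨(t1 - t2) * b⁻¹, ?_⟩
          field_simp
          linear_combination -h
    have hBcard : B.ncard ≤ 1 := by
      rw [Set.ncard_le_one (Set.toFinite _)]
      rintro t1 ⟨-, c1⟩ t2 ⟨-, c2⟩
      rcases eq_or_ne b 0 with rfl | hb
      · exact absurd (show a = 0 by linear_combination c1) ha
      · have hfac : b * (t1 - t2) * ((t1 - t2) ^ 2 + b ^ 2) = 0 := by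
          linear_combination 2 * c1 - 2 * c2 +
            (-(b ^ 3 * (t1 - t2) + b * (t1 ^ 3 - t2 ^ 3)) - b * (t1 ^ 2 * t2 - t1 * t2 ^ 2)) * h3F
        rcases mul_eq_zero.mp hfac with h | h
        · rcases mul_eq_zero.mp h with h' | h'
          · exact absurd h' hb
          · linear_combination h'
        · exfalso
          apply hns
          refine ⟨(t1 - t2) * b⁻¹, ?_⟩
          field_simp
          linear_combination -h
    have pairbound : ∀ (W : Set (GaloisField 3 n)) (e : GaloisField 3 n),
        (∀ t ∈ W, ∀ c ∈ W, 2 * (b ^ 4 + t ^ 4) = e ∧ 2 * (b ^ 4 + c ^ 4) = e) → W.ncard ≤ 2 := by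
      intro W e hW
      rcases W.eq_empty_or_nonempty with h0 | ⟨c, hc⟩
      · rw [h0]; simp
      · have hsub : W ⊆ {c, -c} := by
          intro t ht
          obtain ⟨ct, cc⟩ := hW t ht c hc
          have h4 : (t - c) * (t + c) * (t ^ 2 + c ^ 2) = 0 := by
            linear_combination 2 * ct - 2 * cc + (-(t ^ 4 - c ^ 4)) * h3F
          rcases mul_eq_zero.mp h4 with h | h
          · rcases mul_eq_zero.mp h with h' | h'
            · exact Or.inl (by linear_combination h')
            · exact Or.inr (by simp only [Set.mem_singleton_iff]; linear_combination h')
          · rcases eq_or_ne c 0 with rfl | hc0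
            · have ht0 : t = 0 := by
                have h2 : t ^ 2 = 0 := by linear_combination h
                exact pow_eq_zero_iff two_ne_zero |>.mp h2
              exact Or.inl (by simp [ht0])
            · exfalso
              apply hns
              refine ⟨t * c⁻¹, ?_⟩
              field_simp
              linear_combination -h
        calc W.ncard ≤ ({c, -c} : Set (GaloisField 3 n)).ncard :=
              Set.ncard_le_ncard hsub (Set.toFinite _)
          _ ≤ 2 := (Set.ncard_insert_le _ _).trans (by simp)
    have hCcard : C.ncard ≤ 2 :=
      pairbound C a (fun t ht c hc => ⟨ht.2, hc.2⟩)
    have hDcard : D.ncard ≤ 2 :=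
      pairbound D (-a) (fun t ht c hc => ⟨ht.2, hc.2⟩)
    have main : T.ncard ≤ A.ncard + B.ncard + C.ncard + D.ncard := by
      calc T.ncard ≤ (A ∪ B ∪ C ∪ D).ncard := Set.ncard_le_ncard cover (Set.toFinite _)
        _ ≤ (A ∪ B ∪ C).ncard + D.ncard := Set.ncard_union_le _ _
        _ ≤ (A ∪ B).ncard + C.ncard + D.ncard := by
            have := Set.ncard_union_le (A ∪ B) C; omega
        _ ≤ A.ncard + B.ncard + C.ncard + D.ncard := by
            have := Set.ncard_union_le A B; omega
    rcases C.eq_empty_or_nonempty with hCe | hCne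
    · have : C.ncard = 0 := by rw [hCe]; simp
      omega
    rcases D.eq_empty_or_nonempty with hDe | hDne
    · have : D.ncard = 0 := by rw [hDe]; simp
      omega
    exfalso
    obtain ⟨t3, ⟨x3, hx3, ht3⟩, hc3⟩ := hCne
    obtain ⟨t4, ⟨x4, hx4, ht4⟩, hc4⟩ := hDne
    have ht3' : (x3 + a) ^ d - x3 ^ d = t3 := ht3
    have ht4' : (x4 + a) ^ d - x4 ^ d = t4 := ht4
    obtain ⟨hu3, hv3⟩ := master x3 hx3 t3 ht3'
    obtain ⟨hu4, hv4⟩ := master x4 hx4 t4 ht4'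
    have e3 : ((x3 + a) ^ d) ^ 4 + (x3 ^ d) ^ 4 = a := by
      rw [hu3, hv3]
      linear_combination hc3 + 4 * b ^ 2 * t3 ^ 2 * h3F
    have e4 : ((x4 + a) ^ d) ^ 4 + (x4 ^ d) ^ 4 = -a := by
      rw [hu4, hv4]
      linear_combination hc4 + 4 * b ^ 2 * t4 ^ 2 * h3F
    exact crux hns h3F ha (Ksq (x3 + a)) (Ksq x3) (Ksq (x4 + a)) (Ksq x4)
      hx3 hx4 e3 e4
end

section
/- Let n be a positive integer with n ≡ 3 (mod 4) and let d' = (3^(n+1) - 1)/8 + (3^n - 1)/2. Then the power function F'(x) = x^{d'} on GF(3^n) has (-1)-differential uniformity at most 2; that is, for all a, b ∈ GF(3^n), the number of x ∈ GF(3^n) satisfying (x+a)^{d'} + x^{d'} = b is at most 2. -/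
open Classical in
/-- The inverse of the power map: `y ↦ χ(y) y⁴`. -/
noncomputable def Gd {K : Type*} [Field K] (y : K) : K :=
  if IsSquare y then y ^ 4 else -y ^ 4

lemma Gd_of_sq {K : Type*} [Field K] {y : K} (h : IsSquare y) : Gd y = y ^ 4 := by
  unfold Gd; rw [if_pos h]

lemma Gd_of_nonsq {K : Type*} [Field K] {y : K} (h : ¬ IsSquare y) : Gd y = -y ^ 4 := by
  unfold Gd; rw [if_neg h]

lemma Gd_zero {K : Type*} [Field K] : Gd (0 : K) = 0 := by
  rw [Gd_of_sq IsSquare.zero]; norm_num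

/-- Mixed solutions: `y` and `b - y` are both nonzero with opposite quadratic characters. -/
def MixedP {K : Type*} [Field K] (b y : K) : Prop :=
  y ≠ 0 ∧ b - y ≠ 0 ∧ (IsSquare y ↔ ¬ IsSquare (b - y))

section Euler

variable {K : Type*} [Field K] [Fintype K]

lemma chi_pm (hF : ringChar K ≠ 2) {x : K} (hx : x ≠ 0) :
    x ^ (Fintype.card K / 2) = 1 ∨ x ^ (Fintype.card K / 2) = -1 := by
  have hodd := FiniteField.odd_card_of_char_ne_two hF
  have h1 := FiniteField.pow_card_sub_one_eq_one x hx
  have h2 : (x ^ (Fintype.card K / 2)) ^ 2 = 1 := by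
    rw [← pow_mul]
    have he : Fintype.card K / 2 * 2 = Fintype.card K - 1 := by omega
    rw [he, h1]
  have h4 : (x ^ (Fintype.card K / 2) - 1) * (x ^ (Fintype.card K / 2) + 1) = 0 := by
    linear_combination h2
  rcases mul_eq_zero.mp h4 with h | h
  · left; linear_combination h
  · right; linear_combination h

lemma chi_nonsq (hF : ringChar K ≠ 2) {x : K} (hx : x ≠ 0) (h : ¬ IsSquare x) :
    x ^ (Fintype.card K / 2) = -1 :=
  (chi_pm hF hx).resolve_left fun h1 => h ((FiniteField.isSquare_iff hF hx).mpr h1)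

lemma nonsq_mul (hF : ringChar K ≠ 2) {u v : K} (hu : ¬ IsSquare u) (hv : ¬ IsSquare v) :
    IsSquare (u * v) := by
  have hu0 : u ≠ 0 := fun h => hu (h ▸ IsSquare.zero)
  have hv0 : v ≠ 0 := fun h => hv (h ▸ IsSquare.zero)
  refine (FiniteField.isSquare_iff hF (mul_ne_zero hu0 hv0)).mpr ?_
  rw [mul_pow, chi_nonsq hF hu0 hu, chi_nonsq hF hv0 hv]
  ring

lemma sq_mul_nonsq (hF : ringChar K ≠ 2) {u v : K} (hu : IsSquare u) (hu0 : u ≠ 0)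
    (hv : ¬ IsSquare v) : ¬ IsSquare (u * v) := by
  intro hs
  have hv0 : v ≠ 0 := fun h => hv (h ▸ IsSquare.zero)
  have h1 := (FiniteField.isSquare_iff hF hu0).mp hu
  have h2 := (FiniteField.isSquare_iff hF (mul_ne_zero hu0 hv0)).mp hs
  rw [mul_pow, h1, one_mul, chi_nonsq hF hv0 hv] at h2
  exact Ring.neg_one_ne_one_of_char_ne_two hF h2

end Euler

lemma neg_sq_not_sq {K : Type*} [Field K] (hns : ¬ IsSquare (-1 : K)) {t : K} (ht : t ≠ 0) :
    ¬ IsSquare (-(t ^ 2)) := by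
  rintro ⟨s, hs⟩
  apply hns
  refine ⟨s * t⁻¹, ?_⟩
  field_simp
  linear_combination hs

lemma inj4 {K : Type*} [Field K] (h3 : (3 : K) = 0) (hns : ¬ IsSquare (-1 : K)) {b t₁ t₂ : K}
    (hb : b ≠ 0) (h : (b - t₁) ^ 4 - t₁ ^ 4 = (b - t₂) ^ 4 - t₂ ^ 4) : t₁ = t₂ := by
  have key : b * (t₁ - t₂) * ((t₁ - t₂) ^ 2 + b ^ 2) = 0 := by
    linear_combination (-1 : K) * h +
      (b * t₂ ^ 3 + b * t₁ * t₂ ^ 2 - b * t₁ ^ 2 * t₂ - b * t₁ ^ 3 - 2 * b ^ 2 * t₂ ^ 2 +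
        2 * b ^ 2 * t₁ ^ 2 + b ^ 3 * t₂ - b ^ 3 * t₁) * h3
  rcases mul_eq_zero.mp key with h' | h'
  · rcases mul_eq_zero.mp h' with h'' | h''
    · exact absurd h'' hb
    · exact sub_eq_zero.mp h''
  · exfalso
    apply hns
    refine ⟨(t₁ - t₂) * b⁻¹, ?_⟩
    field_simp
    linear_combination -h'

private lemma same_case {K : Type*} [Field K] (h3 : (3 : K) = 0) (hns : ¬ IsSquare (-1 : K))
    {b C y₁ y₂ : K} (hne : y₁ ≠ y₂) (hzy : y₂ ≠ b - y₁)
    (hq₁ : (y₁ * (b - y₁)) ^ 2 + b ^ 2 * (y₁ * (b - y₁)) = C)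
    (hq₂ : (y₂ * (b - y₂)) ^ 2 + b ^ 2 * (y₂ * (b - y₂)) = C)
    (hbp₁0 : b ^ 2 - y₁ * (b - y₁) ≠ 0) (hbp₁sq : IsSquare (b ^ 2 - y₁ * (b - y₁)))
    (hbp₂sq : IsSquare (b ^ 2 - y₂ * (b - y₂))) : False := by
  have hv : ((y₁ * (b - y₁)) - (y₂ * (b - y₂))) * ((y₁ * (b - y₁)) + (y₂ * (b - y₂)) + b ^ 2) = 0 := by
    linear_combination hq₁ - hq₂
  rcases mul_eq_zero.mp hv with h | h
  · have hpp : y₁ * (b - y₁) = y₂ * (b - y₂) := sub_eq_zero.mp h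
    have h2 : (y₁ - y₂) * (y₁ + y₂ - b) = 0 := by linear_combination -hpp
    rcases mul_eq_zero.mp h2 with h' | h'
    · exact hne (sub_eq_zero.mp h')
    · exact hzy (by linear_combination h')
  · obtain ⟨s, hs⟩ := hbp₁sq
    have hs0 : s ≠ 0 := by
      intro h0; apply hbp₁0; rw [hs, h0, mul_zero]
    apply neg_sq_not_sq hns hs0
    rw [show -(s ^ 2) = b ^ 2 - y₂ * (b - y₂) from by
      rw [show (s : K) ^ 2 = s * s from sq s, ← hs]; linear_combination h - b ^ 2 * h3]
    exact hbp₂sq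

private lemma cross_core {K : Type*} [Field K] [Fintype K] (hF : ringChar K ≠ 2)
    (h3 : (3 : K) = 0) (hns : ¬ IsSquare (-1 : K)) {a b p₁ p₂ : K}
    (hn₁ : ¬ IsSquare p₁) (hn₂ : ¬ IsSquare p₂)
    (hq₁ : p₁ ^ 2 + b ^ 2 * p₁ = b ^ 4 + a) (hq₂ : p₂ ^ 2 + b ^ 2 * p₂ = b ^ 4 - a) : False := by
  have hp₁0 : p₁ ≠ 0 := fun h => hn₁ (h ▸ IsSquare.zero)
  have hp₂0 : p₂ ≠ 0 := fun h => hn₂ (h ▸ IsSquare.zero)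
  have hP : p₁ * p₂ = -((p₁ + p₂ - b ^ 2) ^ 2) := by
    linear_combination hq₁ + hq₂ + (p₁ * p₂ - b ^ 2 * p₁ - b ^ 2 * p₂ + b ^ 4) * h3
  have ht0 : p₁ + p₂ - b ^ 2 ≠ 0 := by
    intro h0
    rw [h0] at hP
    norm_num at hP
    rcases hP with h | h
    · exact hp₁0 h
    · exact hp₂0 h
  exact neg_sq_not_sq hns ht0 (hP ▸ nonsq_mul hF hn₁ hn₂)

private lemma mixed_data {K : Type*} [Field K] [Fintype K] (hF : ringChar K ≠ 2)
    (h3 : (3 : K) = 0) {a b y : K} (h : Gd (b - y) - Gd y = a) (hy0 : y ≠ 0)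
    (hz0 : b - y ≠ 0) (hiff : IsSquare y ↔ ¬ IsSquare (b - y)) :
    ¬ IsSquare (y * (b - y)) ∧ (b ^ 2 - y * (b - y)) ≠ 0 ∧ IsSquare (b ^ 2 - y * (b - y)) ∧
      ((IsSquare y ∧ (y * (b - y)) ^ 2 + b ^ 2 * (y * (b - y)) = b ^ 4 + a) ∨
       (¬ IsSquare y ∧ (y * (b - y)) ^ 2 + b ^ 2 * (y * (b - y)) = b ^ 4 - a)) := by
  have hyz : y ≠ b - y := by
    intro h'
    rw [← h'] at hiff
    exact iff_not_self hiff
  have hsub : y - (b - y) ≠ 0 := sub_ne_zero.mpr hyz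
  have hb2 : b ^ 2 - y * (b - y) = (y - (b - y)) ^ 2 := by
    linear_combination (b * y - y ^ 2) * h3
  refine ⟨?_, by rw [hb2]; exact pow_ne_zero 2 hsub,
    ⟨y - (b - y), by rw [hb2]; ring⟩, ?_⟩
  · by_cases hsy : IsSquare y
    · exact sq_mul_nonsq hF hsy hy0 (hiff.mp hsy)
    · have hsz : IsSquare (b - y) := by
        by_contra hc; exact hsy (hiff.mpr hc)
      intro hc
      exact sq_mul_nonsq hF hsz hz0 hsy (by rwa [mul_comm] at hc)
  · by_cases hsy : IsSquare y
    · left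
      refine ⟨hsy, ?_⟩
      rw [Gd_of_nonsq (hiff.mp hsy), Gd_of_sq hsy] at h
      linear_combination h + (y ^ 4 - 2 * b * y ^ 3 + 2 * b ^ 2 * y ^ 2 - b ^ 3 * y) * h3
    · right
      refine ⟨hsy, ?_⟩
      have hsz : IsSquare (b - y) := by
        by_contra hc; exact hsy (hiff.mpr hc)
      rw [Gd_of_sq hsz, Gd_of_nonsq hsy] at h
      linear_combination -h + (y ^ 4 - 2 * b * y ^ 3 + 2 * b ^ 2 * y ^ 2 - b ^ 3 * y) * h3

lemma mixed_unique {K : Type*} [Field K] [Fintype K] (hF : ringChar K ≠ 2)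
    (h3 : (3 : K) = 0) (hns : ¬ IsSquare (-1 : K)) {a b y₁ y₂ : K}
    (h₁ : Gd (b - y₁) - Gd y₁ = a) (h₂ : Gd (b - y₂) - Gd y₂ = a)
    (hm₁ : MixedP b y₁) (hm₂ : MixedP b y₂) : y₁ = y₂ := by
  by_contra hne
  obtain ⟨hy₁0, hz₁0, hiff₁⟩ := hm₁
  obtain ⟨hy₂0, hz₂0, hiff₂⟩ := hm₂
  obtain ⟨hp₁ns, hbp₁0, hbp₁sq, hc₁⟩ := mixed_data hF h3 h₁ hy₁0 hz₁0 hiff₁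
  obtain ⟨hp₂ns, hbp₂0, hbp₂sq, hc₂⟩ := mixed_data hF h3 h₂ hy₂0 hz₂0 hiff₂
  rcases hc₁ with ⟨hs₁, hq₁⟩ | ⟨hs₁, hq₁⟩ <;> rcases hc₂ with ⟨hs₂, hq₂⟩ | ⟨hs₂, hq₂⟩
  · exact same_case h3 hns hne (fun h => (hiff₁.mp hs₁) (h ▸ hs₂)) hq₁ hq₂ hbp₁0 hbp₁sq hbp₂sq
  · exact cross_core hF h3 hns hp₁ns hp₂ns hq₁ hq₂
  · exact cross_core hF h3 hns hp₂ns hp₁ns hq₂ hq₁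
  · have hsz₁ : IsSquare (b - y₁) := by
      by_contra hc; exact hs₁ (hiff₁.mpr hc)
    exact same_case h3 hns hne (fun h => hs₂ (by rw [h]; exact hsz₁)) hq₁ hq₂ hbp₁0 hbp₁sq hbp₂sq

private lemma nonmixed_witness {K : Type*} [Field K] {a b y : K} (hb : b ≠ 0)
    (h : Gd (b - y) - Gd y = a) (hm : ¬ MixedP b y) :
    ∃ w, ((b - w) ^ 4 - w ^ 4 = a) ∧
      ((IsSquare w ∧ IsSquare (b - w) ∧ y = w) ∨
       ((¬ IsSquare w ∨ w = 0) ∧ (¬ IsSquare (b - w) ∨ b - w = 0) ∧ y = b - w)) := by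
  by_cases hy0 : y = 0
  · subst hy0
    rw [sub_zero, Gd_zero, sub_zero] at h
    by_cases hsb : IsSquare b
    · rw [Gd_of_sq hsb] at h
      exact ⟨0, by linear_combination h,
        Or.inl ⟨IsSquare.zero, by rw [sub_zero]; exact hsb, rfl⟩⟩
    · rw [Gd_of_nonsq hsb] at h
      exact ⟨b, by linear_combination h,
        Or.inr ⟨Or.inl hsb, Or.inr (sub_self b), by rw [sub_self]⟩⟩
  · by_cases hz0 : b - y = 0
    · have hyb : y = b := by linear_combination -hz0
      subst hyb
      rw [hz0, Gd_zero, zero_sub] at h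
      by_cases hsb : IsSquare y
      · rw [Gd_of_sq hsb] at h
        exact ⟨y, by linear_combination h, Or.inl ⟨hsb, by rw [hz0]; exact IsSquare.zero, rfl⟩⟩
      · rw [Gd_of_nonsq hsb] at h
        exact ⟨0, by linear_combination h,
          Or.inr ⟨Or.inr rfl, Or.inl (by rw [sub_zero]; exact hsb), by rw [sub_zero]⟩⟩
    · have hiff : IsSquare y ↔ IsSquare (b - y) := by
        unfold MixedP at hm
        tauto
      by_cases hsy : IsSquare y
      · have hsz : IsSquare (b - y) := hiff.mp hsy
        rw [Gd_of_sq hsz, Gd_of_sq hsy] at h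
        exact ⟨y, h, Or.inl ⟨hsy, hsz, rfl⟩⟩
      · have hsz : ¬ IsSquare (b - y) := fun hc => hsy (hiff.mpr hc)
        rw [Gd_of_nonsq hsz, Gd_of_nonsq hsy] at h
        refine ⟨b - y, by linear_combination h,
          Or.inr ⟨Or.inl hsz, Or.inl ?_, by rw [sub_sub_cancel]⟩⟩
        rw [sub_sub_cancel]
        exact hsy

lemma nonmixed_unique {K : Type*} [Field K] [Fintype K] (hF : ringChar K ≠ 2)
    (h3 : (3 : K) = 0) (hns : ¬ IsSquare (-1 : K)) {a b y₁ y₂ : K} (ha : a ≠ 0)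
    (h₁ : Gd (b - y₁) - Gd y₁ = a) (h₂ : Gd (b - y₂) - Gd y₂ = a)
    (hm₁ : ¬ MixedP b y₁) (hm₂ : ¬ MixedP b y₂) : y₁ = y₂ := by
  by_cases hb : b = 0
  · exfalso
    subst hb
    by_cases hy0 : y₁ = 0
    · subst hy0
      rw [sub_zero, Gd_zero, sub_zero] at h₁
      exact ha h₁.symm
    · have hz0 : (0 : K) - y₁ ≠ 0 := by
        rw [zero_sub]; exact neg_ne_zero.mpr hy0
      have hiff : IsSquare y₁ ↔ IsSquare ((0 : K) - y₁) := by
        unfold MixedP at hm₁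
        tauto
      by_cases hsy : IsSquare y₁
      · obtain ⟨s, hs⟩ := hsy
        have hs0 : s ≠ 0 := by
          intro h0; apply hy0; rw [hs, h0, mul_zero]
        apply neg_sq_not_sq hns hs0
        rw [show -(s ^ 2) = (0 : K) - y₁ from by rw [hs]; ring]
        exact hiff.mp ⟨s, hs⟩
      · have hsz : ¬ IsSquare ((0 : K) - y₁) := fun hc => hsy (hiff.mpr hc)
        apply neg_sq_not_sq hns hy0 (t := y₁)
        rw [show -(y₁ ^ 2) = y₁ * ((0 : K) - y₁) from by ring]
        exact nonsq_mul hF hsy hsz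
  · obtain ⟨w₁, hf₁, hc₁⟩ := nonmixed_witness hb h₁ hm₁
    obtain ⟨w₂, hf₂, hc₂⟩ := nonmixed_witness hb h₂ hm₂
    have hw : w₁ = w₂ := inj4 h3 hns hb (hf₁.trans hf₂.symm)
    subst hw
    rcases hc₁ with ⟨hsw, hsbw, hy₁⟩ | ⟨hnw, hnbw, hy₁⟩ <;>
      rcases hc₂ with ⟨hsw', hsbw', hy₂⟩ | ⟨hnw', hnbw', hy₂⟩
    · rw [hy₁, hy₂]
    · exfalso
      apply hb
      have hw0 : w₁ = 0 := by tauto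
      have hbw0 : b - w₁ = 0 := by tauto
      linear_combination hbw0 + hw0
    · exfalso
      apply hb
      have hw0 : w₁ = 0 := by tauto
      have hbw0 : b - w₁ = 0 := by tauto
      linear_combination hbw0 + hw0
    · rw [hy₁, hy₂]

lemma Gd_pow {K : Type*} [Field K] [Fintype K] (hF : ringChar K ≠ 2) {d : ℕ}
    (hodd : d % 2 = 1) (h4d : 4 * d = Fintype.card K / 2 + 1 + 3 * (Fintype.card K - 1))
    (x : K) : Gd (x ^ d) = x := by
  by_cases hx : x = 0
  · subst hx
    rw [zero_pow (by omega : d ≠ 0), Gd_zero]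
  · have hxe : (x ^ d) ^ 4 = x ^ (Fintype.card K / 2) * x := by
      rw [← pow_mul, mul_comm d 4, h4d, pow_add, pow_add, pow_one, mul_comm 3 (Fintype.card K - 1),
        pow_mul, FiniteField.pow_card_sub_one_eq_one x hx, one_pow, mul_one]
    by_cases hsx : IsSquare x
    · have h1 := (FiniteField.isSquare_iff hF hx).mp hsx
      have hsxd : IsSquare (x ^ d) := by
        obtain ⟨r, hr⟩ := hsx
        exact ⟨r ^ d, by rw [hr, mul_pow]⟩
      rw [Gd_of_sq hsxd, hxe, h1, one_mul]
    · have h1 := chi_nonsq hF hx hsx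
      have hsxd : ¬ IsSquare (x ^ d) := by
        intro hs
        have hxd0 : x ^ d ≠ 0 := pow_ne_zero _ hx
        have h2 := (FiniteField.isSquare_iff hF hxd0).mp hs
        rw [pow_right_comm, h1] at h2
        rw [Odd.neg_one_pow (Nat.odd_iff.mpr hodd)] at h2
        exact Ring.neg_one_ne_one_of_char_ne_two hF h2
      rw [Gd_of_nonsq hsxd, hxe, h1]
      ring

theorem stmt_6 (n : ℕ) (hn : 0 < n) (hcond : n % 4 = 3)
    (d : ℕ) (hd : d = (3 ^ (n + 1) - 1) / 8 + (3 ^ n - 1) / 2) :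
    ∀ a b : GaloisField 3 n,
      {x : GaloisField 3 n | (x + a) ^ d + x ^ d = b}.ncard ≤ 2 := by
  intro a b
  letI : Fintype (GaloisField 3 n) := Fintype.ofFinite _
  have hcard : Fintype.card (GaloisField 3 n) = 3 ^ n := by
    rw [← Nat.card_eq_fintype_card]
    exact GaloisField.card 3 n hn.ne'
  have h3K : (3 : GaloisField 3 n) = 0 := by
    have := CharP.cast_eq_zero (GaloisField 3 n) 3
    exact_mod_cast this
  have hrc : ringChar (GaloisField 3 n) = 3 := by
    rw [ringChar.eq_iff]
    infer_instance
  have hF : ringChar (GaloisField 3 n) ≠ 2 := by rw [hrc]; norm_num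
  have hm3 : 3 ≤ 3 ^ n := by
    calc (3 : ℕ) = 3 ^ 1 := (pow_one 3).symm
    _ ≤ 3 ^ n := Nat.pow_le_pow_right (by norm_num) hn
  have h16 : 3 ^ n % 16 = 11 := by
    have hsplit : (3 : ℕ) ^ n = 3 ^ 3 * (3 ^ 4) ^ (n / 4) := by
      rw [← pow_mul, ← pow_add]
      congr 1
      omega
    have h81 : ((3 : ℕ) ^ 4) ^ (n / 4) % 16 = 1 := by
      rw [Nat.pow_mod]
      norm_num
    rw [hsplit, Nat.mul_mod, h81]
    norm_num
  have hd' : d = (3 * 3 ^ n - 1) / 8 + (3 ^ n - 1) / 2 := by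
    rw [hd, pow_succ, mul_comm (3 ^ n) 3]
  have hodd : d % 2 = 1 := by omega
  have h4d : 4 * d = Fintype.card (GaloisField 3 n) / 2 + 1 +
      3 * (Fintype.card (GaloisField 3 n) - 1) := by
    rw [hcard]; omega
  have hGF : ∀ x : GaloisField 3 n, Gd (x ^ d) = x := Gd_pow hF hodd h4d
  have hinj : Function.Injective (fun x : GaloisField 3 n => x ^ d) :=
    Function.LeftInverse.injective hGF
  have hns : ¬ IsSquare (-1 : GaloisField 3 n) := by
    intro h
    exact FiniteField.isSquare_neg_one_iff.mp h (by rw [hcard]; omega)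
  by_cases ha : a = 0
  · subst ha
    have hsub : {x : GaloisField 3 n | (x + 0) ^ d + x ^ d = b} ⊆ {Gd (-b)} := by
      intro x hx
      simp only [Set.mem_setOf_eq, add_zero] at hx
      have hxd : x ^ d = -b := by
        linear_combination (-1 : GaloisField 3 n) * hx + x ^ d * h3K
      have hxg : x = Gd (-b) := by rw [← hxd, hGF]
      simp [hxg]
    calc {x : GaloisField 3 n | (x + 0) ^ d + x ^ d = b}.ncard
        ≤ ({Gd (-b)} : Set (GaloisField 3 n)).ncard :=
          Set.ncard_le_ncard hsub (Set.toFinite _)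
      _ = 1 := Set.ncard_singleton _
      _ ≤ 2 := by norm_num
  · have himg : (fun x : GaloisField 3 n => x ^ d) '' {x | (x + a) ^ d + x ^ d = b} ⊆
        {y : GaloisField 3 n | Gd (b - y) - Gd y = a} := by
      rintro _ ⟨x, hx, rfl⟩
      simp only [Set.mem_setOf_eq] at hx
      simp only [Set.mem_setOf_eq]
      have hba : (x + a) ^ d = b - x ^ d := by linear_combination hx
      rw [← hba, hGF, hGF]
      ring
    have hpair : ∃ u v : GaloisField 3 n,
        {y : GaloisField 3 n | Gd (b - y) - Gd y = a} ⊆ {u, v} := by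
      by_cases hEM : ∃ y ∈ {y : GaloisField 3 n | Gd (b - y) - Gd y = a}, MixedP b y
      · obtain ⟨u, huT, hum⟩ := hEM
        by_cases hEN : ∃ y ∈ {y : GaloisField 3 n | Gd (b - y) - Gd y = a}, ¬ MixedP b y
        · obtain ⟨v, hvT, hvn⟩ := hEN
          refine ⟨u, v, fun y hy => ?_⟩
          by_cases hmy : MixedP b y
          · exact Or.inl (mixed_unique hF h3K hns hy huT hmy hum)
          · exact Or.inr (Set.mem_singleton_iff.mpr
              (nonmixed_unique hF h3K hns ha hy hvT hmy hvn))
        · push_neg at hEN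
          refine ⟨u, u, fun y hy => Or.inl ?_⟩
          exact mixed_unique hF h3K hns hy huT (hEN y hy) hum
      · push_neg at hEM
        rcases Set.eq_empty_or_nonempty {y : GaloisField 3 n | Gd (b - y) - Gd y = a} with
          hTe | ⟨v, hvT⟩
        · exact ⟨0, 0, by rw [hTe]; exact Set.empty_subset _⟩
        · refine ⟨v, v, fun y hy => Or.inl ?_⟩
          exact nonmixed_unique hF h3K hns ha hy hvT (hEM y hy) (hEM v hvT)
    obtain ⟨u, v, huv⟩ := hpair
    calc {x : GaloisField 3 n | (x + a) ^ d + x ^ d = b}.ncard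
        = ((fun x : GaloisField 3 n => x ^ d) '' {x | (x + a) ^ d + x ^ d = b}).ncard :=
          (Set.ncard_image_of_injective _ hinj).symm
      _ ≤ ({y : GaloisField 3 n | Gd (b - y) - Gd y = a}).ncard :=
          Set.ncard_le_ncard himg (Set.toFinite _)
      _ ≤ ({u, v} : Set (GaloisField 3 n)).ncard := Set.ncard_le_ncard huv (Set.toFinite _)
      _ ≤ ({v} : Set (GaloisField 3 n)).ncard + 1 := Set.ncard_insert_le u {v}
      _ ≤ 2 := by rw [Set.ncard_singleton]
end
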